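/- arXiv:2512.11604 — 10 statements merged into one kernel-verified Lean document; each statement's English description precedes it below -/
import Mathlib

section
/- Let g be a Lie algebra over a field K, and let q, w be Lie subalgebras of g. Then the set q_{w} := { Z ∈ q + w : ad(q)^h(Z) ⊆ q + w for all h ≥ 0 } is the largest Lie subalgebra of g containing q and contained in q + w. -/
variable {K : Type*} [Field K] {L : Type*} [LieRing L] [LieAlgebra K L]

/-- Membership in the linear sum `q + w` of two Lie subalgebras. -/
def memSum (q w : LieSubalgebra K L) (x : L) : Prop := ∃ a ∈ q, ∃ b ∈ w, x = a + b

/-- The set `q_{w} = { Z ∈ q + w : ad(q)^h (Z) ⊆ q + w for all h ≥ 0 }`, expressed via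
left-normed iterated brackets with elements of `q` (the case of the empty list gives the
condition `Z ∈ q + w`). -/
def wExtension (q w : LieSubalgebra K L) : Set L :=
  {Z | ∀ l : List L, (∀ z ∈ l, z ∈ q) → memSum q w (l.foldl (fun a b => ⁅a, b⁆) Z)}

lemma memSum_iff (q w : LieSubalgebra K L) (x : L) :
    memSum q w x ↔ x ∈ q.toSubmodule ⊔ w.toSubmodule := by
  rw [Submodule.mem_sup]
  constructor
  · rintro ⟨a, ha, b, hb, rfl⟩; exact ⟨a, ha, b, hb, rfl⟩
  · rintro ⟨a, ha, b, hb, rfl⟩; exact ⟨a, ha, b, hb, rfl⟩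

lemma memSum_add {q w : LieSubalgebra K L} {x y : L}
    (hx : memSum q w x) (hy : memSum q w y) : memSum q w (x + y) := by
  rw [memSum_iff] at *; exact add_mem hx hy

lemma memSum_smul {q w : LieSubalgebra K L} (c : K) {x : L}
    (hx : memSum q w x) : memSum q w (c • x) := by
  rw [memSum_iff] at *; exact Submodule.smul_mem _ c hx

lemma memSum_neg {q w : LieSubalgebra K L} {x : L}
    (hx : memSum q w x) : memSum q w (-x) := by
  rw [memSum_iff] at *; exact neg_mem hx

lemma memSum_of_mem_left {q w : LieSubalgebra K L} {x : L} (hx : x ∈ q) :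
    memSum q w x := ⟨x, hx, 0, zero_mem _, by simp⟩

lemma memSum_of_mem_right {q w : LieSubalgebra K L} {x : L} (hx : x ∈ w) :
    memSum q w x := ⟨0, zero_mem _, x, hx, by simp⟩

lemma foldl_bracket_add (l : List L) (x y : L) :
    l.foldl (fun a b => ⁅a, b⁆) (x + y)
      = l.foldl (fun a b => ⁅a, b⁆) x + l.foldl (fun a b => ⁅a, b⁆) y := by
  induction l generalizing x y with
  | nil => rfl
  | cons z l ih => simpa [add_lie] using ih ⁅x, z⁆ ⁅y, z⁆

lemma foldl_bracket_smul (l : List L) (c : K) (x : L) :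
    l.foldl (fun a b => ⁅a, b⁆) (c • x) = c • l.foldl (fun a b => ⁅a, b⁆) x := by
  induction l generalizing x with
  | nil => rfl
  | cons z l ih => simpa [smul_lie] using ih ⁅x, z⁆

/-- `wExtension` is stable under bracketing on the right by elements of `q`. -/
lemma wExtension_bracket_q {q w : LieSubalgebra K L} {x z : L}
    (hx : x ∈ wExtension q w) (hz : z ∈ q) : ⁅x, z⁆ ∈ wExtension q w := by
  intro l hl
  have := hx (z :: l) (by
    intro u hu
    rcases List.mem_cons.mp hu with h | h
    · exact h ▸ hz
    · exact hl u h)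
  simpa using this

/-- The bracket of two elements of `wExtension` lies in `q + w`. -/
lemma memSum_bracket {q w : LieSubalgebra K L} {x y : L}
    (hx : x ∈ wExtension q w) (hy : y ∈ wExtension q w) : memSum q w ⁅x, y⁆ := by
  obtain ⟨a, ha, b, hb, hxab⟩ := hx [] (by simp)
  obtain ⟨c, hc, d, hd, hycd⟩ := hy [] (by simp)
  simp only [List.foldl_nil] at hxab hycd
  have key : ⁅x, y⁆ = -⁅y, a⁆ + ⁅x, c⁆ + (-⁅a, c⁆ + ⁅b, d⁆) := by
    have hb' : b = x - a := by rw [hxab]; abel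
    have hd' : d = y - c := by rw [hycd]; abel
    subst hb' hd'
    simp only [lie_sub, sub_lie]
    rw [← lie_skew y a]
    abel
  rw [key]
  refine memSum_add (memSum_add (memSum_neg ?_) ?_)
    (memSum_add (memSum_neg (memSum_of_mem_left (q.lie_mem ha hc)))
      (memSum_of_mem_right (w.lie_mem hb hd)))
  · simpa using hy [a] (by simpa using ha)
  · simpa using hx [c] (by simpa using hc)

lemma wExtension_bracket {q w : LieSubalgebra K L} {x y : L}
    (hx : x ∈ wExtension q w) (hy : y ∈ wExtension q w) : ⁅x, y⁆ ∈ wExtension q w := by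
  intro l hl
  induction l generalizing x y with
  | nil => simpa using memSum_bracket hx hy
  | cons z l ih =>
    have hz : z ∈ q := hl z (by simp)
    have hl' : ∀ u ∈ l, u ∈ q := fun u hu => hl u (List.mem_cons_of_mem _ hu)
    have leib : ⁅⁅x, y⁆, z⁆ = ⁅⁅x, z⁆, y⁆ + ⁅x, ⁅y, z⁆⁆ := by
      rw [lie_lie, ← lie_skew ⁅x, z⁆ y]
      abel
    have h1 := ih (wExtension_bracket_q hx hz) hy hl'
    have h2 := ih hx (wExtension_bracket_q hy hz) hl'
    simp only [List.foldl_cons] at *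
    rw [leib, foldl_bracket_add]
    exact memSum_add h1 h2

/-- `q_{w}` is the largest Lie subalgebra of `g` containing `q` and contained
in `q + w`. -/
theorem wExtension_isGreatest (q w : LieSubalgebra K L) :
    (∀ x ∈ wExtension q w, ∀ y ∈ wExtension q w, x + y ∈ wExtension q w) ∧
    (∀ c : K, ∀ x ∈ wExtension q w, c • x ∈ wExtension q w) ∧
    (∀ x ∈ wExtension q w, ∀ y ∈ wExtension q w, ⁅x, y⁆ ∈ wExtension q w) ∧
    (q : Set L) ⊆ wExtension q w ∧
    (∀ x ∈ wExtension q w, memSum q w x) ∧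
    (∀ s : LieSubalgebra K L, (q : Set L) ⊆ s → (∀ x ∈ s, memSum q w x) →
      (s : Set L) ⊆ wExtension q w) := by
  refine ⟨?_, ?_, ?_, ?_, ?_, ?_⟩
  · intro x hx y hy l hl
    rw [foldl_bracket_add]
    exact memSum_add (hx l hl) (hy l hl)
  · intro c x hx l hl
    rw [foldl_bracket_smul]
    exact memSum_smul c (hx l hl)
  · intro x hx y hy
    exact wExtension_bracket hx hy
  · intro x hx l hl
    have : l.foldl (fun a b => ⁅a, b⁆) x ∈ q := by
      induction l generalizing x with
      | nil => exact hx
      | cons z l ih =>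
        exact ih (q.lie_mem hx (hl z (by simp))) (fun u hu => hl u (List.mem_cons_of_mem _ hu))
    exact memSum_of_mem_left this
  · intro x hx
    simpa using hx [] (by simp)
  · intro s hqs hs x hx l hl
    have : l.foldl (fun a b => ⁅a, b⁆) x ∈ s := by
      induction l generalizing x with
      | nil => exact hx
      | cons z l ih =>
        exact ih (s.lie_mem hx (hqs (hl z (by simp)))) (fun u hu => hl u (List.mem_cons_of_mem _ hu))
    exact hs _ this
end

section
/- Let g be a complex Lie algebra, σ an anti-linear involutive automorphism of g, and q a complex Lie subalgebra. Define the Levi-degeneracy kernel K(g,q) := { Z ∈ σ(q) : for all k ≥ 1 and all Z₁,…,Z_k ∈ q, the iterated commutator [Z,Z₁,…,Z_k] lies in q + σ(q) }. Then K(g,q) is a Lie subalgebra of σ(q) containing q ∩ σ(q). -/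
set_option linter.unusedSectionVars false

variable {L : Type*} [LieRing L] [LieAlgebra ℂ L]

/-- Membership in `q + σ(q)`. -/
def memSumConj (σ : L → L) (q : LieSubalgebra ℂ L) (y : L) : Prop :=
  ∃ a ∈ q, ∃ b ∈ q, y = a + σ b

/-- The Levi-degeneracy kernel `K(g,q) = { Z ∈ σ(q) : [Z,Z₁,…,Z_k] ∈ q + σ(q) for all k ≥ 1
and all Z₁,…,Z_k ∈ q }`.  Membership `Z ∈ σ(q)` is expressed as `σ Z ∈ q` (using that `σ` is an
involution), and the iterated commutators are left-normed. -/
def leviDegeneracyKernel (σ : L → L) (q : LieSubalgebra ℂ L) : Set L :=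
  {Z | σ Z ∈ q ∧ ∀ l : List L, l ≠ [] → (∀ z ∈ l, z ∈ q) →
    memSumConj σ q (l.foldl (fun a b => ⁅a, b⁆) Z)}

private lemma myFold_add (x y : L) : ∀ l : List L,
    l.foldl (fun a b => ⁅a, b⁆) (x + y)
      = l.foldl (fun a b => ⁅a, b⁆) x + l.foldl (fun a b => ⁅a, b⁆) y := by
  intro l
  induction l generalizing x y with
  | nil => rfl
  | cons z l ih => simpa only [List.foldl_cons, add_lie] using ih ⁅x, z⁆ ⁅y, z⁆

private lemma myFold_neg (x : L) : ∀ l : List L,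
    l.foldl (fun a b => ⁅a, b⁆) (-x) = -(l.foldl (fun a b => ⁅a, b⁆) x) := by
  intro l
  induction l generalizing x with
  | nil => rfl
  | cons z l ih => simpa only [List.foldl_cons, neg_lie] using ih ⁅x, z⁆

private lemma myFold_sub (x y : L) (l : List L) :
    l.foldl (fun a b => ⁅a, b⁆) (x - y)
      = l.foldl (fun a b => ⁅a, b⁆) x - l.foldl (fun a b => ⁅a, b⁆) y := by
  rw [sub_eq_add_neg, myFold_add, myFold_neg, sub_eq_add_neg]

private lemma myFold_smul (c : ℂ) (x : L) : ∀ l : List L,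
    l.foldl (fun a b => ⁅a, b⁆) (c • x) = c • (l.foldl (fun a b => ⁅a, b⁆) x) := by
  intro l
  induction l generalizing x with
  | nil => rfl
  | cons z l ih => simpa only [List.foldl_cons, smul_lie] using ih ⁅x, z⁆

private lemma myFold_mem (q : LieSubalgebra ℂ L) {x : L} (hx : x ∈ q) :
    ∀ l : List L, (∀ z ∈ l, z ∈ q) → l.foldl (fun a b => ⁅a, b⁆) x ∈ q := by
  intro l
  induction l generalizing x with
  | nil => exact fun _ => hx
  | cons z l ih =>
    intro hl
    exact ih (q.lie_mem hx (hl z List.mem_cons_self))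
      fun w hw => hl w (List.mem_cons_of_mem _ hw)

private lemma sigma_zero {σ : L → L}
    (hsmul : ∀ (c : ℂ) (x : L), σ (c • x) = (starRingEnd ℂ) c • σ x) : σ 0 = 0 := by
  have := hsmul 0 0
  simpa using this

private lemma msc_mem_q {σ : L → L} {q : LieSubalgebra ℂ L}
    (hsmul : ∀ (c : ℂ) (x : L), σ (c • x) = (starRingEnd ℂ) c • σ x)
    {a : L} (ha : a ∈ q) : memSumConj σ q a :=
  ⟨a, ha, 0, q.zero_mem, by rw [sigma_zero hsmul, add_zero]⟩

private lemma msc_add {σ : L → L} {q : LieSubalgebra ℂ L}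
    (hadd : ∀ x y : L, σ (x + y) = σ x + σ y)
    {x y : L} (hx : memSumConj σ q x) (hy : memSumConj σ q y) :
    memSumConj σ q (x + y) := by
  obtain ⟨a, ha, b, hb, rfl⟩ := hx
  obtain ⟨a', ha', b', hb', rfl⟩ := hy
  exact ⟨a + a', q.add_mem ha ha', b + b', q.add_mem hb hb', by rw [hadd]; abel⟩

private lemma msc_smul {σ : L → L} {q : LieSubalgebra ℂ L}
    (hsmul : ∀ (c : ℂ) (x : L), σ (c • x) = (starRingEnd ℂ) c • σ x)
    (c : ℂ) {x : L} (hx : memSumConj σ q x) :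
    memSumConj σ q (c • x) := by
  obtain ⟨a, ha, b, hb, rfl⟩ := hx
  refine ⟨c • a, q.smul_mem c ha, (starRingEnd ℂ) c • b, q.smul_mem _ hb, ?_⟩
  rw [smul_add, hsmul, starRingEnd_self_apply]

private lemma msc_neg {σ : L → L} {q : LieSubalgebra ℂ L}
    (hsmul : ∀ (c : ℂ) (x : L), σ (c • x) = (starRingEnd ℂ) c • σ x)
    {x : L} (hx : memSumConj σ q x) : memSumConj σ q (-x) := by
  have := msc_smul hsmul (-1 : ℂ) hx
  simpa using this

/-- Key strengthening: a nonempty fold of a kernel element with elements of `q` lies in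
`q + K`, not just `q + σ(q)`. -/
private lemma fold_mem_q_add_kernel {σ : L → L} {q : LieSubalgebra ℂ L}
    (hinv : ∀ x : L, σ (σ x) = x)
    {Z : L} (hZ : Z ∈ leviDegeneracyKernel σ q) {l : List L} (hl : l ≠ [])
    (hlq : ∀ z ∈ l, z ∈ q) :
    ∃ a ∈ q, ∃ W ∈ leviDegeneracyKernel σ q,
      l.foldl (fun a b => ⁅a, b⁆) Z = a + W := by
  obtain ⟨a, ha, b, hb, heq⟩ := hZ.2 l hl hlq
  refine ⟨a, ha, σ b, ⟨by rw [hinv]; exact hb, ?_⟩, heq⟩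
  intro m hm hmq
  have hσb : σ b = l.foldl (fun a b => ⁅a, b⁆) Z - a := by rw [heq]; abel
  rw [hσb, myFold_sub]
  have h1 : (l ++ m).foldl (fun a b => ⁅a, b⁆) Z
      = m.foldl (fun a b => ⁅a, b⁆) (l.foldl (fun a b => ⁅a, b⁆) Z) :=
    List.foldl_append ..
  have hlm : ∀ z ∈ l ++ m, z ∈ q := by
    intro z hz
    rcases List.mem_append.mp hz with h | h
    exacts [hlq z h, hmq z h]
  obtain ⟨a', ha', b', hb', heq'⟩ := hZ.2 (l ++ m) (by simp [hl]) hlm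
  rw [h1] at heq'
  have hw : m.foldl (fun a b => ⁅a, b⁆) a ∈ q := myFold_mem q ha m hmq
  exact ⟨a' - m.foldl (fun a b => ⁅a, b⁆) a, sub_mem ha' hw, b', hb', by rw [heq']; abel⟩

private lemma fold_bracket_msc {σ : L → L} {q : LieSubalgebra ℂ L}
    (hadd : ∀ x y : L, σ (x + y) = σ x + σ y)
    (hsmul : ∀ (c : ℂ) (x : L), σ (c • x) = (starRingEnd ℂ) c • σ x)
    (hbr : ∀ x y : L, σ ⁅x, y⁆ = ⁅σ x, σ y⁆)
    (hinv : ∀ x : L, σ (σ x) = x) :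
    ∀ l : List L, (∀ z ∈ l, z ∈ q) →
    ∀ X ∈ leviDegeneracyKernel σ q, ∀ Y ∈ leviDegeneracyKernel σ q,
    memSumConj σ q (l.foldl (fun a b => ⁅a, b⁆) ⁅X, Y⁆) := by
  intro l
  induction l with
  | nil =>
    intro _ X hX Y hY
    refine ⟨0, q.zero_mem, ⁅σ X, σ Y⁆, q.lie_mem hX.1 hY.1, ?_⟩
    rw [zero_add, ← hbr, hinv]
    rfl
  | cons z l ih =>
    intro hlq X hX Y hY
    have hz : z ∈ q := hlq z List.mem_cons_self
    have hlq' : ∀ w ∈ l, w ∈ q := fun w hw => hlq w (List.mem_cons_of_mem _ hw)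
    obtain ⟨a, ha, W, hW, hXz⟩ := fold_mem_q_add_kernel hinv hX
      (l := [z]) (by simp) (by simpa using hz)
    obtain ⟨b, hb, W', hW', hYz⟩ := fold_mem_q_add_kernel hinv hY
      (l := [z]) (by simp) (by simpa using hz)
    simp only [List.foldl_cons, List.foldl_nil] at hXz hYz ⊢
    have key : ⁅⁅X, Y⁆, z⁆ = ⁅a, Y⁆ + ⁅W, Y⁆ + (⁅X, b⁆ + ⁅X, W'⁆) := by
      have h1 : ⁅⁅X, Y⁆, z⁆ = ⁅⁅X, z⁆, Y⁆ + ⁅X, ⁅Y, z⁆⁆ := by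
        rw [lie_lie]
        rw [← lie_skew Y ⁅X, z⁆]
        abel
      rw [h1, hXz, hYz, add_lie, lie_add]
    rw [key, myFold_add, myFold_add, myFold_add]
    have halq : ∀ w ∈ a :: l, w ∈ q := by
      intro w hw
      rcases List.mem_cons.mp hw with h | h
      exacts [h ▸ ha, hlq' w h]
    have hblq : ∀ w ∈ b :: l, w ∈ q := by
      intro w hw
      rcases List.mem_cons.mp hw with h | h
      exacts [h ▸ hb, hlq' w h]
    refine msc_add hadd (msc_add hadd ?_ ?_) (msc_add hadd ?_ ?_)
    · rw [← lie_skew, myFold_neg]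
      exact msc_neg hsmul (by simpa using hY.2 (a :: l) (by simp) halq)
    · exact ih hlq' W hW Y hY
    · simpa using hX.2 (b :: l) (by simp) hblq
    · exact ih hlq' X hX W' hW'

/-- the Levi-degeneracy kernel is a Lie subalgebra of `σ(q)` containing
`q ∩ σ(q)`. -/
theorem leviDegeneracyKernel_isLieSubalgebra
    (σ : L → L)
    (hadd : ∀ x y : L, σ (x + y) = σ x + σ y)
    (hsmul : ∀ (c : ℂ) (x : L), σ (c • x) = (starRingEnd ℂ) c • σ x)
    (hbr : ∀ x y : L, σ ⁅x, y⁆ = ⁅σ x, σ y⁆)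
    (hinv : ∀ x : L, σ (σ x) = x)
    (q : LieSubalgebra ℂ L) :
    (∀ x ∈ leviDegeneracyKernel σ q, ∀ y ∈ leviDegeneracyKernel σ q,
      x + y ∈ leviDegeneracyKernel σ q) ∧
    (∀ c : ℂ, ∀ x ∈ leviDegeneracyKernel σ q, c • x ∈ leviDegeneracyKernel σ q) ∧
    (∀ x ∈ leviDegeneracyKernel σ q, ∀ y ∈ leviDegeneracyKernel σ q,
      ⁅x, y⁆ ∈ leviDegeneracyKernel σ q) ∧
    (∀ x : L, x ∈ q → σ x ∈ q → x ∈ leviDegeneracyKernel σ q) := by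
  refine ⟨?_, ?_, ?_, ?_⟩
  · intro x hx y hy
    refine ⟨by rw [hadd]; exact q.add_mem hx.1 hy.1, ?_⟩
    intro l hl hlq
    rw [myFold_add]
    exact msc_add hadd (hx.2 l hl hlq) (hy.2 l hl hlq)
  · intro c x hx
    refine ⟨by rw [hsmul]; exact q.smul_mem _ hx.1, ?_⟩
    intro l hl hlq
    rw [myFold_smul]
    exact msc_smul hsmul c (hx.2 l hl hlq)
  · intro x hx y hy
    refine ⟨by rw [hbr]; exact q.lie_mem hx.1 hy.1, ?_⟩
    intro l hl hlq
    exact fold_bracket_msc hadd hsmul hbr hinv l hlq x hx y hy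
  · intro x hx hσx
    exact ⟨hσx, fun l _ hlq => msc_mem_q hsmul (myFold_mem q hx l hlq)⟩
end

section
/- Let g be a complex Lie algebra with anti-linear involution σ and q a complex Lie subalgebra. Suppose Z ∈ σ(q) \ q has finite Levi-order k, and let (Z₁,…,Z_k) be a Levi-sequence of minimal length for Z (i.e. Z₁,…,Z_k ∈ q and [Z,Z₁,…,Z_k] ∉ q + σ(q)). Then for every permutation π of {1,…,k}, the sequence (Z_{π(1)},…,Z_{π(k)}) is also a Levi-sequence for Z. -/
variable {L : Type*} [LieRing L] [LieAlgebra ℂ L]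

/-- `(Z₁,…,Z_k)` is a Levi-sequence for `Z`: all `Z_i ∈ q` and the left-normed iterated
bracket `[Z, Z₁, …, Z_k]` does not lie in `q + σ(q)`. -/
def IsLeviSeq (σ : L → L) (q : LieSubalgebra ℂ L) (Z : L) {k : ℕ} (W : Fin k → L) : Prop :=
  (∀ i, W i ∈ q) ∧ ¬ memSumConj σ q ((List.ofFn W).foldl (fun a b => ⁅a, b⁆) Z)

private lemma foldl_bracket_sub (l : List L) : ∀ a b : L,
    l.foldl (fun a b => ⁅a, b⁆) (a - b)
      = l.foldl (fun a b => ⁅a, b⁆) a - l.foldl (fun a b => ⁅a, b⁆) b := by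
  induction l with
  | nil => intro a b; simp
  | cons c l ih =>
      intro a b
      simp only [List.foldl_cons, sub_lie]
      exact ih _ _

/-- a minimal-length Levi-sequence for `Z ∈ σ(q) \ q` remains a Levi-sequence
after any permutation of its entries. -/
theorem leviSeq_perm
    (σ : L → L)
    (hadd : ∀ x y : L, σ (x + y) = σ x + σ y)
    (hsmul : ∀ (c : ℂ) (x : L), σ (c • x) = (starRingEnd ℂ) c • σ x)
    (hbr : ∀ x y : L, σ ⁅x, y⁆ = ⁅σ x, σ y⁆)
    (hinv : ∀ x : L, σ (σ x) = x)
    (q : LieSubalgebra ℂ L)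
    (Z : L) (hZmem : σ Z ∈ q) (hZnot : Z ∉ q)
    (k : ℕ) (W : Fin k → L)
    (hW : IsLeviSeq σ q Z W)
    (hmin : ∀ j : ℕ, j < k → ∀ W' : Fin j → L, ¬ IsLeviSeq σ q Z W') :
    ∀ π : Equiv.Perm (Fin k), IsLeviSeq σ q Z (W ∘ π) := by
  intro π
  -- basic facts about σ and memSumConj
  have hσ0 : σ 0 = 0 := by
    have h := hadd 0 0
    simp only [add_zero] at h
    exact left_eq_add.mp h
  have hσneg : ∀ x : L, σ (-x) = -σ x := by
    intro x
    have h := hadd x (-x)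
    simp only [add_neg_cancel, hσ0] at h
    exact (neg_eq_of_add_eq_zero_right h.symm).symm
  have hσsub : ∀ x y : L, σ (x - y) = σ x - σ y := by
    intro x y
    rw [sub_eq_add_neg, hadd, hσneg, sub_eq_add_neg]
  have hS0 : memSumConj σ q 0 := ⟨0, q.zero_mem, 0, q.zero_mem, by simp [hσ0]⟩
  have hSadd : ∀ x y : L, memSumConj σ q x → memSumConj σ q y → memSumConj σ q (x + y) := by
    rintro x y ⟨a, ha, b, hb, rfl⟩ ⟨a', ha', b', hb', rfl⟩
    exact ⟨a + a', q.add_mem ha ha', b + b', q.add_mem hb hb', by rw [hadd]; abel⟩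
  have hSsub : ∀ x y : L, memSumConj σ q x → memSumConj σ q y → memSumConj σ q (x - y) := by
    rintro x y ⟨a, ha, b, hb, rfl⟩ ⟨a', ha', b', hb', rfl⟩
    exact ⟨a - a', q.sub_mem ha ha', b - b', q.sub_mem hb hb', by rw [hσsub]; abel⟩
  -- a non-Levi sequence with entries in q has bracket in q + σ(q)
  have hlist : ∀ l : List L, l.length < k → (∀ x ∈ l, x ∈ q) →
      memSumConj σ q (l.foldl (fun a b => ⁅a, b⁆) Z) := by
    intro l hlen hl
    have h := hmin l.length hlen l.get
    rw [IsLeviSeq, not_and_or] at h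
    rcases h with h | h
    · exact absurd (fun i : Fin l.length => hl _ (l.get_mem i)) h
    · rw [List.ofFn_get] at h
      exact not_not.mp h
  -- key: permuting the tail changes the bracket by an element of q + σ(q)
  have key : ∀ {l l' : List L}, l.Perm l' → ∀ p : List L,
      (∀ x ∈ p, x ∈ q) → (∀ x ∈ l, x ∈ q) → p.length + l.length ≤ k →
      memSumConj σ q
        ((p ++ l).foldl (fun a b => ⁅a, b⁆) Z - (p ++ l').foldl (fun a b => ⁅a, b⁆) Z) := by
    intro l l' hperm
    induction hperm with
    | nil => intro p _ _ _; simpa using hS0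
    | cons x h ih =>
        intro p hp hl hlen
        have hp1 : ∀ y ∈ p ++ [x], y ∈ q := by
          intro y hy
          rcases List.mem_append.mp hy with hy | hy
          · exact hp y hy
          · simp only [List.mem_singleton] at hy
            exact hy ▸ hl x (by simp)
        have h1 : ∀ y ∈ _, y ∈ q := fun y hy => hl y (List.mem_cons_of_mem x hy)
        have := ih (p ++ [x]) hp1 h1 (by
          simp only [List.length_append, List.length_singleton, List.length_cons, List.length_nil] at hlen ⊢
          omega)
        simpa only [List.append_assoc, List.singleton_append] using this
    | swap x y l =>
        intro p hp hl hlen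
        -- the difference equals the bracket of the shorter sequence p ++ ⁅y, x⁆ :: l
        have hdiff : (p ++ y :: x :: l).foldl (fun a b => ⁅a, b⁆) Z
            - (p ++ x :: y :: l).foldl (fun a b => ⁅a, b⁆) Z
            = (p ++ ⁅y, x⁆ :: l).foldl (fun a b => ⁅a, b⁆) Z := by
          simp only [List.foldl_append, List.foldl_cons]
          set A := p.foldl (fun a b => ⁅a, b⁆) Z
          rw [← foldl_bracket_sub]
          congr 1
          rw [lie_lie A y x, ← lie_skew y ⁅A, x⁆]
          abel
        rw [hdiff]
        apply hlist
        · simp only [List.length_cons] at hlen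
          simp only [List.length_append, List.length_cons]
          omega
        · intro z hz
          rcases List.mem_append.mp hz with hz | hz
          · exact hp z hz
          · rcases List.mem_cons.mp hz with rfl | hz
            · exact q.lie_mem (hl y (by simp)) (hl x (by simp))
            · exact hl z (by simp [hz])
    | trans h12 h23 ih12 ih23 =>
        intro p hp hl hlen
        have h2 := hSadd _ _ (ih12 p hp hl hlen)
          (ih23 p hp (fun x hx => hl x (h12.mem_iff.mpr hx))
            (by rw [← h12.length_eq]; exact hlen))
        simpa only [sub_add_sub_cancel] using h2
  -- conclude
  refine ⟨fun i => hW.1 (π i), fun hmem => hW.2 ?_⟩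
  have hperm : (List.ofFn (W ∘ π)).Perm (List.ofFn W) := π.ofFn_comp_perm W
  have hd := key hperm [] (by simp) (fun x hx => by
    rw [List.mem_ofFn] at hx
    obtain ⟨i, rfl⟩ := hx
    exact hW.1 (π i)) (by simp)
  simp only [List.nil_append] at hd
  have := hSsub _ _ hmem hd
  simpa [sub_sub_cancel] using this
end

section
/- Let (g_σ, q) be a CR algebra, i.e. g is a complex Lie algebra with anti-linear involution σ with fixed real form g_σ, and q a complex Lie subalgebra. Define the filtration F₀ = q ∩ g_σ, F₋₁ = (q + σ(q)) ∩ g_σ, F₋ₕ = F_{1−h} + [F_{1−h}, F₋₁] for h ≥ 2, and F_h = { Z ∈ F_{h−1} : [Z, F₋₁] ⊆ F_{h−1} } for h ≥ 1. Then [F_h, F_k] ⊆ F_{h+k} for all integers h, k. -/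
/-- for a CR algebra `(g_σ, q)` the canonical filtration
`F₀ = q ∩ g_σ`, `F₋₁ = (q + σ(q)) ∩ g_σ`, `F₋ₕ = F_{1−h} + [F_{1−h}, F₋₁]` (h ≥ 2),
`F_h = { Z ∈ F_{h−1} : [Z, F₋₁] ⊆ F_{h−1} }` (h ≥ 1) satisfies
`[F_h, F_k] ⊆ F_{h+k}` for all integers `h, k`.  The `F_h` are real subspaces of `g`
(real scalars act via `Module.complexToReal`). -/
theorem crFiltration_bracket_le
    (L : Type*) [LieRing L] [LieAlgebra ℂ L]
    (σ : L → L)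
    (hadd : ∀ x y : L, σ (x + y) = σ x + σ y)
    (hsmul : ∀ (c : ℂ) (x : L), σ (c • x) = (starRingEnd ℂ) c • σ x)
    (hbr : ∀ x y : L, σ ⁅x, y⁆ = ⁅σ x, σ y⁆)
    (hinv : ∀ x : L, σ (σ x) = x)
    (q : LieSubalgebra ℂ L)
    (F : ℤ → Submodule ℝ L)
    (hF0 : (F 0 : Set L) = {x | x ∈ q ∧ σ x = x})
    (hFm1 : (F (-1) : Set L) = {x | σ x = x ∧ ∃ a ∈ q, ∃ b ∈ q, x = a + σ b})
    (hFneg : ∀ h : ℤ, h ≤ -2 →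
      F h = F (h + 1) ⊔ Submodule.span ℝ {z : L | ∃ x ∈ F (h + 1), ∃ y ∈ F (-1), z = ⁅x, y⁆})
    (hFpos : ∀ h : ℤ, 1 ≤ h →
      (F h : Set L) = {x | x ∈ F (h - 1) ∧ ∀ y ∈ F (-1), ⁅x, y⁆ ∈ F (h - 1)}) :
    ∀ h k : ℤ, ∀ x ∈ F h, ∀ y ∈ F k, ⁅x, y⁆ ∈ F (h + k) := by

  -- membership characterizations
  have mem0 : ∀ x : L, x ∈ F 0 ↔ x ∈ q ∧ σ x = x := fun x => by
    rw [← SetLike.mem_coe, hF0]; exact Iff.rfl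
  have memm1 : ∀ x : L, x ∈ F (-1) ↔ σ x = x ∧ ∃ a ∈ q, ∃ b ∈ q, x = a + σ b := fun x => by
    rw [← SetLike.mem_coe, hFm1]; exact Iff.rfl
  have memp : ∀ h : ℤ, 1 ≤ h → ∀ x : L,
      x ∈ F h ↔ x ∈ F (h - 1) ∧ ∀ y ∈ F (-1), ⁅x, y⁆ ∈ F (h - 1) := fun h hh x => by
    rw [← SetLike.mem_coe, hFpos h hh]; exact Iff.rfl
  have FE : ∀ a b : ℤ, a = b → ∀ z : L, z ∈ F a → z ∈ F b := fun a b hab z hz => hab ▸ hz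
  have hσ0 : σ 0 = 0 := by simpa using hsmul 0 0
  have lie_rsmul : ∀ (x : L) (r : ℝ) (z : L), ⁅x, r • z⁆ = r • ⁅x, z⁆ := by
    intro x r z
    rw [show r • z = (r : ℂ) • z from (algebraMap_smul ℂ r z).symm, lie_smul,
      show (r : ℂ) • ⁅x, z⁆ = r • ⁅x, z⁆ from algebraMap_smul ℂ r ⁅x, z⁆]
  -- antitonicity
  have step : ∀ h : ℤ, F (h + 1) ≤ F h := by
    intro h
    rcases le_or_gt h (-2) with hh | hh
    · rw [hFneg h hh]; exact le_sup_left
    rcases lt_or_ge h 0 with hh0 | hh0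
    · have hm1 : h = -1 := by omega
      subst hm1
      intro x hx
      have hx0 : x ∈ F 0 := FE _ _ (by ring) x hx
      rcases (mem0 x).mp hx0 with ⟨hxq, hxσ⟩
      exact (memm1 x).mpr ⟨hxσ, x, hxq, 0, q.zero_mem, by rw [hσ0, add_zero]⟩
    · intro x hx
      have := ((memp (h + 1) (by omega) x).mp hx).1
      exact FE _ _ (by ring) x this
  have mono : ∀ h k : ℤ, h ≤ k → ∀ z : L, z ∈ F k → z ∈ F h := by
    have key : ∀ (n : ℕ) (h : ℤ), ∀ z : L, z ∈ F (h + n) → z ∈ F h := by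
      intro n
      induction n with
      | zero => intro h z hz; exact FE _ _ (by omega) z hz
      | succ n ih =>
        intro h z hz
        have hz' : z ∈ F (h + n + 1) := FE _ _ (by omega) z hz
        exact ih h z (step (h + n) hz')
    intro h k hk z hz
    exact key (k - h).toNat h z (FE _ _ (by omega) z hz)
  -- bracket of F 0 with F 0
  have hbr00 : ∀ x ∈ F 0, ∀ y ∈ F 0, ⁅x, y⁆ ∈ F 0 := by
    intro x hx y hy
    rcases (mem0 x).mp hx with ⟨hxq, hxσ⟩
    rcases (mem0 y).mp hy with ⟨hyq, hyσ⟩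
    exact (mem0 _).mpr ⟨q.lie_mem hxq hyq, by rw [hbr, hxσ, hyσ]⟩
  -- base : bracket with F (-1)
  have base : ∀ h : ℤ, ∀ x ∈ F h, ∀ y ∈ F (-1), ⁅x, y⁆ ∈ F (h - 1) := by
    intro h x hx y hy
    rcases lt_or_ge h 0 with hneg | hpos
    · rw [hFneg (h - 1) (by omega)]
      have hmem : ⁅x, y⁆ ∈ {z : L | ∃ a ∈ F (h - 1 + 1), ∃ b ∈ F (-1), z = ⁅a, b⁆} :=
        ⟨x, FE _ _ (by ring) x hx, y, hy, rfl⟩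
      exact Submodule.mem_sup_right (Submodule.subset_span hmem)
    rcases eq_or_lt_of_le hpos with h0 | hpos'
    · -- h = 0
      subst h0
      rcases (mem0 x).mp hx with ⟨hxq, hxσ⟩
      rcases (memm1 y).mp hy with ⟨hyσ, a, haq, b, hbq, hyab⟩
      refine FE (-1) (0 - 1) (by ring) _ ((memm1 _).mpr ⟨by rw [hbr, hxσ, hyσ], ?_⟩)
      refine ⟨⁅x, a⁆, q.lie_mem hxq haq, ⁅x, b⁆, q.lie_mem hxq hbq, ?_⟩
      rw [hyab, lie_add, hbr, hxσ]
    · exact ((memp h (by omega) x).mp hx).2 y hy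
  -- lemN : bracket with negative levels
  have lemN : ∀ n : ℕ, ∀ h k : ℤ, k + n = -1 → ∀ x ∈ F h, ∀ y ∈ F k, ⁅x, y⁆ ∈ F (h + k) := by
    intro n
    induction n with
    | zero =>
      intro h k hk x hx y hy
      have hk' : k = -1 := by omega
      subst hk'
      exact FE _ _ (by ring) _ (base h x hx y hy)
    | succ n ih =>
      intro h k hk x hx y hy
      have hk2 : k ≤ -2 := by omega
      let fx : L →ₗ[ℝ] L :=
        { toFun := fun z => ⁅x, z⁆
          map_add' := lie_add x
          map_smul' := fun r z => by simpa using lie_rsmul x r z }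
      have key : F k ≤ Submodule.comap fx (F (h + k)) := by
        rw [hFneg k hk2]
        apply sup_le
        · intro z hz
          rw [Submodule.mem_comap]
          show ⁅x, z⁆ ∈ F (h + k)
          have := ih h (k + 1) (by omega) x hx z hz
          exact mono _ _ (by omega) _ this
        · rw [Submodule.span_le]
          rintro z ⟨u, hu, v, hv, rfl⟩
          rw [SetLike.mem_coe, Submodule.mem_comap]
          show ⁅x, ⁅u, v⁆⁆ ∈ F (h + k)
          rw [leibniz_lie]
          apply add_mem
          · have h1 := ih h (k + 1) (by omega) x hx u hu
            have h2 := base _ _ h1 v hv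
            exact FE _ _ (by omega) _ h2
          · have h1 : ⁅x, v⁆ ∈ F (h - 1) := base h x hx v hv
            have h2 := ih (h - 1) (k + 1) (by omega) _ h1 u hu
            rw [← lie_skew]
            exact neg_mem (FE _ _ (by omega) _ h2)
      exact key hy
  -- lemP : nonnegative levels
  have lemP : ∀ m : ℕ, ∀ h k : ℤ, 0 ≤ h → 0 ≤ k → h + k = m →
      ∀ x ∈ F h, ∀ y ∈ F k, ⁅x, y⁆ ∈ F (h + k) := by
    intro m
    induction m using Nat.strong_induction_on with
    | _ m ih =>
      have sub : ∀ h k : ℤ, 0 ≤ h → 1 ≤ k → h + k = m →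
          ∀ x ∈ F h, ∀ y ∈ F k, ⁅x, y⁆ ∈ F (h + k) := by
        intro h k hh hk hm x hx y hy
        refine (memp (h + k) (by omega) _).mpr ⟨?_, ?_⟩
        · have hy' : y ∈ F (k - 1) := mono (k - 1) k (by omega) y hy
          have := ih (m - 1) (by omega) h (k - 1) hh (by omega) (by omega) x hx y hy'
          exact FE _ _ (by omega) _ this
        · intro z hz
          rw [lie_lie]
          apply sub_mem
          · have h1 : ⁅y, z⁆ ∈ F (k - 1) := FE _ _ (by omega) _ (base k y hy z hz)
            have := ih (m - 1) (by omega) h (k - 1) hh (by omega) (by omega) x hx _ h1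
            exact FE _ _ (by omega) _ this
          · have h1 : ⁅x, z⁆ ∈ F (h - 1) := base h x hx z hz
            rcases eq_or_lt_of_le hh with h0 | hpos
            · have h1' : ⁅x, z⁆ ∈ F (-1) := FE _ _ (by omega) _ h1
              have := base k y hy _ h1'
              exact FE _ _ (by omega) _ this
            · have := ih (m - 1) (by omega) k (h - 1) (by omega) (by omega) (by omega) y hy _ h1
              exact FE _ _ (by omega) _ this
      intro h k hh hk hm x hx y hy
      rcases lt_or_eq_of_le hk with hk1 | hk0
      · exact sub h k hh hk1 hm x hx y hy
      · rcases lt_or_eq_of_le hh with hh1 | hh0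
        · have h2 := sub k h hk hh1 (by omega) y hy x hx
          rw [← lie_skew]
          exact neg_mem (FE _ _ (by omega) _ h2)
        · have hx0 : x ∈ F 0 := FE _ _ (by omega) _ hx
          have hy0 : y ∈ F 0 := FE _ _ (by omega) _ hy
          exact FE _ _ (by omega) _ (hbr00 x hx0 y hy0)
  -- conclusion
  intro h k x hx y hy
  rcases le_or_gt 0 k with hk | hk
  · rcases le_or_gt 0 h with hh | hh
    · exact lemP (h + k).toNat h k hh hk (by omega) x hx y hy
    · have h2 := lemN (-1 - h).toNat k h (by omega) y hy x hx
      rw [← lie_skew]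
      exact neg_mem (FE _ _ (by omega) _ h2)
  · exact lemN (-1 - k).toNat h k (by omega) x hx y hy
end

section
/- Let g be a complex Lie algebra with anti-linear involution σ, and q a complex parabolic Lie subalgebra. Define k(g,q) := { Z ∈ q : [Z, σ(q)] ⊆ q + σ(q) } (the Levi-kernel). Then k(g,q) is a Lie subalgebra of g, and k(g,q) + σ(k(g,q)) is also a Lie subalgebra of g satisfying q ∩ σ(q) ⊆ k(g,q) + σ(k(g,q)) ⊆ q + σ(q). -/
variable {L : Type*} [LieRing L] [LieAlgebra ℂ L]

/-- The Levi-kernel `k(g,q) = { Z ∈ q : [Z, σ(q)] ⊆ q + σ(q) }`. -/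
def leviKernel (σ : L → L) (q : LieSubalgebra ℂ L) : Set L :=
  {Z | Z ∈ q ∧ ∀ w ∈ q, memSumConj σ q ⁅Z, σ w⁆}

/-- The set `k(g,q) + σ(k(g,q))`. -/
def leviKernelSum (σ : L → L) (q : LieSubalgebra ℂ L) : Set L :=
  {x | ∃ a ∈ leviKernel σ q, ∃ b ∈ leviKernel σ q, x = a + σ b}

/-- the Levi-kernel `k(g,q)` is a Lie subalgebra of `g`, and
`k(g,q) + σ(k(g,q))` is a Lie subalgebra of `g` with
`q ∩ σ(q) ⊆ k(g,q) + σ(k(g,q)) ⊆ q + σ(q)`. -/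
theorem leviKernel_isLieSubalgebra
    (σ : L → L)
    (hadd : ∀ x y : L, σ (x + y) = σ x + σ y)
    (hsmul : ∀ (c : ℂ) (x : L), σ (c • x) = (starRingEnd ℂ) c • σ x)
    (hbr : ∀ x y : L, σ ⁅x, y⁆ = ⁅σ x, σ y⁆)
    (hinv : ∀ x : L, σ (σ x) = x)
    (q : LieSubalgebra ℂ L) :
    -- `k(g,q)` is a Lie subalgebra
    (∀ x ∈ leviKernel σ q, ∀ y ∈ leviKernel σ q, x + y ∈ leviKernel σ q) ∧
    (∀ c : ℂ, ∀ x ∈ leviKernel σ q, c • x ∈ leviKernel σ q) ∧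
    (∀ x ∈ leviKernel σ q, ∀ y ∈ leviKernel σ q, ⁅x, y⁆ ∈ leviKernel σ q) ∧
    -- `k(g,q) + σ(k(g,q))` is a Lie subalgebra
    (∀ x ∈ leviKernelSum σ q, ∀ y ∈ leviKernelSum σ q, x + y ∈ leviKernelSum σ q) ∧
    (∀ c : ℂ, ∀ x ∈ leviKernelSum σ q, c • x ∈ leviKernelSum σ q) ∧
    (∀ x ∈ leviKernelSum σ q, ∀ y ∈ leviKernelSum σ q, ⁅x, y⁆ ∈ leviKernelSum σ q) ∧
    -- `q ∩ σ(q) ⊆ k(g,q) + σ(k(g,q)) ⊆ q + σ(q)`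
    (∀ x : L, x ∈ q → σ x ∈ q → x ∈ leviKernelSum σ q) ∧
    (∀ x ∈ leviKernelSum σ q, memSumConj σ q x) := by
  have h0 : σ 0 = 0 := by
    have := hsmul 0 0
    simpa using this
  have hneg : ∀ x : L, σ (-x) = -σ x := by
    intro x
    have := hsmul (-1) x
    simpa using this
  -- closure properties of S = q + σ q
  have Sq : ∀ x ∈ q, memSumConj σ q x := fun x hx =>
    ⟨x, hx, 0, q.zero_mem, by simp [h0]⟩
  have Sσq : ∀ x ∈ q, memSumConj σ q (σ x) := fun x hx =>
    ⟨0, q.zero_mem, x, hx, by simp⟩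
  have Sadd : ∀ x y : L, memSumConj σ q x → memSumConj σ q y →
      memSumConj σ q (x + y) := by
    rintro x y ⟨a, ha, b, hb, rfl⟩ ⟨c, hc, d, hd, rfl⟩
    exact ⟨a + c, q.add_mem ha hc, b + d, q.add_mem hb hd, by rw [hadd]; abel⟩
  have Ssmul : ∀ (c : ℂ) (x : L), memSumConj σ q x → memSumConj σ q (c • x) := by
    rintro c x ⟨a, ha, b, hb, rfl⟩
    refine ⟨c • a, q.smul_mem c ha, (starRingEnd ℂ) c • b, q.smul_mem _ hb, ?_⟩
    rw [smul_add, hsmul]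
    simp
  have Sneg : ∀ x : L, memSumConj σ q x → memSumConj σ q (-x) := by
    intro x hx
    have := Ssmul (-1) x hx
    simpa using this
  have Ssub : ∀ x y : L, memSumConj σ q x → memSumConj σ q y →
      memSumConj σ q (x - y) := by
    intro x y hx hy
    rw [sub_eq_add_neg]
    exact Sadd _ _ hx (Sneg _ hy)
  have Sσ : ∀ x : L, memSumConj σ q x → memSumConj σ q (σ x) := by
    rintro x ⟨a, ha, b, hb, rfl⟩
    exact ⟨b, hb, a, ha, by rw [hadd, hinv, add_comm]⟩
  -- Lemma A : k brackets S into S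
  have LA : ∀ Z ∈ leviKernel σ q, ∀ s : L, memSumConj σ q s →
      memSumConj σ q ⁅Z, s⁆ := by
    rintro Z ⟨hZq, hZ⟩ s ⟨p, hp, r, hr, rfl⟩
    rw [lie_add]
    exact Sadd _ _ (Sq _ (q.lie_mem hZq hp)) (hZ r hr)
  -- Lemma B : σ k brackets S into S
  have LB : ∀ Z ∈ leviKernel σ q, ∀ s : L, memSumConj σ q s →
      memSumConj σ q ⁅σ Z, s⁆ := by
    rintro Z ⟨hZq, hZ⟩ s ⟨p, hp, r, hr, rfl⟩
    rw [lie_add]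
    apply Sadd
    · have h1 : ⁅σ Z, p⁆ = σ ⁅Z, σ p⁆ := by rw [hbr, hinv]
      rw [h1]
      exact Sσ _ (hZ p hp)
    · have h2 : ⁅σ Z, σ r⁆ = σ ⁅Z, r⁆ := (hbr Z r).symm
      rw [h2]
      exact Sσq _ (q.lie_mem hZq hr)
  -- closure of k
  have k0 : (0 : L) ∈ leviKernel σ q :=
    ⟨q.zero_mem, fun w hw => by rw [zero_lie]; exact Sq _ q.zero_mem⟩
  have kadd : ∀ x ∈ leviKernel σ q, ∀ y ∈ leviKernel σ q,
      x + y ∈ leviKernel σ q := by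
    rintro x ⟨hxq, hx⟩ y ⟨hyq, hy⟩
    refine ⟨q.add_mem hxq hyq, fun w hw => ?_⟩
    rw [add_lie]
    exact Sadd _ _ (hx w hw) (hy w hw)
  have ksmul : ∀ (c : ℂ), ∀ x ∈ leviKernel σ q, c • x ∈ leviKernel σ q := by
    rintro c x ⟨hxq, hx⟩
    refine ⟨q.smul_mem c hxq, fun w hw => ?_⟩
    rw [smul_lie]
    exact Ssmul c _ (hx w hw)
  have kneg : ∀ x ∈ leviKernel σ q, -x ∈ leviKernel σ q := by
    intro x hx
    have := ksmul (-1) x hx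
    simpa using this
  have ksub : ∀ x ∈ leviKernel σ q, ∀ y ∈ leviKernel σ q,
      x - y ∈ leviKernel σ q := by
    intro x hx y hy
    rw [sub_eq_add_neg]
    exact kadd _ hx _ (kneg _ hy)
  have kbr : ∀ x ∈ leviKernel σ q, ∀ y ∈ leviKernel σ q,
      ⁅x, y⁆ ∈ leviKernel σ q := by
    rintro x hx y hy
    obtain ⟨hxq, hx'⟩ := hx
    obtain ⟨hyq, hy'⟩ := hy
    refine ⟨q.lie_mem hxq hyq, fun w hw => ?_⟩
    have hJ : ⁅(⁅x, y⁆ : L), σ w⁆ = ⁅x, ⁅y, σ w⁆⁆ - ⁅y, ⁅x, σ w⁆⁆ := by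
      rw [lie_lie]
    rw [hJ]
    exact Ssub _ _ (LA x ⟨hxq, hx'⟩ _ (hy' w hw)) (LA y ⟨hyq, hy'⟩ _ (hx' w hw))
  -- Lemma C : for a d ∈ k, ⁅a, σ d⁆ ∈ k + σ k
  have LC : ∀ a ∈ leviKernel σ q, ∀ d ∈ leviKernel σ q,
      ∃ u ∈ leviKernel σ q, ∃ v ∈ leviKernel σ q, ⁅a, σ d⁆ = u + σ v := by
    rintro a ha d hd
    obtain ⟨u, hu, v, hv, huv⟩ := ha.2 d hd.1
    have hu' : u ∈ leviKernel σ q := by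
      refine ⟨hu, fun w hw => ?_⟩
      have hueq : u = ⁅a, σ d⁆ - σ v := by rw [huv]; abel
      have h1 : ⁅u, σ w⁆ = ⁅(⁅a, σ d⁆ : L), σ w⁆ - ⁅σ v, σ w⁆ := by
        rw [hueq, sub_lie]
      have h2 : ⁅(⁅a, σ d⁆ : L), σ w⁆ = ⁅a, ⁅σ d, σ w⁆⁆ - ⁅σ d, ⁅a, σ w⁆⁆ := by
        rw [lie_lie]
      have h3 : ⁅σ d, σ w⁆ = σ ⁅d, w⁆ := (hbr d w).symm
      have h4 : ⁅σ v, σ w⁆ = σ ⁅v, w⁆ := (hbr v w).symm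
      rw [h1, h2, h3, h4]
      refine Ssub _ _ (Ssub _ _ ?_ ?_) ?_
      · exact LA a ha _ (Sσq _ (q.lie_mem hd.1 hw))
      · exact LB d hd _ (ha.2 w hw)
      · exact Sσq _ (q.lie_mem hv hw)
    have hv' : v ∈ leviKernel σ q := by
      refine ⟨hv, fun w hw => ?_⟩
      have hveq : σ v = ⁅a, σ d⁆ - u := by rw [huv]; abel
      have h5 : ⁅v, σ w⁆ = σ ⁅σ v, w⁆ := by rw [hbr, hinv]
      rw [h5]
      apply Sσ
      have h6 : ⁅σ v, w⁆ = ⁅(⁅a, σ d⁆ : L), w⁆ - ⁅u, w⁆ := by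
        rw [hveq, sub_lie]
      have h7 : ⁅(⁅a, σ d⁆ : L), w⁆ = ⁅a, ⁅σ d, w⁆⁆ - ⁅σ d, ⁅a, w⁆⁆ := by
        rw [lie_lie]
      rw [h6, h7]
      refine Ssub _ _ (Ssub _ _ ?_ ?_) ?_
      · exact LA a ha _ (LB d hd _ (Sq _ hw))
      · exact LB d hd _ (Sq _ (q.lie_mem ha.1 hw))
      · exact Sq _ (q.lie_mem hu hw)
    exact ⟨u, hu', v, hv', huv⟩
  refine ⟨kadd, ksmul, kbr, ?_, ?_, ?_, ?_, ?_⟩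
  · -- sum closed under addition
    rintro x ⟨a, ha, b, hb, rfl⟩ y ⟨c, hc, d, hd, rfl⟩
    exact ⟨a + c, kadd a ha c hc, b + d, kadd b hb d hd, by rw [hadd]; abel⟩
  · -- sum closed under scalar multiplication
    rintro c x ⟨a, ha, b, hb, rfl⟩
    refine ⟨c • a, ksmul c a ha, (starRingEnd ℂ) c • b, ksmul _ b hb, ?_⟩
    rw [smul_add, hsmul]
    simp
  · -- sum closed under bracket
    rintro x ⟨a, ha, b, hb, rfl⟩ y ⟨c, hc, d, hd, rfl⟩
    have hexp : ⁅a + σ b, c + σ d⁆ =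
        ⁅a, c⁆ + ⁅a, σ d⁆ - ⁅c, σ b⁆ + σ ⁅b, d⁆ := by
      rw [hbr]
      rw [add_lie, lie_add, lie_add]
      have : ⁅σ b, c⁆ = -⁅c, σ b⁆ := by rw [lie_skew]
      rw [this]
      abel
    obtain ⟨u1, hu1, v1, hv1, h1⟩ := LC a ha d hd
    obtain ⟨u2, hu2, v2, hv2, h2⟩ := LC c hc b hb
    refine ⟨⁅a, c⁆ + u1 - u2, ?_, v1 - v2 + ⁅b, d⁆, ?_, ?_⟩
    · exact ksub _ (kadd _ (kbr a ha c hc) _ hu1) _ hu2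
    · exact kadd _ (ksub _ hv1 _ hv2) _ (kbr b hb d hd)
    · rw [hexp, h1, h2]
      rw [sub_eq_add_neg (v1:L) v2, hadd, hadd, hneg]
      abel
  · -- q ∩ σ q ⊆ sum
    intro x hxq hσxq
    have hxk : x ∈ leviKernel σ q := by
      refine ⟨hxq, fun w hw => ?_⟩
      have : ⁅x, σ w⁆ = σ ⁅σ x, w⁆ := by rw [hbr, hinv]
      rw [this]
      exact Sσq _ (q.lie_mem hσxq hw)
    exact ⟨x, hxk, 0, k0, by simp [h0]⟩
  · -- sum ⊆ S
    rintro x ⟨a, ha, b, hb, rfl⟩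
    exact ⟨a, ha.1, b, hb.1, rfl⟩
end

section
/- Let g be a complex Lie algebra with anti-linear involution σ, q a complex Lie subalgebra, and w a complex Lie subalgebra with q ∩ σ(q) ⊆ w ⊆ q + σ(q). Set p := { Z ∈ w : [Z, σ(w)] ⊆ w + σ(w) }. Then p is a Lie subalgebra of g, and l := p + σ(p) is a Lie subalgebra of g satisfying q ∩ σ(q) ⊆ l ⊆ q + σ(q). -/
variable {L : Type*} [LieRing L] [LieAlgebra ℂ L]

/-- The set `p = { Z ∈ w : [Z, σ(w)] ⊆ w + σ(w) }`. -/
def pSet (σ : L → L) (w : LieSubalgebra ℂ L) : Set L :=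
  {Z | Z ∈ w ∧ ∀ u ∈ w, ∃ a ∈ w, ∃ b ∈ w, ⁅Z, σ u⁆ = a + σ b}

/-- The set `l = p + σ(p)`. -/
def lSet (σ : L → L) (w : LieSubalgebra ℂ L) : Set L :=
  {x | ∃ a ∈ pSet σ w, ∃ b ∈ pSet σ w, x = a + σ b}

/-- if `w` is a complex Lie subalgebra with `q ∩ σ(q) ⊆ w ⊆ q + σ(q)`, then
`p = { Z ∈ w : [Z, σ(w)] ⊆ w + σ(w) }` is a Lie subalgebra of `g`, and `l = p + σ(p)` is a
Lie subalgebra of `g` satisfying `q ∩ σ(q) ⊆ l ⊆ q + σ(q)`. -/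
theorem pSet_lSet_isLieSubalgebra
    (σ : L → L)
    (hadd : ∀ x y : L, σ (x + y) = σ x + σ y)
    (hsmul : ∀ (c : ℂ) (x : L), σ (c • x) = (starRingEnd ℂ) c • σ x)
    (hbr : ∀ x y : L, σ ⁅x, y⁆ = ⁅σ x, σ y⁆)
    (hinv : ∀ x : L, σ (σ x) = x)
    (q w : LieSubalgebra ℂ L)
    (hlow : ∀ x : L, x ∈ q → σ x ∈ q → x ∈ w)
    (hup : ∀ x ∈ w, ∃ a ∈ q, ∃ b ∈ q, x = a + σ b) :
    -- `p` is a Lie subalgebra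
    (∀ x ∈ pSet σ w, ∀ y ∈ pSet σ w, x + y ∈ pSet σ w) ∧
    (∀ c : ℂ, ∀ x ∈ pSet σ w, c • x ∈ pSet σ w) ∧
    (∀ x ∈ pSet σ w, ∀ y ∈ pSet σ w, ⁅x, y⁆ ∈ pSet σ w) ∧
    -- `l = p + σ(p)` is a Lie subalgebra
    (∀ x ∈ lSet σ w, ∀ y ∈ lSet σ w, x + y ∈ lSet σ w) ∧
    (∀ c : ℂ, ∀ x ∈ lSet σ w, c • x ∈ lSet σ w) ∧
    (∀ x ∈ lSet σ w, ∀ y ∈ lSet σ w, ⁅x, y⁆ ∈ lSet σ w) ∧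
    -- `q ∩ σ(q) ⊆ l ⊆ q + σ(q)`
    (∀ x : L, x ∈ q → σ x ∈ q → x ∈ lSet σ w) ∧
    (∀ x ∈ lSet σ w, ∃ a ∈ q, ∃ b ∈ q, x = a + σ b) := by
  have hσ0 : σ 0 = 0 := by
    have h := hsmul 0 0
    simpa using h
  -- V is the set w + σ(w)
  set V : L → Prop := fun x => ∃ a ∈ w, ∃ b ∈ w, x = a + σ b with hVdef
  have hVadd : ∀ x y, V x → V y → V (x + y) := by
    rintro x y ⟨a, ha, b, hb, rfl⟩ ⟨c, hc, d, hd, rfl⟩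
    exact ⟨a + c, w.add_mem ha hc, b + d, w.add_mem hb hd, by rw [hadd]; abel⟩
  have hVsmul : ∀ (c : ℂ) x, V x → V (c • x) := by
    rintro c x ⟨a, ha, b, hb, rfl⟩
    refine ⟨c • a, w.smul_mem c ha, (starRingEnd ℂ) c • b, w.smul_mem _ hb, ?_⟩
    rw [smul_add, hsmul]
    simp [Complex.conj_conj]
  have hVneg : ∀ x, V x → V (-x) := by
    intro x hx
    have h := hVsmul (-1) x hx
    simpa using h
  have hVsub : ∀ x y, V x → V y → V (x - y) := by
    intro x y hx hy
    have h := hVadd x (-y) hx (hVneg y hy)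
    simpa [sub_eq_add_neg] using h
  have hVσ : ∀ x, V x → V (σ x) := by
    rintro x ⟨a, ha, b, hb, rfl⟩
    exact ⟨b, hb, a, ha, by rw [hadd, hinv, add_comm]⟩
  have hwV : ∀ x ∈ w, V x := fun x hx => ⟨x, hx, 0, w.zero_mem, by rw [hσ0, add_zero]⟩
  have hσwV : ∀ x ∈ w, V (σ x) := fun x hx => ⟨0, w.zero_mem, x, hx, by rw [zero_add]⟩
  -- p membership characterization
  have hpmem : ∀ x : L, x ∈ pSet σ w ↔ (x ∈ w ∧ ∀ u ∈ w, V ⁅x, σ u⁆) := fun x => Iff.rfl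
  -- Brackets of σ(p) with w land in V
  have L1 : ∀ x ∈ pSet σ w, ∀ c ∈ w, V ⁅σ x, c⁆ := by
    intro x hx c hc
    have h1 : ⁅σ x, c⁆ = σ ⁅x, σ c⁆ := by rw [hbr, hinv]
    rw [h1]
    exact hVσ _ (((hpmem x).mp hx).2 c hc)
  -- Brackets of p with V land in V
  have L2 : ∀ x ∈ pSet σ w, ∀ v, V v → V ⁅x, v⁆ := by
    rintro x hx v ⟨a, ha, b, hb, rfl⟩
    rw [lie_add]
    exact hVadd _ _ (hwV _ (w.lie_mem ((hpmem x).mp hx).1 ha)) (((hpmem x).mp hx).2 b hb)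
  -- Brackets of σ(p) with V land in V
  have L2' : ∀ x ∈ pSet σ w, ∀ v, V v → V ⁅σ x, v⁆ := by
    rintro x hx v ⟨a, ha, b, hb, rfl⟩
    rw [lie_add]
    refine hVadd _ _ (L1 x hx a ha) ?_
    have h1 : ⁅σ x, σ b⁆ = σ ⁅x, b⁆ := (hbr x b).symm
    rw [h1]
    exact hσwV _ (w.lie_mem ((hpmem x).mp hx).1 hb)
  -- p is closed under the operations
  have hpadd : ∀ x ∈ pSet σ w, ∀ y ∈ pSet σ w, x + y ∈ pSet σ w := by
    intro x hx y hy
    exact ⟨w.add_mem hx.1 hy.1, fun u hu => by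
      rw [add_lie]; exact hVadd _ _ (hx.2 u hu) (hy.2 u hu)⟩
  have hpsmul : ∀ c : ℂ, ∀ x ∈ pSet σ w, c • x ∈ pSet σ w := by
    intro c x hx
    exact ⟨w.smul_mem c hx.1, fun u hu => by
      rw [smul_lie]; exact hVsmul c _ (hx.2 u hu)⟩
  have hplie : ∀ x ∈ pSet σ w, ∀ y ∈ pSet σ w, ⁅x, y⁆ ∈ pSet σ w := by
    intro x hx y hy
    refine ⟨w.lie_mem hx.1 hy.1, fun u hu => ?_⟩
    rw [lie_lie]
    exact hVsub _ _ (L2 x hx _ (hy.2 u hu)) (L2 y hy _ (hx.2 u hu))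
  have hp0 : (0 : L) ∈ pSet σ w :=
    ⟨w.zero_mem, fun u hu => by
      rw [zero_lie]; exact ⟨0, w.zero_mem, 0, w.zero_mem, by rw [hσ0, add_zero]⟩⟩
  -- Key claim: ⁅p, σ(p)⁆ ⊆ l
  have key : ∀ x ∈ pSet σ w, ∀ y ∈ pSet σ w, ⁅x, σ y⁆ ∈ lSet σ w := by
    intro x hx y hy
    obtain ⟨a, ha, b, hb, hXab⟩ := hx.2 y hy.1
    have hX1 : ∀ u ∈ w, V ⁅⁅x, σ y⁆, σ u⁆ := by
      intro u hu
      rw [lie_lie]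
      refine hVsub _ _ ?_ (L2' y hy _ (hx.2 u hu))
      have h1 : ⁅σ y, σ u⁆ = σ ⁅y, u⁆ := (hbr y u).symm
      rw [h1]
      exact L2 x hx _ (hσwV _ (w.lie_mem hy.1 hu))
    have hX2 : ∀ u ∈ w, V ⁅σ ⁅x, σ y⁆, σ u⁆ := by
      intro u hu
      have hσX : σ ⁅x, σ y⁆ = ⁅σ x, y⁆ := by rw [hbr, hinv]
      rw [hσX, lie_lie]
      refine hVsub _ _ (L2' x hx _ (hy.2 u hu)) ?_
      have h1 : ⁅σ x, σ u⁆ = σ ⁅x, u⁆ := (hbr x u).symm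
      rw [h1]
      exact L2 y hy _ (hσwV _ (w.lie_mem hx.1 hu))
    have haP : a ∈ pSet σ w := by
      refine ⟨ha, fun u hu => ?_⟩
      have ha' : a = ⁅x, σ y⁆ - σ b := by rw [hXab]; abel
      rw [ha', sub_lie]
      refine hVsub _ _ (hX1 u hu) ?_
      have h1 : ⁅σ b, σ u⁆ = σ ⁅b, u⁆ := (hbr b u).symm
      rw [h1]
      exact hσwV _ (w.lie_mem hb hu)
    have hbP : b ∈ pSet σ w := by
      refine ⟨hb, fun u hu => ?_⟩
      have h1 : ⁅b, σ u⁆ = σ ⁅σ b, u⁆ := by rw [hbr, hinv]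
      rw [h1]
      refine hVσ _ ?_
      have hb' : σ b = ⁅x, σ y⁆ - a := by rw [hXab]; abel
      rw [hb', sub_lie]
      refine hVsub _ _ ?_ (hwV _ (w.lie_mem ha hu))
      have h2 : ⁅⁅x, σ y⁆, u⁆ = σ ⁅σ ⁅x, σ y⁆, σ u⁆ := by rw [hbr, hinv, hinv]
      rw [h2]
      exact hVσ _ (hX2 u hu)
    exact ⟨a, haP, b, hbP, hXab⟩
  -- l closure properties
  have hpl : ∀ x ∈ pSet σ w, x ∈ lSet σ w :=
    fun x hx => ⟨x, hx, 0, hp0, by rw [hσ0, add_zero]⟩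
  have hσpl : ∀ x ∈ pSet σ w, σ x ∈ lSet σ w :=
    fun x hx => ⟨0, hp0, x, hx, by rw [zero_add]⟩
  have hladd : ∀ x ∈ lSet σ w, ∀ y ∈ lSet σ w, x + y ∈ lSet σ w := by
    rintro x ⟨a, ha, b, hb, rfl⟩ y ⟨c, hc, d, hd, rfl⟩
    exact ⟨a + c, hpadd a ha c hc, b + d, hpadd b hb d hd, by rw [hadd]; abel⟩
  have hlsmul : ∀ c : ℂ, ∀ x ∈ lSet σ w, c • x ∈ lSet σ w := by
    rintro c x ⟨a, ha, b, hb, rfl⟩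
    refine ⟨c • a, hpsmul c a ha, (starRingEnd ℂ) c • b, hpsmul _ b hb, ?_⟩
    rw [smul_add, hsmul]
    simp [Complex.conj_conj]
  have hlneg : ∀ x ∈ lSet σ w, -x ∈ lSet σ w := by
    intro x hx
    have h := hlsmul (-1) x hx
    simpa using h
  have hllie : ∀ x ∈ lSet σ w, ∀ y ∈ lSet σ w, ⁅x, y⁆ ∈ lSet σ w := by
    rintro x ⟨a, ha, b, hb, rfl⟩ y ⟨c, hc, d, hd, rfl⟩
    rw [add_lie, lie_add, lie_add]
    refine hladd _ (hladd _ ?_ _ ?_) _ (hladd _ ?_ _ ?_)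
    · exact hpl _ (hplie a ha c hc)
    · exact key a ha d hd
    · have h1 : ⁅σ b, c⁆ = -⁅c, σ b⁆ := by rw [← lie_skew]
      rw [h1]
      exact hlneg _ (key c hc b hb)
    · have h1 : ⁅σ b, σ d⁆ = σ ⁅b, d⁆ := (hbr b d).symm
      rw [h1]
      exact hσpl _ (hplie b hb d hd)
  -- inclusions
  have hlowp : ∀ x : L, x ∈ q → σ x ∈ q → x ∈ pSet σ w := by
    intro x hxq hσxq
    have hxw : x ∈ w := hlow x hxq hσxq
    have hσxw : σ x ∈ w := hlow (σ x) hσxq (by rw [hinv]; exact hxq)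
    refine ⟨hxw, fun u hu => ?_⟩
    have h1 : ⁅x, σ u⁆ = σ ⁅σ x, u⁆ := by rw [hbr, hinv]
    rw [h1]
    exact hσwV _ (w.lie_mem hσxw hu)
  have hlupq : ∀ x ∈ lSet σ w, ∃ a ∈ q, ∃ b ∈ q, x = a + σ b := by
    rintro x ⟨a, ha, b, hb, rfl⟩
    obtain ⟨a1, ha1, a2, ha2, ha'⟩ := hup a ha.1
    obtain ⟨b1, hb1, b2, hb2, hb'⟩ := hup b hb.1
    refine ⟨a1 + b2, q.add_mem ha1 hb2, a2 + b1, q.add_mem ha2 hb1, ?_⟩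
    rw [ha', hb', hadd, hadd, hinv]
    abel
  exact ⟨hpadd, hpsmul, hplie, hladd, hlsmul, hllie,
    fun x hxq hσxq => hpl x (hlowp x hxq hσxq), hlupq⟩
end

section
/- Let R be a root system in a Euclidean space, Q ⊆ R a parabolic subset (Q closed and Q ∪ (−Q) = R). Then there exists a unique Z-grading χ_Q : Z[R] → Z such that Q^r = {α ∈ R : χ_Q(α) = 0}, Q^n = {α ∈ R : χ_Q(α) > 0}, R\Q = {α ∈ R : χ_Q(α) < 0}, and {α ∈ R : χ_Q(α) = 1} generates Q^n (every element of Q^n is a sum of roots of degree one forming partial sums in R). -/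
open scoped RealInnerProductSpace

variable {V : Type*} [NormedAddCommGroup V] [InnerProductSpace ℝ V]

/-- `R` is a (finite, reduced) root system in the Euclidean space `V`. -/
def IsRootSys (R : Set V) : Prop :=
  R.Finite ∧ (0 : V) ∉ R ∧
  (∀ α ∈ R, ∀ β ∈ R, β - (2 * ⟪β, α⟫ / ⟪α, α⟫) • α ∈ R) ∧
  (∀ α ∈ R, ∀ β ∈ R, ∃ n : ℤ, 2 * ⟪β, α⟫ / ⟪α, α⟫ = (n : ℝ)) ∧
  (∀ α ∈ R, ∀ t : ℝ, t • α ∈ R → t = 1 ∨ t = -1)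

/-- `Q` is a parabolic subset of `R`: closed and `Q ∪ (−Q) = R`. -/
def IsParabolicSet (R Q : Set V) : Prop :=
  Q ⊆ R ∧ (∀ α ∈ Q, ∀ β ∈ Q, α + β ∈ R → α + β ∈ Q) ∧ (∀ α ∈ R, α ∈ Q ∨ -α ∈ Q)

/-- `χ` is the canonical ℤ-grading attached to a parabolic set `Q ⊆ R`: it is additive on the
root lattice, vanishes exactly on `Q^r = Q ∩ (−Q)`, is positive exactly on `Q^n = Q \ (−Q)`,
negative exactly on `R \ Q`, and the roots of degree one generate `Q^n` (every root of `Q^n`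
is a sum of degree-one roots whose partial sums are roots). -/
def IsCanonicalGrading (R Q : Set V) (χ : V → ℤ) : Prop :=
  (∀ x ∈ AddSubgroup.closure R, ∀ y ∈ AddSubgroup.closure R, χ (x + y) = χ x + χ y) ∧
  (∀ α ∈ R, ((α ∈ Q ∧ -α ∈ Q) ↔ χ α = 0)) ∧
  (∀ α ∈ R, ((α ∈ Q ∧ -α ∉ Q) ↔ 0 < χ α)) ∧
  (∀ α ∈ R, (α ∉ Q ↔ χ α < 0)) ∧
  (∀ α ∈ R, α ∈ Q → -α ∉ Q → ∃ l : List V, l ≠ [] ∧ (∀ β ∈ l, β ∈ R ∧ χ β = 1) ∧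
    (∀ k : ℕ, k < l.length → (l.take (k + 1)).sum ∈ R) ∧ l.sum = α)

set_option linter.unusedSectionVars false
attribute [local instance] Classical.propDecidable

namespace RSys

variable {R : Set V} {Q : Set V}



theorem ne_zero (hR : IsRootSys R) {α : V} (hα : α ∈ R) : α ≠ 0 := fun h => hR.2.1 (h ▸ hα)

theorem inner_self_pos' (hR : IsRootSys R) {α : V} (hα : α ∈ R) : 0 < ⟪α, α⟫ := by
  rw [real_inner_self_eq_norm_sq]
  exact pow_pos (norm_pos_iff.mpr (ne_zero hR hα)) 2

theorem neg_mem (hR : IsRootSys R) {α : V} (hα : α ∈ R) : -α ∈ R := by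
  have h := hR.2.2.1 α hα α hα
  have hpos := inner_self_pos' hR hα
  have hn : (2 * ⟪α, α⟫ / ⟪α, α⟫) = 2 := by field_simp
  rw [hn] at h
  convert h using 1
  module

theorem not_dep (hR : IsRootSys R) {α β : V} (hα : α ∈ R) (hβ : β ∈ R) (h1 : β ≠ α)
    (h2 : β ≠ -α) (t : ℝ) (ht : β = t • α) : False := by
  rcases hR.2.2.2.2 α hα t (ht ▸ hβ) with h | h
  · exact h1 (by simp [ht, h])
  · exact h2 (by simp [ht, h])

/-- strict Cauchy-Schwarz for non-proportional roots -/
theorem inner_sq_lt (hR : IsRootSys R) {α β : V} (hα : α ∈ R) (hβ : β ∈ R) (h1 : β ≠ α)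
    (h2 : β ≠ -α) : ⟪α, β⟫ ^ 2 < ⟪α, α⟫ * ⟪β, β⟫ := by
  have hle : |⟪α, β⟫| ≤ ‖α‖ * ‖β‖ := abs_real_inner_le_norm α β
  have hne : |⟪α, β⟫| ≠ ‖α‖ * ‖β‖ := by
    intro h
    have hα0 := ne_zero hR hα
    have hβ0 := ne_zero hR hβ
    have hh : ‖(inner ℝ α β : ℝ)‖ = ‖α‖ * ‖β‖ := by rwa [Real.norm_eq_abs]
    rcases (norm_inner_eq_norm_iff hα0 hβ0).1 hh with ⟨r, hr0, hr⟩
    exact not_dep hR hα hβ h1 h2 r hr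
  have hlt : |⟪α, β⟫| < ‖α‖ * ‖β‖ := lt_of_le_of_ne hle hne
  have h0 : (0:ℝ) ≤ |⟪α, β⟫| := abs_nonneg _
  calc ⟪α, β⟫ ^ 2 = |⟪α, β⟫| ^ 2 := (sq_abs _).symm
    _ < (‖α‖ * ‖β‖) ^ 2 := by nlinarith
    _ = ⟪α, α⟫ * ⟪β, β⟫ := by
        rw [real_inner_self_eq_norm_mul_norm, real_inner_self_eq_norm_mul_norm]; ring

/-- if the inner product is negative, the sum is a root -/
theorem add_mem_of_inner_neg (hR : IsRootSys R) {α β : V} (hα : α ∈ R) (hβ : β ∈ R)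
    (hne : β ≠ -α) (hin : ⟪α, β⟫ < 0) : α + β ∈ R := by
  have hβα : β ≠ α := by
    rintro rfl; exact absurd hin (not_lt.2 (le_of_lt (inner_self_pos' hR hα)))
  obtain ⟨n₁, hn₁⟩ := hR.2.2.2.1 α hα β hβ   -- 2⟪β,α⟫/⟪α,α⟫ = n₁
  obtain ⟨n₂, hn₂⟩ := hR.2.2.2.1 β hβ α hα   -- 2⟪α,β⟫/⟪β,β⟫ = n₂
  have hαα := inner_self_pos' hR hα
  have hββ := inner_self_pos' hR hβ
  have hsym : ⟪β, α⟫ = ⟪α, β⟫ := real_inner_comm α β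
  have hn₁neg : (n₁ : ℝ) < 0 := by
    rw [← hn₁, hsym]
    exact div_neg_of_neg_of_pos (by linarith) hαα
  have hn₂neg : (n₂ : ℝ) < 0 := by
    rw [← hn₂, real_inner_comm]
    exact div_neg_of_neg_of_pos (by rw [hsym]; linarith) hββ
  have hprod : (n₁ : ℝ) * n₂ < 4 := by
    have hsq := inner_sq_lt hR hα hβ hβα hne
    have he : (n₁ : ℝ) * n₂ = 4 * ⟪α, β⟫ ^ 2 / (⟪α, α⟫ * ⟪β, β⟫) := by
      rw [← hn₁, ← hn₂, hsym, real_inner_comm β α]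
      field_simp
      ring
    rw [he, div_lt_iff₀ (by positivity)]
    nlinarith
  have h₁ : n₁ ≤ -1 := by
    have : n₁ < 0 := by exact_mod_cast hn₁neg
    omega
  have h₂ : n₂ ≤ -1 := by
    have : n₂ < 0 := by exact_mod_cast hn₂neg
    omega
  have h1 : n₁ = -1 ∨ n₂ = -1 := by
    by_contra hc
    push_neg at hc
    have e₁ : n₁ ≤ -2 := by omega
    have e₂ : n₂ ≤ -2 := by omega
    have h4 : (4:ℤ) ≤ n₁ * n₂ := by nlinarith
    have : (4:ℝ) ≤ (n₁:ℝ) * n₂ := by exact_mod_cast h4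
    linarith
  rcases h1 with h | h
  · have hmem := hR.2.2.1 α hα β hβ
    rw [hn₁, h] at hmem
    convert hmem using 1
    push_cast
    module
  · have hmem := hR.2.2.1 β hβ α hα
    rw [hn₂, h] at hmem
    convert hmem using 1
    push_cast
    module

theorem sub_mem_of_inner_pos (hR : IsRootSys R) {α β : V} (hα : α ∈ R) (hβ : β ∈ R)
    (hne : β ≠ α) (hin : 0 < ⟪α, β⟫) : α - β ∈ R := by
  have h := add_mem_of_inner_neg hR hα (neg_mem hR hβ) (by simpa using hne)
    (by rw [inner_neg_right]; linarith)
  simpa [sub_eq_add_neg] using h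



/-- the "nilpotent part" of Q -/
def Qn (Q : Set V) : Set V := {α | α ∈ Q ∧ -α ∉ Q}

variable {Q : Set V}

theorem Qn_sub (hQ : IsParabolicSet R Q) : Qn Q ⊆ R := fun _ h => hQ.1 h.1

theorem Qn_add (hR : IsRootSys R) (hQ : IsParabolicSet R Q) {γ β : V} (hγ : γ ∈ Qn Q)
    (hβ : β ∈ Q) (hs : γ + β ∈ R) : γ + β ∈ Qn Q := by
  refine ⟨hQ.2.1 γ hγ.1 β hβ hs, fun hneg => ?_⟩
  have hng : -γ ∈ R := neg_mem hR (hQ.1 hγ.1)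
  have heq : β + -(γ + β) = -γ := by module
  have h2 : β + -(γ + β) ∈ Q := hQ.2.1 β hβ _ hneg (heq ▸ hng)
  exact hγ.2 (heq ▸ h2)

theorem Qn_pair_add (hR : IsRootSys R) (hQ : IsParabolicSet R Q) {γ β : V} (hγ : γ ∈ Qn Q)
    (hβ : β ∈ Qn Q) (hin : ⟪γ, β⟫ < 0) : γ + β ∈ Qn Q := by
  have hne : β ≠ -γ := fun h => hγ.2 (h ▸ hβ.1)
  exact Qn_add hR hQ hγ hβ.1 (add_mem_of_inner_neg hR (hQ.1 hγ.1) (hQ.1 hβ.1) hne hin)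

theorem inner_list_sum (x : V) (l : List V) : ⟪x, l.sum⟫ = (l.map fun y => ⟪x, y⟫).sum := by
  induction l with
  | nil => simp
  | cons a t ih => simp [inner_add_right, ih]

/-- no nonempty list of elements of `Qn Q` sums to zero -/
theorem zerosumfree (hR : IsRootSys R) (hQ : IsParabolicSet R Q) :
    ∀ (n : ℕ) (l : List V), l.length ≤ n → (∀ β ∈ l, β ∈ Qn Q) → l.sum = 0 → l = [] := by
  classical
  intro n
  induction n with
  | zero => intro l hl _ _; exact List.length_eq_zero_iff.1 (Nat.le_zero.1 hl)
  | succ n ih =>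
    intro l hl hmem hsum
    match l with
    | [] => rfl
    | γ₁ :: rest =>
      exfalso
      have hγ₁ : γ₁ ∈ Qn Q := hmem _ (by simp)
      have hγ₁R : γ₁ ∈ R := Qn_sub hQ hγ₁
      have hrs : rest.sum = -γ₁ := by
        have h := hsum; simp only [List.sum_cons] at h
        linear_combination (norm := module) h
      have hin : (rest.map fun y => ⟪γ₁, y⟫).sum < 0 := by
        rw [← inner_list_sum, hrs, inner_neg_right]
        have := inner_self_pos' hR hγ₁R
        linarith
      have hex : ∃ γ₂ ∈ rest, ⟪γ₁, γ₂⟫ < 0 := by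
        by_contra hc
        push_neg at hc
        have : (0:ℝ) ≤ (rest.map fun y => ⟪γ₁, y⟫).sum := by
          apply List.sum_nonneg
          intro x hx
          obtain ⟨y, hy, rfl⟩ := List.mem_map.1 hx
          exact hc y hy
        linarith
      obtain ⟨γ₂, hγ₂mem, hγ₂in⟩ := hex
      have hγ₂ : γ₂ ∈ Qn Q := hmem _ (by simp [hγ₂mem])
      have hδ : γ₁ + γ₂ ∈ Qn Q := Qn_pair_add hR hQ hγ₁ hγ₂ hγ₂in
      have hperm : (γ₂ :: rest.erase γ₂).Perm rest := (List.perm_cons_erase hγ₂mem).symm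
      have hsum' : ((γ₁ + γ₂) :: rest.erase γ₂).sum = 0 := by
        have h2 : (γ₂ :: rest.erase γ₂).sum = rest.sum := hperm.sum_eq
        simp only [List.sum_cons] at h2 ⊢
        rw [hrs] at h2
        linear_combination (norm := module) h2
      have hlen : ((γ₁ + γ₂) :: rest.erase γ₂).length ≤ n := by
        have h1 : (rest.erase γ₂).length = rest.length - 1 := List.length_erase_of_mem hγ₂mem
        have h2 : 1 ≤ rest.length := List.length_pos_iff.2 (List.ne_nil_of_mem hγ₂mem)
        have h3 : rest.length + 1 ≤ n + 1 := by simpa using hl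
        simp only [List.length_cons, h1]
        omega
      have hmem' : ∀ β ∈ (γ₁ + γ₂) :: rest.erase γ₂, β ∈ Qn Q := by
        intro β hβ
        rcases List.mem_cons.1 hβ with h | h
        · exact h ▸ hδ
        · exact hmem _ (by simp [List.mem_of_mem_erase h])
      have := ih _ hlen hmem' hsum'
      simp at this

/-- sums of nonempty lists in Qn -/
def sumSet (Q : Set V) : Set V :=
  {v | ∃ l : List V, l ≠ [] ∧ (∀ β ∈ l, β ∈ Qn Q) ∧ l.sum = v}

theorem sumSet_add {x y : V} (hx : x ∈ sumSet Q) (hy : y ∈ sumSet Q) : x + y ∈ sumSet Q := by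
  obtain ⟨l1, h1, h2, h3⟩ := hx
  obtain ⟨l2, h4, h5, h6⟩ := hy
  exact ⟨l1 ++ l2, by simp [h1], by
    intro β hβ; rcases List.mem_append.1 hβ with h | h; exacts [h2 _ h, h5 _ h],
    by rw [List.sum_append, h3, h6]⟩

theorem mem_sumSet {γ : V} (hγ : γ ∈ Qn Q) : γ ∈ sumSet Q :=
  ⟨[γ], by simp, by simpa using hγ, by simp⟩

theorem zero_not_mem_sumSet (hR : IsRootSys R) (hQ : IsParabolicSet R Q) :
    (0 : V) ∉ sumSet Q := by
  rintro ⟨l, h1, h2, h3⟩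
  exact h1 (zerosumfree hR hQ l.length l le_rfl h2 h3)

section Ht

variable (hF : (Qn Q).Finite)

noncomputable def htQ (x : V) : ℕ :=
  (hF.toFinset.filter (fun y => x - y ∈ sumSet Q)).card

theorem htQ_le (x : V) : htQ hF x ≤ hF.toFinset.card :=
  Finset.card_filter_le _ _

theorem htQ_lt (hR : IsRootSys R) (hQ : IsParabolicSet R Q) {x γ : V} (hx : x ∈ Qn Q)
    (hγ : γ ∈ Qn Q) : htQ hF x < htQ hF (x + γ) := by
  classical
  apply Finset.card_lt_card
  constructor
  · intro y hy
    rw [Finset.mem_filter] at hy ⊢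
    refine ⟨hy.1, ?_⟩
    have : x + γ - y = (x - y) + γ := by abel
    rw [this]
    exact sumSet_add hy.2 (mem_sumSet hγ)
  · intro hsub
    have hx1 : x ∈ hF.toFinset.filter (fun y => x + γ - y ∈ sumSet Q) := by
      rw [Finset.mem_filter]
      exact ⟨hF.mem_toFinset.2 hx, by simpa using mem_sumSet hγ⟩
    have hx2 := hsub hx1
    rw [Finset.mem_filter] at hx2
    have : x - x ∈ sumSet Q := hx2.2
    rw [sub_self] at this
    exact zero_not_mem_sumSet hR hQ this

/-- the measure of a weight function -/
noncomputable def Mw (w : V → ℝ) : ℕ :=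
  ∑ y ∈ hF.toFinset.filter (fun y => w y ≠ 0),
    (3 * hF.toFinset.card + 3 - htQ hF y)

theorem zs (hR : IsRootSys R) (hQ : IsParabolicSet R Q) :
    ∀ (N : ℕ) (w : V → ℝ), Mw hF w ≤ N → (∀ y ∈ Qn Q, 0 ≤ w y) →
      (∑ y ∈ hF.toFinset, w y • y) = 0 → ∀ y ∈ Qn Q, w y = 0 := by
  classical
  intro N
  induction N using Nat.strong_induction_on with
  | _ N ih =>
  intro w hM hnn hsum
  by_contra hc
  push_neg at hc
  obtain ⟨γ₁, hγ₁Qn, hγ₁ne⟩ := hc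
  have hγ₁pos : 0 < w γ₁ := lt_of_le_of_ne (hnn _ hγ₁Qn) (Ne.symm hγ₁ne)
  have hγ₁F : γ₁ ∈ hF.toFinset := hF.mem_toFinset.2 hγ₁Qn
  -- find γ₂ with negative inner product
  have hzero : (0:ℝ) = ∑ y ∈ hF.toFinset, w y * ⟪γ₁, y⟫ := by
    have := congrArg (fun v => ⟪γ₁, v⟫) hsum
    simp only [inner_zero_right] at this
    rw [← this, inner_sum]
    congr 1
    ext y
    rw [real_inner_smul_right]
  have hsplit : w γ₁ * ⟪γ₁, γ₁⟫ + ∑ y ∈ hF.toFinset.erase γ₁, w y * ⟪γ₁, y⟫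
      = ∑ y ∈ hF.toFinset, w y * ⟪γ₁, y⟫ :=
    Finset.add_sum_erase _ (fun y => w y * ⟪γ₁, y⟫) hγ₁F
  have hneg : ∑ y ∈ hF.toFinset.erase γ₁, w y * ⟪γ₁, y⟫ < 0 := by
    have := inner_self_pos' hR (Qn_sub hQ hγ₁Qn)
    nlinarith
  have hex : ∃ γ₂ ∈ hF.toFinset.erase γ₁, w γ₂ * ⟪γ₁, γ₂⟫ < 0 := by
    by_contra hcc
    push_neg at hcc
    have : (0:ℝ) ≤ ∑ y ∈ hF.toFinset.erase γ₁, w y * ⟪γ₁, y⟫ :=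
      Finset.sum_nonneg hcc
    linarith
  obtain ⟨γ₂, hγ₂er, hγ₂neg⟩ := hex
  have hγ₂ne : γ₂ ≠ γ₁ := (Finset.mem_erase.1 hγ₂er).1
  have hγ₂Qn : γ₂ ∈ Qn Q := hF.mem_toFinset.1 (Finset.mem_erase.1 hγ₂er).2
  have hwγ₂pos : 0 < w γ₂ := by
    rcases lt_or_eq_of_le (hnn _ hγ₂Qn) with h | h
    · exact h
    · exfalso; rw [← h] at hγ₂neg; simp at hγ₂neg
  have hinneg : ⟪γ₁, γ₂⟫ < 0 := by nlinarith
  -- the symmetric key step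
  have key : ∀ γa γb : V, γa ∈ Qn Q → γb ∈ Qn Q → γa ≠ γb → ⟪γa, γb⟫ < 0 →
      0 < w γa → w γa ≤ w γb → False := by
    intro γa γb haQn hbQn hab hinab hwa hwab
    set μ := w γa with hμ
    set δ := γa + γb with hδdef
    have hδQn : δ ∈ Qn Q := Qn_pair_add hR hQ haQn hbQn hinab
    have hδF : δ ∈ hF.toFinset := hF.mem_toFinset.2 hδQn
    have haF : γa ∈ hF.toFinset := hF.mem_toFinset.2 haQn
    have hbF : γb ∈ hF.toFinset := hF.mem_toFinset.2 hbQn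
    have hbne0 : γb ≠ 0 := ne_zero hR (Qn_sub hQ hbQn)
    have hane0 : γa ≠ 0 := ne_zero hR (Qn_sub hQ haQn)
    have hδa : δ ≠ γa := by
      intro h; apply hbne0; rw [hδdef] at h; linear_combination (norm := module) h
    have hδb : δ ≠ γb := by
      intro h; apply hane0; rw [hδdef] at h; linear_combination (norm := module) h
    set w' : V → ℝ := fun y => w y + (if y = δ then μ else 0) - (if y = γa then μ else 0)
      - (if y = γb then μ else 0) with hw'
    have haδ : γa ≠ δ := fun h => hδa h.symm
    have hbδ : γb ≠ δ := fun h => hδb h.symm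
    have hba : γb ≠ γa := fun h => hab h.symm
    have hw'δ : w' δ = w δ + μ := by
      simp only [hw']
      simp [hδa, hδb]
    have hw'a : w' γa = 0 := by
      simp only [hw']
      simp [haδ, hab, hμ]
    have hw'b : w' γb = w γb - μ := by
      simp only [hw']
      simp [hbδ, hba]
    have hw'other : ∀ y, y ≠ δ → y ≠ γa → y ≠ γb → w' y = w y := by
      intro y h1 h2 h3
      simp only [hw', if_neg h1, if_neg h2, if_neg h3]; ring
    -- nonnegativity
    have hnn' : ∀ y ∈ Qn Q, 0 ≤ w' y := by
      intro y hy
      by_cases h1 : y = δ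
      · rw [h1, hw'δ]; have := hnn δ hδQn; linarith
      by_cases h2 : y = γa
      · rw [h2, hw'a]
      by_cases h3 : y = γb
      · rw [h3, hw'b]; linarith
      · rw [hw'other y h1 h2 h3]; exact hnn y hy
    -- sum is zero
    have hsum' : (∑ y ∈ hF.toFinset, w' y • y) = 0 := by
      have expand : ∀ y : V, w' y • y = w y • y + (if y = δ then μ • y else 0)
          - (if y = γa then μ • y else 0) - (if y = γb then μ • y else 0) := by
        intro y
        simp only [hw']
        by_cases h1 : y = δ <;> by_cases h2 : y = γa <;> by_cases h3 : y = γb <;>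
          simp [h1, h2, h3, add_smul, sub_smul] <;> module
      simp only [expand]
      rw [Finset.sum_sub_distrib, Finset.sum_sub_distrib, Finset.sum_add_distrib]
      rw [Finset.sum_ite_eq' hF.toFinset δ (fun y => μ • y),
        Finset.sum_ite_eq' hF.toFinset γa (fun y => μ • y),
        Finset.sum_ite_eq' hF.toFinset γb (fun y => μ • y)]
      rw [if_pos hδF, if_pos haF, if_pos hbF, hsum, hδdef]
      module
    -- measure decreases
    have hMlt : Mw hF w' < Mw hF w := by
      set B := hF.toFinset.card with hB
      set term : V → ℕ := fun y => 3 * B + 3 - htQ hF y with hterm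
      have hterm_pos : ∀ y, 1 ≤ term y := by
        intro y
        have := htQ_le hF y
        simp only [hterm]
        omega
      have htlt : htQ hF γa < htQ hF δ := htQ_lt hF hR hQ haQn hbQn
      have htle : htQ hF δ ≤ B := htQ_le hF δ
      have htermlt : term δ + 1 ≤ term γa := by
        simp only [hterm]
        have := htQ_le hF γa
        omega
      have hsupp : hF.toFinset.filter (fun y => w' y ≠ 0) ⊆
          insert δ ((hF.toFinset.filter (fun y => w y ≠ 0)).erase γa) := by
        intro y hy
        rw [Finset.mem_filter] at hy
        by_cases h1 : y = δ
        · simp [h1]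
        rw [Finset.mem_insert]
        right
        rw [Finset.mem_erase, Finset.mem_filter]
        by_cases h2 : y = γa
        · exfalso; rw [h2, hw'a] at hy; exact hy.2 rfl
        by_cases h3 : y = γb
        · subst h3
          refine ⟨h2, hy.1, ?_⟩
          have : w y ≥ μ := hwab
          intro h0
          rw [h0] at this
          linarith
        · rw [hw'other y h1 h2 h3] at hy
          exact ⟨h2, hy.1, hy.2⟩
      have hγaS : γa ∈ hF.toFinset.filter (fun y => w y ≠ 0) := by
        rw [Finset.mem_filter]; exact ⟨haF, ne_of_gt hwa⟩
      calc Mw hF w' ≤ ∑ y ∈ insert δ ((hF.toFinset.filter (fun y => w y ≠ 0)).erase γa),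
            term y := Finset.sum_le_sum_of_subset hsupp
        _ ≤ term δ + ∑ y ∈ (hF.toFinset.filter (fun y => w y ≠ 0)).erase γa, term y := by
            by_cases hδs : δ ∈ (hF.toFinset.filter (fun y => w y ≠ 0)).erase γa
            · rw [Finset.insert_eq_self.2 hδs]
              exact Nat.le_add_left _ _
            · rw [Finset.sum_insert hδs]
        _ < term γa + ∑ y ∈ (hF.toFinset.filter (fun y => w y ≠ 0)).erase γa, term y := by
            omega
        _ = Mw hF w := Finset.add_sum_erase _ _ hγaS
    -- apply induction hypothesis
    have hall := ih (Mw hF w') (lt_of_lt_of_le hMlt hM) w' le_rfl hnn' hsum'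
    have : w' δ = 0 := hall δ hδQn
    rw [hw'δ] at this
    have := hnn δ hδQn
    linarith
  rcases le_total (w γ₁) (w γ₂) with h | h
  · exact key γ₁ γ₂ hγ₁Qn hγ₂Qn (Ne.symm hγ₂ne) hinneg hγ₁pos h
  · exact key γ₂ γ₁ hγ₂Qn hγ₁Qn hγ₂ne (by rwa [real_inner_comm]) hwγ₂pos h

end Ht

theorem zero_not_mem_hull (hR : IsRootSys R) (hQ : IsParabolicSet R Q) :
    (0 : V) ∉ convexHull ℝ (Qn Q) := by
  classical
  have hF : (Qn Q).Finite := hR.1.subset (Qn_sub hQ)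
  rw [← hF.coe_toFinset]
  intro h
  rw [Finset.mem_convexHull'] at h
  obtain ⟨w, hnn, hone, hzero⟩ := h
  have hZ := zs hF hR hQ (Mw hF w) w le_rfl
    (fun y hy => hnn y (hF.mem_toFinset.2 hy)) hzero
  have : ∑ y ∈ hF.toFinset, w y = 0 := by
    apply Finset.sum_eq_zero
    intro y hy
    exact hZ y (hF.mem_toFinset.1 hy)
  rw [hone] at this
  exact one_ne_zero this



/-- a vector not orthogonal to any member of a finite set avoiding `0` -/
theorem exists_generic : ∀ (s : Set V), s.Finite → (0:V) ∉ s →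
    ∃ u : V, ∀ α ∈ s, ⟪u, α⟫ ≠ 0 := by
  intro s hs
  refine Set.Finite.induction_on s hs (fun _ => ⟨0, by simp⟩) ?_
  intro a s' ha hs' ih h0
  · 
    obtain ⟨u, hu⟩ := ih (fun h => h0 (Set.mem_insert_of_mem _ h))
    have hane : a ≠ 0 := fun h => h0 (h ▸ Set.mem_insert _ _)
    by_cases hua : ⟪u, a⟫ ≠ 0
    · refine ⟨u, fun α hα => ?_⟩
      rcases Set.mem_insert_iff.1 hα with rfl | hmem
      exacts [hua, hu _ hmem]
    · -- perturb
      push_neg at hua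
      have hbad : {t : ℝ | ∃ β ∈ s', ⟪u, β⟫ + t * ⟪a, β⟫ = 0}.Finite := by
        apply (hs'.image (fun β => -⟪u, β⟫ / ⟪a, β⟫)).subset
        rintro t ⟨β, hβ, hteq⟩
        have hab : ⟪a, β⟫ ≠ 0 := by
          intro h
          rw [h, mul_zero, add_zero] at hteq
          exact hu _ hβ hteq
        exact ⟨β, hβ, by field_simp; linarith⟩
      obtain ⟨t, ht⟩ := ((hbad.union (Set.finite_singleton 0)).infinite_compl).nonempty
      rw [Set.mem_compl_iff, Set.mem_union, not_or] at ht
      obtain ⟨htb, ht0⟩ := ht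
      refine ⟨u + t • a, fun α hα => ?_⟩
      rcases Set.mem_insert_iff.1 hα with rfl | hmem
      · rw [inner_add_left, real_inner_smul_left, hua, zero_add]
        have : 0 < ⟪α, α⟫ := by
          rw [real_inner_self_eq_norm_sq]
          exact pow_pos (norm_pos_iff.mpr hane) 2
        have ht0' : t ≠ 0 := by simpa using ht0
        positivity
      · rw [inner_add_left, real_inner_smul_left]
        intro h
        exact htb ⟨α, hmem, h⟩

/-- the separating generic linear functional -/
theorem exists_functional (hR : IsRootSys R) (hQ : IsParabolicSet R Q) :
    ∃ g : V →ₗ[ℝ] ℝ, (∀ γ ∈ Qn Q, 0 < g γ) ∧ (∀ α ∈ R, g α ≠ 0) := by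
  classical
  have hF : (Qn Q).Finite := hR.1.subset (Qn_sub hQ)
  obtain ⟨f, c, hf0, hfp⟩ := geometric_hahn_banach_point_closed
    (convex_convexHull ℝ (Qn Q)) (hF.isCompact_convexHull ℝ).isClosed
    (zero_not_mem_hull hR hQ)
  rw [map_zero] at hf0
  have hfQn : ∀ γ ∈ Qn Q, c < f γ := fun γ hγ => hfp γ (subset_convexHull ℝ _ hγ)
  obtain ⟨u, hu⟩ := exists_generic R hR.1 hR.2.1
  -- a threshold below which positivity on Qn persists
  have hthr : ∀ (s : Set V), s.Finite → s ⊆ Qn Q →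
      ∃ t0 : ℝ, 0 < t0 ∧ ∀ γ ∈ s, ∀ t : ℝ, 0 < t → t < t0 → 0 < f γ + t * ⟪u, γ⟫ := by
    intro s hsf
    refine Set.Finite.induction_on s hsf (fun _ => ⟨1, one_pos, by simp⟩) ?_
    intro a s' ha hs' ih hsub
    · 
      obtain ⟨t1, ht1, ht1p⟩ := ih (fun x hx => hsub (Set.mem_insert_of_mem _ hx))
      have hfa : 0 < f a := lt_trans hf0 (hfQn a (hsub (Set.mem_insert _ _)))
      set ta : ℝ := if h : ⟪u, a⟫ < 0 then f a / (-⟪u, a⟫) else 1 with hta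
      have htapos : 0 < ta := by
        rw [hta]
        split
        · next h => exact div_pos hfa (by linarith)
        · exact one_pos
      refine ⟨min t1 ta, lt_min ht1 htapos, ?_⟩
      intro γ hγ t htpos htlt
      rcases Set.mem_insert_iff.1 hγ with rfl | hmem
      · by_cases h : ⟪u, γ⟫ < 0
        · have hlt : t < ta := lt_of_lt_of_le htlt (min_le_right _ _)
          rw [hta, dif_pos h] at hlt
          rw [lt_div_iff₀ (by linarith)] at hlt
          nlinarith
        · push_neg at h
          nlinarith
      · exact ht1p γ hmem t htpos (lt_of_lt_of_le htlt (min_le_left _ _))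
  obtain ⟨t0, ht0, ht0p⟩ := hthr (Qn Q) hF le_rfl.subset
  -- avoid the finitely many zeros on R
  have hbad : {t : ℝ | ∃ α ∈ R, f α + t * ⟪u, α⟫ = 0}.Finite := by
    apply (hR.1.image (fun α => -(f α) / ⟪u, α⟫)).subset
    rintro t ⟨α, hα, hteq⟩
    refine ⟨α, hα, ?_⟩
    have := hu α hα
    field_simp
    linarith
  have : (Set.Ioo (0:ℝ) t0 \ {t : ℝ | ∃ α ∈ R, f α + t * ⟪u, α⟫ = 0}).Nonempty :=
    ((Set.Ioo_infinite ht0).diff hbad).nonempty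
  obtain ⟨t, htIoo, htgood⟩ := this
  refine ⟨{ toFun := fun v => f v + t * ⟪u, v⟫,
            map_add' := by
              intro x y
              show f (x + y) + t * ⟪u, x + y⟫ = (f x + t * ⟪u, x⟫) + (f y + t * ⟪u, y⟫)
              rw [map_add, inner_add_right]; ring,
            map_smul' := by
              intro m x
              show f (m • x) + t * ⟪u, m • x⟫ = m * (f x + t * ⟪u, x⟫)
              rw [map_smul, real_inner_smul_right]; simp [smul_eq_mul]; ring }, ?_, ?_⟩
  · intro γ hγ
    exact ht0p γ hγ t htIoo.1 htIoo.2
  · intro α hα h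
    exact htgood ⟨α, hα, h⟩

section PosSystem

variable (R : Set V) (g : V →ₗ[ℝ] ℝ)

/-- positive roots -/
def Pos : Set V := {α | α ∈ R ∧ 0 < g α}

/-- indecomposable positive roots -/
def Ind : Set V := {δ | δ ∈ Pos R g ∧ ¬∃ β ∈ Pos R g, ∃ γ ∈ Pos R g, δ = β + γ}

end PosSystem

variable {g : V →ₗ[ℝ] ℝ}

theorem pos_or_neg_pos (hR : IsRootSys R) (hg : ∀ α ∈ R, g α ≠ 0) {α : V} (hα : α ∈ R) :
    α ∈ Pos R g ∨ -α ∈ Pos R g := by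
  rcases lt_or_gt_of_ne (hg α hα) with h | h
  · right
    exact ⟨neg_mem hR hα, by simpa using h⟩
  · left; exact ⟨hα, h⟩

noncomputable def mPos (hR : IsRootSys R) (α : V) : ℕ :=
  (hR.1.toFinset.filter (fun β => 0 < g β ∧ g β < g α)).card

theorem mPos_lt (hR : IsRootSys R) {α β : V} (hβ : β ∈ Pos R g) (hlt : g β < g α) :
    mPos (g := g) hR β < mPos (g := g) hR α := by
  apply Finset.card_lt_card
  constructor
  · intro y hy
    rw [Finset.mem_filter] at hy ⊢
    exact ⟨hy.1, hy.2.1, lt_trans hy.2.2 hlt⟩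
  · intro hsub
    have h1 : β ∈ hR.1.toFinset.filter (fun y => 0 < g y ∧ g y < g α) := by
      rw [Finset.mem_filter]
      exact ⟨hR.1.mem_toFinset.2 hβ.1, hβ.2, hlt⟩
    have h2 := hsub h1
    rw [Finset.mem_filter] at h2
    exact lt_irrefl _ h2.2.2

/-- every positive root decomposes into indecomposables -/
theorem pos_decomp (hR : IsRootSys R) :
    ∀ (N : ℕ) (α : V), α ∈ Pos R g → mPos (g := g) hR α ≤ N →
      ∃ l : List V, l ≠ [] ∧ (∀ δ ∈ l, δ ∈ Ind R g) ∧ l.sum = α := by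
  intro N
  induction N using Nat.strong_induction_on with
  | _ N ih =>
  intro α hα hm
  by_cases hind : α ∈ Ind R g
  · exact ⟨[α], by simp, by simpa using hind, by simp⟩
  · have : ∃ β ∈ Pos R g, ∃ γ ∈ Pos R g, α = β + γ := by
      by_contra hc
      exact hind ⟨hα, hc⟩
    obtain ⟨β, hβ, γ, hγ, hsum⟩ := this
    have hgα : g α = g β + g γ := by rw [hsum, map_add]
    have hβlt : g β < g α := by have := hγ.2; linarith
    have hγlt : g γ < g α := by have := hβ.2; linarith
    have hmβ := mPos_lt hR hβ hβlt
    have hmγ := mPos_lt hR hγ hγlt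
    obtain ⟨l1, hl1ne, hl1mem, hl1sum⟩ :=
      ih (mPos (g := g) hR β) (lt_of_lt_of_le hmβ hm) β hβ le_rfl
    obtain ⟨l2, hl2ne, hl2mem, hl2sum⟩ :=
      ih (mPos (g := g) hR γ) (lt_of_lt_of_le hmγ hm) γ hγ le_rfl
    refine ⟨l1 ++ l2, by simp [hl1ne], ?_, by rw [List.sum_append, hl1sum, hl2sum, hsum]⟩
    intro δ hδ
    rcases List.mem_append.1 hδ with h | h
    exacts [hl1mem _ h, hl2mem _ h]

/-- distinct indecomposables are obtuse -/
theorem ind_obtuse (hR : IsRootSys R) (hg : ∀ α ∈ R, g α ≠ 0) {δ δ' : V} (hδ : δ ∈ Ind R g)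
    (hδ' : δ' ∈ Ind R g) (hne : δ ≠ δ') : ⟪δ, δ'⟫ ≤ 0 := by
  by_contra hc
  push_neg at hc
  have hsub : δ - δ' ∈ R := sub_mem_of_inner_pos hR hδ.1.1 hδ'.1.1 (Ne.symm hne) hc
  rcases lt_or_gt_of_ne (hg _ hsub) with h | h
  · -- δ' - δ positive
    have hmem : δ' - δ ∈ Pos R g := by
      refine ⟨?_, ?_⟩
      · have := neg_mem hR hsub; simpa using this
      · have : g (δ' - δ) = -(g (δ - δ')) := by
          rw [← map_neg]; congr 1; abel
        rw [this]; linarith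
    exact hδ'.2 ⟨δ' - δ, hmem, δ, hδ.1, by abel⟩
  · have hmem : δ - δ' ∈ Pos R g := ⟨hsub, h⟩
    exact hδ.2 ⟨δ - δ', hmem, δ', hδ'.1, by abel⟩

/-- the indecomposables are linearly independent -/
theorem ind_linearIndependent (hR : IsRootSys R) (hg : ∀ α ∈ R, g α ≠ 0) :
    LinearIndependent ℝ ((↑) : Ind R g → V) := by
  rw [linearIndependent_iff']
  intro s c hsum i hi
  set cp : Ind R g → ℝ := fun j => max (c j) 0 with hcp
  set cm : Ind R g → ℝ := fun j => max (-c j) 0 with hcm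
  have hsplit : ∀ j, cp j - cm j = c j := by
    intro j
    simp only [hcp, hcm]
    rcases le_total (c j) 0 with h | h
    · rw [max_eq_right h, max_eq_left (by linarith)]; ring
    · rw [max_eq_left h, max_eq_right (by linarith)]; ring
  set u : V := ∑ j ∈ s, cp j • (j : V) with hu
  set u' : V := ∑ j ∈ s, cm j • (j : V) with hu'
  have huu' : u = u' := by
    have h0 : u - u' = 0 := by
      rw [hu, hu', ← Finset.sum_sub_distrib, ← hsum]
      apply Finset.sum_congr rfl
      intro j _
      rw [← sub_smul, hsplit]
    exact sub_eq_zero.1 h0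
  have hcpnn : ∀ j, 0 ≤ cp j := fun j => le_max_right _ _
  have hcmnn : ∀ j, 0 ≤ cm j := fun j => le_max_right _ _
  have hdiag : ∀ j, cp j * cm j = 0 := by
    intro j
    simp only [hcp, hcm]
    rcases le_total (c j) 0 with h | h
    · rw [max_eq_right h]; ring
    · rw [max_eq_right (a := -c j) (by linarith)]; ring
  have hinner : ⟪u, u'⟫ ≤ 0 := by
    rw [hu, hu', sum_inner]
    apply Finset.sum_nonpos
    intro j _
    rw [real_inner_smul_left, inner_sum, Finset.mul_sum]
    apply Finset.sum_nonpos
    intro k _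
    rw [real_inner_smul_right]
    by_cases hjk : j = k
    · subst hjk
      rcases mul_eq_zero.1 (hdiag j) with h | h
      · rw [h, zero_mul]
      · rw [h, zero_mul, mul_zero]
    · have hobtuse : ⟪(j : V), (k : V)⟫ ≤ 0 :=
        ind_obtuse hR hg j.2 k.2 (fun h => hjk (Subtype.coe_injective h))
      exact mul_nonpos_iff.2
        (Or.inl ⟨hcpnn j, mul_nonpos_iff.2 (Or.inl ⟨hcmnn k, hobtuse⟩)⟩)
  have hu0 : u = 0 := by
    have h1 : ⟪u, u⟫ ≤ 0 := by
      have he : ⟪u, u⟫ = ⟪u, u'⟫ := by rw [huu']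
      rw [he]; exact hinner
    have h2 : 0 ≤ ⟪u, u⟫ := real_inner_self_nonneg
    rw [← inner_self_eq_zero (𝕜 := ℝ)]
    linarith
  have hu'0 : u' = 0 := huu' ▸ hu0
  -- apply g : all cp vanish on s
  have hgpos : ∀ j : Ind R g, 0 < g (j : V) := fun j => j.2.1.2
  have hcpz : ∀ j ∈ s, cp j = 0 := by
    have hgu : ∑ j ∈ s, cp j * g (j : V) = 0 := by
      have := congrArg g hu0
      rw [map_sum, map_zero] at this
      simpa [map_smul, smul_eq_mul] using this
    intro j hj
    have hterm := (Finset.sum_eq_zero_iff_of_nonneg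
      (fun k _ => mul_nonneg (hcpnn k) (le_of_lt (hgpos k)))).1 hgu j hj
    rcases mul_eq_zero.1 hterm with h | h
    · exact h
    · exact absurd h (ne_of_gt (hgpos j))
  have hcmz : ∀ j ∈ s, cm j = 0 := by
    have hgu : ∑ j ∈ s, cm j * g (j : V) = 0 := by
      have := congrArg g hu'0
      rw [map_sum, map_zero] at this
      simpa [map_smul, smul_eq_mul] using this
    intro j hj
    have hterm := (Finset.sum_eq_zero_iff_of_nonneg
      (fun k _ => mul_nonneg (hcmnn k) (le_of_lt (hgpos k)))).1 hgu j hj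
    rcases mul_eq_zero.1 hterm with h | h
    · exact h
    · exact absurd h (ne_of_gt (hgpos j))
  have := hsplit i
  rw [hcpz i hi, hcmz i hi] at this
  linarith [this.symm]

/-- a linear functional with prescribed values on the indecomposables -/
theorem exists_F (hR : IsRootSys R) (hg : ∀ α ∈ R, g α ≠ 0) (τ : V → ℝ) :
    ∃ F : V →ₗ[ℝ] ℝ, ∀ δ ∈ Ind R g, F δ = τ δ := by
  classical
  have hli : LinearIndepOn ℝ id (Ind R g) := ind_linearIndependent hR hg
  refine ⟨(Module.Basis.extend hli).constr ℝ (fun i => τ (i : V)), ?_⟩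
  intro δ hδ
  have hmem : δ ∈ hli.extend (Set.subset_univ _) := hli.subset_extend _ hδ
  have hB : (Module.Basis.extend hli) ⟨δ, hmem⟩ = δ := Module.Basis.extend_apply_self hli ⟨δ, hmem⟩
  conv_lhs => rw [← hB]
  rw [Module.Basis.constr_basis]



theorem pos_decomp' (hR : IsRootSys R) {g : V →ₗ[ℝ] ℝ} {α : V} (hα : α ∈ Pos R g) :
    ∃ l : List V, l ≠ [] ∧ (∀ δ ∈ l, δ ∈ Ind R g) ∧ l.sum = α :=
  pos_decomp hR (mPos (g := g) hR α) α hα le_rfl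

/- ---------- list helpers ---------- -/

theorem lsum_nonpos {l : List ℝ} (h : ∀ x ∈ l, x ≤ 0) : l.sum ≤ 0 := by
  induction l with
  | nil => simp
  | cons a t ih =>
    simp only [List.sum_cons]
    have := h a (by simp)
    have := ih (fun x hx => h x (by simp [hx]))
    linarith

theorem lsum_le_of_mem {l : List ℝ} (h : ∀ x ∈ l, x ≤ 0) {z : ℝ} (hz : z ∈ l) :
    l.sum ≤ z := by
  induction l with
  | nil => simp at hz
  | cons a t ih =>
    simp only [List.sum_cons]
    rcases List.mem_cons.1 hz with rfl | hmem
    · have : t.sum ≤ 0 := lsum_nonpos (fun y hy => h y (List.mem_cons_of_mem _ hy))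
      linarith
    · have h1 := h a (by simp)
      have := ih (fun y hy => h y (List.mem_cons_of_mem _ hy)) hmem
      linarith

theorem lsum_exists_neg {l : List ℝ} (h : l.sum < 0) : ∃ x ∈ l, x < 0 := by
  by_contra hc
  push_neg at hc
  have : (0:ℝ) ≤ l.sum := List.sum_nonneg hc
  linarith

theorem lsum_exists_pos {l : List ℝ} (h : 0 < l.sum) : ∃ x ∈ l, 0 < x := by
  by_contra hc
  push_neg at hc
  have := lsum_nonpos hc
  linarith

theorem lsum_pos {l : List ℝ} (h : ∀ x ∈ l, 0 < x) (hne : l ≠ []) : 0 < l.sum := by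
  match l with
  | [] => exact absurd rfl hne
  | a :: t =>
    simp only [List.sum_cons]
    have h1 := h a (by simp)
    have h2 : (0:ℝ) ≤ t.sum := List.sum_nonneg (fun x hx => le_of_lt (h x (by simp [hx])))
    linarith

theorem lsum_nat {l : List ℝ} (h : ∀ x ∈ l, x = 0 ∨ x = 1) : ∃ n : ℕ, l.sum = n := by
  induction l with
  | nil => exact ⟨0, by simp⟩
  | cons a t ih =>
    obtain ⟨n, hn⟩ := ih (fun x hx => h x (by simp [hx]))
    rcases h a (by simp) with h0 | h1
    · exact ⟨n, by simp [h0, hn]⟩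
    · exact ⟨n + 1, by simp [h1, hn]; push_cast; ring⟩

theorem lsum_all_zero {l : List ℝ} (h : ∀ x ∈ l, 0 ≤ x) (hs : l.sum ≤ 0) :
    ∀ x ∈ l, x = 0 := by
  induction l with
  | nil => simp
  | cons a t ih =>
    simp only [List.sum_cons] at hs
    have h1 := h a (by simp)
    have h2 : (0:ℝ) ≤ t.sum := List.sum_nonneg (fun x hx => h x (by simp [hx]))
    intro x hx
    rcases List.mem_cons.1 hx with rfl | hmem
    · linarith
    · exact ih (fun y hy => h y (by simp [hy])) (by linarith) x hmem

theorem lsum_map_neg (l : List V) : (l.map (fun x : V => -x)).sum = -l.sum := by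
  induction l with
  | nil => simp
  | cons a t ih => simp [ih]; abel

/- ---------- the reorder lemma ---------- -/

theorem reorder (hR : IsRootSys R) (g : V →ₗ[ℝ] ℝ) :
    ∀ (n : ℕ) (l : List V), l.length ≤ n → l ≠ [] → (∀ β ∈ l, β ∈ R ∧ 0 < g β) →
      l.sum ∈ R →
      ∃ l' : List V, l'.Perm l ∧ ∀ k : ℕ, k < l'.length → (l'.take (k + 1)).sum ∈ R := by
  classical
  intro n
  induction n with
  | zero =>
    intro l hl hne _ _
    exact absurd (List.length_eq_zero_iff.1 (Nat.le_zero.1 hl)) hne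
  | succ n ih =>
    intro L hl hne hmem hsum
    by_cases hsing : L.length = 1
    · match L, hsing with
      | [x], _ =>
        refine ⟨[x], List.Perm.refl _, ?_⟩
        intro k hk
        simp only [List.length_singleton] at hk
        have hk0 : k = 0 := by omega
        subst hk0
        simpa using hsum
    · have hlen2 : 2 ≤ L.length := by
        have : 1 ≤ L.length := List.length_pos_iff.2 hne
        omega
      set σ : V := L.sum with hσ
      have hσpos : 0 < ⟪σ, σ⟫ := inner_self_pos' hR hsum
      have hexβ : ∃ β ∈ L, 0 < ⟪σ, β⟫ := by
        have h1 : 0 < (L.map fun y => ⟪σ, y⟫).sum := by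
          rw [← inner_list_sum]; exact hσpos
        obtain ⟨v, hv, hvpos⟩ := lsum_exists_pos h1
        obtain ⟨β, hβ, rfl⟩ := List.mem_map.1 hv
        exact ⟨β, hβ, hvpos⟩
      obtain ⟨β, hβl, hβin⟩ := hexβ
      have hβR := (hmem β hβl).1
      have hperm : L.Perm (β :: L.erase β) := List.perm_cons_erase hβl
      have hsum_erase : β + (L.erase β).sum = σ := by
        have h := hperm.sum_eq
        rw [hσ, h, List.sum_cons]
      have herasene : L.erase β ≠ [] := by
        intro h
        have hlen := hperm.length_eq
        rw [h] at hlen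
        simp at hlen
        omega
      have hgpos_erase : 0 < g ((L.erase β).sum) := by
        rw [map_list_sum]
        apply lsum_pos
        · intro v hv
          obtain ⟨w, hw, rfl⟩ := List.mem_map.1 hv
          exact (hmem w (List.mem_of_mem_erase hw)).2
        · simpa using herasene
      have hβneσ : β ≠ σ := by
        intro h
        have h0 : (L.erase β).sum = 0 := by
          rw [h] at hsum_erase ⊢
          linear_combination (norm := module) hsum_erase
        rw [h0] at hgpos_erase
        simp at hgpos_erase
      have hsubR : σ - β ∈ R := sub_mem_of_inner_pos hR hsum hβR hβneσ hβin
      have herasesum : (L.erase β).sum = σ - β := by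
        linear_combination (norm := module) hsum_erase
      have heraselen : (L.erase β).length ≤ n := by
        have h1 := List.length_erase_of_mem hβl
        omega
      obtain ⟨l'', hl''perm, hl''take⟩ := ih (L.erase β) heraselen herasene
        (fun v hv => hmem v (List.mem_of_mem_erase hv)) (herasesum ▸ hsubR)
      refine ⟨l'' ++ [β], ?_, ?_⟩
      · have p1 : (l'' ++ [β]).Perm (β :: l'') := List.perm_append_singleton _ _
        have p2 : (β :: l'').Perm (β :: L.erase β) := hl''perm.cons β
        exact p1.trans (p2.trans hperm.symm)
      · intro k hk
        rw [List.length_append, List.length_singleton] at hk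
        by_cases hkl : k < l''.length
        · rw [List.take_append_of_le_length (by omega)]
          exact hl''take k hkl
        · have htk : (l'' ++ [β]).take (k + 1) = l'' ++ [β] := by
            apply List.take_of_length_le
            rw [List.length_append, List.length_singleton]
            omega
          rw [htk, List.sum_append]
          have hs'' : l''.sum = σ - β := by rw [hl''perm.sum_eq, herasesum]
          rw [hs'']
          simpa using hsum

/- ---------- sums of lists of elements of Q ---------- -/

/-- a nonempty list of elements of `Q` whose partial sums are roots sums into `Q`;
if moreover some element lies in `Qn Q`, the sum lies in `Qn Q`. -/
theorem listQ_sum (hR : IsRootSys R) (hQ : IsParabolicSet R Q) :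
    ∀ (l : List V), l ≠ [] → (∀ β ∈ l, β ∈ Q) →
      (∀ k : ℕ, k < l.length → (l.take (k + 1)).sum ∈ R) →
      l.sum ∈ Q ∧ (∀ δ ∈ l, δ ∈ Qn Q → l.sum ∈ Qn Q) := by
  intro l
  induction l using List.reverseRecOn with
  | nil => intro h; exact absurd rfl h
  | append_singleton l₀ β ih =>
    intro _ hmem htake
    by_cases h0 : l₀ = []
    · subst h0
      constructor
      · simpa using hmem β (by simp)
      · intro δ hδ hδQn
        simp only [List.nil_append, List.mem_singleton] at hδ
        subst hδ
        simpa using hδQn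
    · have hlen0 : 1 ≤ l₀.length := List.length_pos_iff.2 h0
      have htake₀ : ∀ k : ℕ, k < l₀.length → (l₀.take (k + 1)).sum ∈ R := by
        intro k hk
        have := htake k (by rw [List.length_append, List.length_singleton]; omega)
        rwa [List.take_append_of_le_length (by omega)] at this
      have hmem₀ : ∀ β ∈ l₀, β ∈ Q := fun γ hγ => hmem γ (by simp [hγ])
      obtain ⟨hsum₀Q, hQn₀⟩ := ih h0 hmem₀ htake₀
      have hsum₀R : l₀.sum ∈ R := by
        have := htake₀ (l₀.length - 1) (by omega)
        rwa [show l₀.length - 1 + 1 = l₀.length by omega, List.take_length] at this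
      have hfullR : (l₀ ++ [β]).sum ∈ R := by
        have := htake ((l₀ ++ [β]).length - 1) (by
          rw [List.length_append, List.length_singleton]; omega)
        rwa [show (l₀ ++ [β]).length - 1 + 1 = (l₀ ++ [β]).length by
          rw [List.length_append, List.length_singleton]; omega, List.take_length] at this
      have hsum_eq : (l₀ ++ [β]).sum = l₀.sum + β := by rw [List.sum_append]; simp
      have hβQ : β ∈ Q := hmem β (by simp)
      constructor
      · rw [hsum_eq]
        exact hQ.2.1 _ hsum₀Q _ hβQ (hsum_eq ▸ hfullR)
      · intro δ hδ hδQn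
        rcases List.mem_append.1 hδ with h | h
        · have h₀Qn : l₀.sum ∈ Qn Q := hQn₀ δ h hδQn
          rw [hsum_eq]
          exact Qn_add hR hQ h₀Qn hβQ (hsum_eq ▸ hfullR)
        · simp only [List.mem_singleton] at h
          subst h
          have : δ + l₀.sum ∈ Qn Q := by
            apply Qn_add hR hQ hδQn hsum₀Q
            rw [hsum_eq] at hfullR
            convert hfullR using 1
            abel
          rw [hsum_eq]
          convert this using 1
          abel



/-- bundled hypotheses -/
structure Setup (R Q : Set V) (g F : V →ₗ[ℝ] ℝ) : Prop where
  hR : IsRootSys R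
  hQ : IsParabolicSet R Q
  hg1 : ∀ γ ∈ Qn Q, 0 < g γ
  hg2 : ∀ α ∈ R, g α ≠ 0
  hF : ∀ δ ∈ Ind R g, F δ = if δ ∈ Qn Q then 1 else 0

variable {g F : V →ₗ[ℝ] ℝ}

theorem Setup.QnPos (S : Setup R Q g F) : Qn Q ⊆ Pos R g :=
  fun γ hγ => ⟨Qn_sub S.hQ hγ, S.hg1 γ hγ⟩

theorem Setup.IndQ (S : Setup R Q g F) : Ind R g ⊆ Q := by
  intro δ hδ
  rcases S.hQ.2.2 δ hδ.1.1 with h | h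
  · exact h
  · by_contra hn
    have : -δ ∈ Qn Q := ⟨h, by simpa using hn⟩
    have := S.hg1 _ this
    have h2 := hδ.1.2
    rw [map_neg] at this
    linarith

theorem Setup.Fval (S : Setup R Q g F) {δ : V} (hδ : δ ∈ Ind R g) : F δ = 0 ∨ F δ = 1 := by
  rw [S.hF δ hδ]
  split <;> simp

/-- The key structure lemma for positive roots: the value of F is a natural number `n`,
`n = 0` iff the root is in `Q ∩ -Q`, `n ≥ 1` iff it is in `Qn`. -/
theorem Setup.pos_F (S : Setup R Q g F) {α : V} (hα : α ∈ Pos R g) :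
    ∃ n : ℕ, F α = n ∧ (n = 0 → (α ∈ Q ∧ -α ∈ Q)) ∧ (1 ≤ n → α ∈ Qn Q) := by
  obtain ⟨l, hlne, hlmem, hlsum⟩ := pos_decomp' S.hR hα
  have hvals : ∀ x ∈ l.map F, x = 0 ∨ x = 1 := by
    intro x hx
    obtain ⟨δ, hδ, rfl⟩ := List.mem_map.1 hx
    exact S.Fval (hlmem δ hδ)
  have hFsum : F α = (l.map F).sum := by rw [← hlsum, map_list_sum]
  obtain ⟨n, hn⟩ := lsum_nat hvals
  -- reorder l into a list with partial sums roots
  have hmemRg : ∀ β ∈ l, β ∈ R ∧ 0 < g β := fun β hβ =>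
    ⟨(hlmem β hβ).1.1, (hlmem β hβ).1.2⟩
  have hsumR : l.sum ∈ R := hlsum ▸ hα.1
  obtain ⟨l', hl'perm, hl'take⟩ := reorder S.hR g l.length l le_rfl hlne hmemRg hsumR
  have hl'ne : l' ≠ [] := by
    intro h
    have hlen := hl'perm.length_eq
    rw [h] at hlen
    simp only [List.length_nil] at hlen
    exact hlne (List.length_eq_zero_iff.1 hlen.symm)
  have hlmem' : ∀ β ∈ l', β ∈ Ind R g := fun β hβ => hlmem β (hl'perm.mem_iff.1 hβ)
  have hl'memQ : ∀ β ∈ l', β ∈ Q := fun β hβ => S.IndQ (hlmem' β hβ)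
  obtain ⟨hQsum, hQnsum⟩ := listQ_sum S.hR S.hQ l' hl'ne hl'memQ hl'take
  have hl'sum : l'.sum = α := hl'perm.sum_eq.trans hlsum
  refine ⟨n, hFsum.trans hn, ?_, ?_⟩
  · intro hn0
    subst hn0
    have hzero : ∀ x ∈ l.map F, x = 0 := by
      apply lsum_all_zero
      · intro x hx
        rcases hvals x hx with h | h <;> rw [h] <;> norm_num
      · rw [hn]; norm_num
    have hQr_each : ∀ β ∈ l, -β ∈ Q := by
      intro β hβ
      have hF0 : F β = 0 := hzero (F β) (List.mem_map_of_mem (f := F) hβ)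
      have hβInd := hlmem β hβ
      rw [S.hF β hβInd] at hF0
      have hβnotQn : β ∉ Qn Q := by
        intro h
        rw [if_pos h] at hF0
        norm_num at hF0
      have hβQ : β ∈ Q := S.IndQ hβInd
      by_contra hc
      exact hβnotQn ⟨hβQ, hc⟩
    refine ⟨hl'sum ▸ hQsum, ?_⟩
    set m : List V := l'.map (fun x => -x) with hm
    have hmne : m ≠ [] := by
      rw [hm]
      simpa using hl'ne
    have hmsum : m.sum = -α := by rw [hm, lsum_map_neg, hl'sum]
    have hmmem : ∀ x ∈ m, x ∈ R ∧ 0 < (-g) x := by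
      intro x hx
      rw [hm] at hx
      obtain ⟨β, hβ, rfl⟩ := List.mem_map.1 hx
      have hβInd := hlmem' β hβ
      refine ⟨neg_mem S.hR hβInd.1.1, ?_⟩
      simp only [LinearMap.neg_apply, map_neg, neg_neg]
      exact hβInd.1.2
    have hmR : m.sum ∈ R := by rw [hmsum]; exact neg_mem S.hR hα.1
    obtain ⟨m', hm'perm, hm'take⟩ := reorder S.hR (-g) m.length m le_rfl hmne hmmem hmR
    have hm'ne : m' ≠ [] := by
      intro h
      have hlen := hm'perm.length_eq
      rw [h] at hlen
      simp only [List.length_nil] at hlen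
      exact hmne (List.length_eq_zero_iff.1 hlen.symm)
    have hm'memQ : ∀ x ∈ m', x ∈ Q := by
      intro x hx
      have hxm := hm'perm.mem_iff.1 hx
      rw [hm] at hxm
      obtain ⟨β, hβ, rfl⟩ := List.mem_map.1 hxm
      exact hQr_each β (hl'perm.mem_iff.1 hβ)
    have hfin := (listQ_sum S.hR S.hQ m' hm'ne hm'memQ hm'take).1
    rwa [hm'perm.sum_eq, hmsum] at hfin
  · intro hn1
    have hexnz : ∃ x ∈ l.map F, x ≠ 0 := by
      by_contra hc
      push_neg at hc
      have h0 : (l.map F).sum = 0 := List.sum_eq_zero hc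
      rw [h0] at hn
      have : n = 0 := by exact_mod_cast hn.symm
      omega
    obtain ⟨x, hx, hxne⟩ := hexnz
    obtain ⟨δ, hδ, rfl⟩ := List.mem_map.1 hx
    have hδInd := hlmem δ hδ
    have hδQn : δ ∈ Qn Q := by
      by_contra hc
      rw [S.hF δ hδInd, if_neg hc] at hxne
      exact hxne rfl
    have hfin := hQnsum δ (hl'perm.mem_iff.2 hδ) hδQn
    rwa [hl'sum] at hfin

/-- F is integer valued on roots -/
theorem Setup.F_int (S : Setup R Q g F) {α : V} (hα : α ∈ R) : ∃ z : ℤ, F α = z := by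
  rcases lt_or_gt_of_ne (S.hg2 α hα) with h | h
  · have hneg : -α ∈ Pos R g := ⟨neg_mem S.hR hα, by rw [map_neg]; linarith⟩
    obtain ⟨n, hn, -, -⟩ := S.pos_F hneg
    refine ⟨-n, ?_⟩
    rw [map_neg] at hn
    push_cast
    linarith
  · obtain ⟨n, hn, -, -⟩ := S.pos_F ⟨hα, h⟩
    exact ⟨n, by exact_mod_cast hn⟩

theorem Setup.Qr_F (S : Setup R Q g F) {α : V} (hα : α ∈ R) (h1 : α ∈ Q) (h2 : -α ∈ Q) :
    F α = 0 := by
  rcases lt_or_gt_of_ne (S.hg2 α hα) with h | h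
  · have hneg : -α ∈ Pos R g := ⟨neg_mem S.hR hα, by rw [map_neg]; linarith⟩
    obtain ⟨n, hn, h0, hge⟩ := S.pos_F hneg
    rcases Nat.eq_zero_or_pos n with hz | hp
    · rw [map_neg, hz] at hn
      push_cast at hn
      linarith
    · exfalso
      exact (hge hp).2 (by simpa using h1)
  · obtain ⟨n, hn, h0, hge⟩ := S.pos_F ⟨hα, h⟩
    rcases Nat.eq_zero_or_pos n with hz | hp
    · rw [hn, hz]; norm_num
    · exact absurd h2 (hge hp).2

theorem Setup.Qn_F (S : Setup R Q g F) {α : V} (hα : α ∈ Qn Q) : (1:ℝ) ≤ F α := by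
  obtain ⟨n, hn, h0, _⟩ := S.pos_F (S.QnPos hα)
  rcases Nat.eq_zero_or_pos n with hz | hp
  · exact absurd (h0 hz).2 hα.2
  · rw [hn]
    exact_mod_cast hp

theorem Setup.notQ_F (S : Setup R Q g F) {α : V} (hα : α ∈ R) (h : α ∉ Q) :
    F α ≤ -1 := by
  have hnegQn : -α ∈ Qn Q := by
    rcases S.hQ.2.2 α hα with h1 | h1
    · exact absurd h1 h
    · exact ⟨h1, by simpa using h⟩
  have := S.Qn_F hnegQn
  rw [map_neg] at this
  linarith

theorem Setup.Qn_iff (S : Setup R Q g F) {α : V} (hα : α ∈ R) :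
    α ∈ Qn Q ↔ (1:ℝ) ≤ F α := by
  constructor
  · exact fun h => S.Qn_F h
  · intro h
    by_contra hc
    rcases S.hQ.2.2 α hα with h1 | h1
    · have h2 : -α ∈ Q := by
        by_contra hcc
        exact hc ⟨h1, hcc⟩
      have := S.Qr_F hα h1 h2
      linarith
    · by_cases h2 : α ∈ Q
      · have := S.Qr_F hα h2 (by simpa using h1)
        linarith
      · have := S.notQ_F hα h2
        linarith

theorem Setup.Qr_iff (S : Setup R Q g F) {α : V} (hα : α ∈ R) :
    (α ∈ Q ∧ -α ∈ Q) ↔ F α = 0 := by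
  constructor
  · exact fun h => S.Qr_F hα h.1 h.2
  · intro h
    by_cases h1 : α ∈ Q
    · refine ⟨h1, ?_⟩
      by_contra h2
      have := S.Qn_F ⟨h1, h2⟩
      linarith
    · have := S.notQ_F hα h1
      linarith

theorem Setup.notQ_iff (S : Setup R Q g F) {α : V} (hα : α ∈ R) :
    α ∉ Q ↔ F α ≤ -1 := by
  constructor
  · exact fun h => S.notQ_F hα h
  · intro h h1
    by_cases h2 : -α ∈ Q
    · have := S.Qr_F hα h1 h2
      linarith
    · have := S.Qn_F ⟨h1, h2⟩
      linarith

/-- every root of positive degree is a sum of degree-one roots -/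
theorem Setup.gen (S : Setup R Q g F) :
    ∀ (N : ℕ) (α : V), α ∈ R → mPos (g := g) S.hR α ≤ N → (1:ℝ) ≤ F α →
      ∃ l : List V, l ≠ [] ∧ (∀ β ∈ l, β ∈ R ∧ F β = 1) ∧ l.sum = α := by
  intro N
  induction N using Nat.strong_induction_on with
  | _ N ih =>
  intro α hα hm hF1
  obtain ⟨z, hz⟩ := S.F_int hα
  have hz1 : 1 ≤ z := by
    rw [hz] at hF1
    exact_mod_cast hF1
  by_cases hz2 : z = 1
  · refine ⟨[α], by simp, ?_, by simp⟩
    intro β hβ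
    simp only [List.mem_singleton] at hβ
    subst hβ
    exact ⟨hα, by rw [hz, hz2]; norm_num⟩
  · have hz2' : 2 ≤ z := by omega
    have hαQn : α ∈ Qn Q := (S.Qn_iff hα).2 hF1
    have hαPos : α ∈ Pos R g := S.QnPos hαQn
    by_cases hcase : ∃ β ∈ R, F β = 1 ∧ 0 < ⟪α, β⟫
    · obtain ⟨β, hβR, hβ1, hβin⟩ := hcase
      have hβQn : β ∈ Qn Q := (S.Qn_iff hβR).2 (by rw [hβ1])
      have hβα : β ≠ α := by
        intro h
        rw [h, hz] at hβ1
        have : z = 1 := by exact_mod_cast hβ1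
        omega
      have hsub : α - β ∈ R := sub_mem_of_inner_pos S.hR hα hβR hβα hβin
      have hFsub : F (α - β) = ((z - 1 : ℤ) : ℝ) := by
        rw [map_sub, hz, hβ1]; push_cast; ring
      have hsub1 : (1:ℝ) ≤ F (α - β) := by
        rw [hFsub]
        exact_mod_cast (by omega : (1:ℤ) ≤ z - 1)
      have hsubQn : α - β ∈ Qn Q := (S.Qn_iff hsub).2 hsub1
      have hsubPos : α - β ∈ Pos R g := S.QnPos hsubQn
      have hglt : g (α - β) < g α := by
        have h1 := (S.QnPos hβQn).2
        rw [map_sub]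
        linarith
      have hmlt := mPos_lt S.hR hsubPos hglt
      obtain ⟨l', hl'ne, hl'mem, hl'sum⟩ := ih (mPos (g := g) S.hR (α - β))
        (lt_of_lt_of_le hmlt hm) (α - β) hsub le_rfl hsub1
      refine ⟨l' ++ [β], by simp, ?_, ?_⟩
      · intro x hx
        rcases List.mem_append.1 hx with h | h
        · exact hl'mem x h
        · simp only [List.mem_singleton] at h
          subst h
          exact ⟨hβR, hβ1⟩
      · rw [List.sum_append, hl'sum]
        simp
    · push_neg at hcase
      exfalso
      obtain ⟨l₀, hl₀ne, hl₀mem, hl₀sum⟩ := pos_decomp' S.hR hαPos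
      have hαα := inner_self_pos' S.hR hα
      have hexδ : 0 < (l₀.map fun y => ⟪α, y⟫).sum := by
        rw [← inner_list_sum, hl₀sum]
        exact hαα
      obtain ⟨v, hv, hvpos⟩ := lsum_exists_pos hexδ
      obtain ⟨δ, hδl, rfl⟩ := List.mem_map.1 hv
      have hδInd := hl₀mem δ hδl
      have hδR : δ ∈ R := hδInd.1.1
      have hδδ := inner_self_pos' S.hR hδR
      have hδF : F δ = 0 := by
        rcases S.Fval hδInd with h | h
        · exact h
        · exact absurd hvpos (not_lt.2 (hcase δ hδR h))
      have hδα : δ ≠ α := by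
        intro h
        rw [h, hz] at hδF
        have : z = 0 := by exact_mod_cast hδF
        omega
      have hδmα : δ ≠ -α := by
        intro h
        rw [h, map_neg, hz] at hδF
        have : -z = 0 := by exact_mod_cast hδF
        omega
      have hsub : α - δ ∈ R := sub_mem_of_inner_pos S.hR hα hδR hδα hvpos
      have hFsub : F (α - δ) = (z : ℝ) := by rw [map_sub, hz, hδF]; ring
      have hsub1 : (1:ℝ) ≤ F (α - δ) := by
        rw [hFsub]
        exact_mod_cast hz1
      have hsubQn : α - δ ∈ Qn Q := (S.Qn_iff hsub).2 hsub1
      have hsubPos : α - δ ∈ Pos R g := S.QnPos hsubQn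
      have hglt : g (α - δ) < g α := by
        have h1 := hδInd.1.2
        rw [map_sub]
        linarith
      have hmlt := mPos_lt S.hR hsubPos hglt
      obtain ⟨lb, hlbne, hlbmem, hlbsum⟩ := ih (mPos (g := g) S.hR (α - δ))
        (lt_of_lt_of_le hmlt hm) (α - δ) hsub le_rfl hsub1
      -- inner product estimates
      have hsumα : (lb.map fun y => ⟪α, y⟫).sum = ⟪α, α - δ⟫ := by
        rw [← inner_list_sum, hlbsum]
      have hααδ : ⟪α, α - δ⟫ ≤ 0 := by
        rw [← hsumα]
        apply lsum_nonpos
        intro x hx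
        obtain ⟨β, hβ, rfl⟩ := List.mem_map.1 hx
        exact hcase β (hlbmem β hβ).1 (hlbmem β hβ).2
      have hαδ_ge : ⟪α, α⟫ ≤ ⟪α, δ⟫ := by
        rw [inner_sub_right] at hααδ
        linarith
      obtain ⟨n₁, hn₁⟩ := S.hR.2.2.2.1 δ hδR α hα
      obtain ⟨n₂, hn₂⟩ := S.hR.2.2.2.1 α hα δ hδR
      have hCS : ⟪α, δ⟫ ^ 2 < ⟪α, α⟫ * ⟪δ, δ⟫ := inner_sq_lt S.hR hα hδR hδα hδmα
      have hsym : ⟪δ, α⟫ = ⟪α, δ⟫ := (real_inner_comm δ α).symm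
      have hn₁pos : 0 < (n₁ : ℝ) := by
        rw [← hn₁]
        apply div_pos
        · linarith
        · exact hδδ
      have hn₂ge : (2:ℝ) ≤ (n₂ : ℝ) := by
        rw [← hn₂, hsym, le_div_iff₀ hαα]
        linarith
      have hprodlt : (n₁ : ℝ) * n₂ < 4 := by
        rw [← hn₁, ← hn₂, hsym]
        rw [div_mul_div_comm, div_lt_iff₀ (by positivity)]
        nlinarith
      have hn₁one : n₁ = 1 := by
        have h1 : (1:ℤ) ≤ n₁ := by exact_mod_cast hn₁pos
        have h2 : (2:ℤ) ≤ n₂ := by exact_mod_cast hn₂ge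
        have h3 : (n₁:ℤ) * n₂ < 4 := by exact_mod_cast hprodlt
        nlinarith
      have hval : 2 * ⟪α, δ⟫ = ⟪δ, δ⟫ := by
        rw [hn₁one] at hn₁
        push_cast at hn₁
        field_simp at hn₁
        linarith
      have hsumδ : (lb.map fun y => ⟪δ, y⟫).sum = ⟪δ, α - δ⟫ := by
        rw [← inner_list_sum, hlbsum]
      have hsumδneg : (lb.map fun y => ⟪δ, y⟫).sum < 0 := by
        rw [hsumδ, inner_sub_right, hsym]
        linarith
      obtain ⟨x, hx, hxneg⟩ := lsum_exists_neg hsumδneg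
      obtain ⟨βi, hβil, rfl⟩ := List.mem_map.1 hx
      have hβiR : βi ∈ R := (hlbmem βi hβil).1
      have hβi1 : F βi = 1 := (hlbmem βi hβil).2
      have hβine : βi ≠ -δ := by
        intro h
        rw [h, map_neg, hδF] at hβi1
        norm_num at hβi1
      have hadd : δ + βi ∈ R := add_mem_of_inner_neg S.hR hδR hβiR hβine hxneg
      have hFadd : F (δ + βi) = 1 := by rw [map_add, hδF, hβi1]; ring
      have h1 := hcase (δ + βi) hadd hFadd
      rw [inner_add_right] at h1
      have h2 : ⟪α, α⟫ - ⟪α, δ⟫ ≤ ⟪α, βi⟫ := by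
        have hle := lsum_le_of_mem (l := lb.map fun y => ⟪α, y⟫) ?_
          (List.mem_map_of_mem hβil)
        · rw [hsumα, inner_sub_right] at hle
          exact le_trans (by linarith) le_rfl
        · intro x hx
          obtain ⟨β, hβ, rfl⟩ := List.mem_map.1 hx
          exact hcase β (hlbmem β hβ).1 (hlbmem β hβ).2
      linarith


/- ℤ-list helpers -/
theorem lsum_int_ge {l : List ℤ} (h : ∀ x ∈ l, 1 ≤ x) : (l.length : ℤ) ≤ l.sum := by
  induction l with
  | nil => simp
  | cons a t ih =>
    simp only [List.sum_cons, List.length_cons]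
    have h1 := h a (by simp)
    have h2 := ih (fun x hx => h x (List.mem_cons_of_mem _ hx))
    push_cast
    omega

theorem lsum_int_eq {l : List ℤ} (h : ∀ x ∈ l, x = 1) : l.sum = l.length := by
  induction l with
  | nil => simp
  | cons a t ih =>
    simp only [List.sum_cons, List.length_cons]
    rw [h a (by simp), ih (fun x hx => h x (List.mem_cons_of_mem _ hx))]
    push_cast
    omega

theorem sum_mem_closure : ∀ (l : List V), (∀ β ∈ l, β ∈ R) →
    l.sum ∈ AddSubgroup.closure R := by
  intro l
  induction l with
  | nil => intro _; simp only [List.sum_nil]; exact zero_mem _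
  | cons a t ih =>
    intro h
    simp only [List.sum_cons]
    exact add_mem (AddSubgroup.subset_closure (h a (by simp)))
      (ih (fun β hβ => h β (List.mem_cons_of_mem _ hβ)))

end RSys

open RSys


/-- every parabolic subset `Q` of a root system `R` admits a unique canonical
ℤ-grading `χ_Q` (uniqueness holding for the values on the roots). -/
theorem exists_unique_canonical_grading
    (R Q : Set V) (hR : IsRootSys R) (hQ : IsParabolicSet R Q) :
    ∃ χ : V → ℤ, IsCanonicalGrading R Q χ ∧
      ∀ χ' : V → ℤ, IsCanonicalGrading R Q χ' → ∀ α ∈ R, χ' α = χ α := by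
  classical
  obtain ⟨g, hg1, hg2⟩ := exists_functional hR hQ
  obtain ⟨F, hFdef⟩ := exists_F hR hg2 (fun x => if x ∈ Qn Q then (1:ℝ) else 0)
  have S : Setup R Q g F := ⟨hR, hQ, hg1, hg2, hFdef⟩
  set χ : V → ℤ := fun v => round (F v) with hχdef
  -- F equals the cast of χ on roots
  have hFint : ∀ α ∈ R, F α = ((χ α : ℤ) : ℝ) := by
    intro α hα
    obtain ⟨z, hz⟩ := S.F_int hα
    have hzχ : χ α = z := by
      rw [hχdef]
      simp only [hz]
      exact round_intCast z
    rw [hzχ, hz]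
  -- integrality on the closure
  have hcl : ∀ x ∈ AddSubgroup.closure R, ∃ z : ℤ, F x = (z : ℝ) := by
    intro x hx
    refine AddSubgroup.closure_induction ?_ ?_ ?_ ?_ hx
    · intro α hα
      exact S.F_int hα
    · exact ⟨0, by simp⟩
    · rintro a b _ _ ⟨za, hza⟩ ⟨zb, hzb⟩
      exact ⟨za + zb, by rw [map_add, hza, hzb]; push_cast; ring⟩
    · rintro a _ ⟨za, hza⟩
      exact ⟨-za, by rw [map_neg, hza]; push_cast; ring⟩
  have hround : ∀ x ∈ AddSubgroup.closure R, F x = ((χ x : ℤ) : ℝ) := by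
    intro x hx
    obtain ⟨z, hz⟩ := hcl x hx
    have : χ x = z := by rw [hχdef]; simp only [hz]; exact round_intCast z
    rw [this, hz]
  -- clause 1
  have hclause1 : ∀ x ∈ AddSubgroup.closure R, ∀ y ∈ AddSubgroup.closure R,
      χ (x + y) = χ x + χ y := by
    intro x hx y hy
    have hxy := hround _ (add_mem hx hy)
    have hx' := hround x hx
    have hy' := hround y hy
    rw [map_add, hx', hy'] at hxy
    exact_mod_cast hxy.symm
  -- clauses 2-4
  have hclause2 : ∀ α ∈ R, ((α ∈ Q ∧ -α ∈ Q) ↔ χ α = 0) := by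
    intro α hα
    rw [S.Qr_iff hα, hFint α hα]
    exact_mod_cast Iff.rfl
  have hclause3 : ∀ α ∈ R, ((α ∈ Q ∧ -α ∉ Q) ↔ 0 < χ α) := by
    intro α hα
    have h1 : (α ∈ Q ∧ -α ∉ Q) ↔ α ∈ Qn Q := Iff.rfl
    rw [h1, S.Qn_iff hα, hFint α hα]
    constructor
    · intro h; exact_mod_cast (by exact_mod_cast h : (1:ℤ) ≤ χ α)
    · intro h; exact_mod_cast (by omega : (1:ℤ) ≤ χ α)
  have hclause4 : ∀ α ∈ R, (α ∉ Q ↔ χ α < 0) := by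
    intro α hα
    rw [S.notQ_iff hα, hFint α hα]
    constructor
    · intro h
      have : χ α ≤ -1 := by exact_mod_cast h
      omega
    · intro h
      exact_mod_cast (by omega : (χ α : ℤ) ≤ -1)
  -- clause 5
  have hclause5 : ∀ α ∈ R, α ∈ Q → -α ∉ Q → ∃ l : List V, l ≠ [] ∧
      (∀ β ∈ l, β ∈ R ∧ χ β = 1) ∧
      (∀ k : ℕ, k < l.length → (l.take (k + 1)).sum ∈ R) ∧ l.sum = α := by
    intro α hα h1 h2
    have hQnF : (1:ℝ) ≤ F α := S.Qn_F ⟨h1, h2⟩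
    obtain ⟨l, hlne, hlmem, hlsum⟩ := S.gen (mPos (g := g) S.hR α) α hα le_rfl hQnF
    have hmemRg : ∀ β ∈ l, β ∈ R ∧ 0 < g β := by
      intro β hβ
      obtain ⟨hβR, hβ1⟩ := hlmem β hβ
      have hβQn : β ∈ Qn Q := (S.Qn_iff hβR).2 (by rw [hβ1])
      exact ⟨hβR, hg1 β hβQn⟩
    obtain ⟨l', hl'perm, hl'take⟩ := reorder S.hR g l.length l le_rfl hlne hmemRg
      (hlsum ▸ hα)
    refine ⟨l', ?_, ?_, hl'take, by rw [hl'perm.sum_eq, hlsum]⟩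
    · intro h
      have hlen := hl'perm.length_eq
      rw [h] at hlen
      simp only [List.length_nil] at hlen
      exact hlne (List.length_eq_zero_iff.1 hlen.symm)
    · intro β hβ
      obtain ⟨hβR, hβ1⟩ := hlmem β (hl'perm.mem_iff.1 hβ)
      refine ⟨hβR, ?_⟩
      have := hFint β hβR
      rw [hβ1] at this
      exact_mod_cast this.symm
  have hcan : IsCanonicalGrading R Q χ := ⟨hclause1, hclause2, hclause3, hclause4, hclause5⟩
  refine ⟨χ, hcan, ?_⟩
  -- uniqueness
  intro χ' hχ' α hα
  -- generic facts about canonical gradings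
  have hzero : ∀ χ'' : V → ℤ, IsCanonicalGrading R Q χ'' → χ'' 0 = 0 := by
    intro χ'' h
    have h0 := h.1 0 (zero_mem _) 0 (zero_mem _)
    simp only [add_zero] at h0
    omega
  have hneg : ∀ χ'' : V → ℤ, IsCanonicalGrading R Q χ'' → ∀ x ∈ AddSubgroup.closure R,
      χ'' (-x) = -χ'' x := by
    intro χ'' h x hx
    have h0 := h.1 x hx (-x) (neg_mem hx)
    rw [add_neg_cancel, hzero χ'' h] at h0
    omega
  have hsum : ∀ χ'' : V → ℤ, IsCanonicalGrading R Q χ'' → ∀ l : List V,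
      (∀ β ∈ l, β ∈ R) → χ'' l.sum = (l.map χ'').sum := by
    intro χ'' h l
    induction l with
    | nil => intro _; simpa using hzero χ'' h
    | cons a t ih =>
      intro hmem
      simp only [List.sum_cons, List.map_cons, List.sum_cons]
      rw [h.1 a (AddSubgroup.subset_closure (hmem a (by simp)))
        t.sum (sum_mem_closure t (fun β hβ => hmem β (List.mem_cons_of_mem _ hβ))),
        ih (fun β hβ => hmem β (List.mem_cons_of_mem _ hβ))]
  -- the heart: equality on Qn
  have hcore : ∀ β ∈ R, β ∈ Q → -β ∉ Q → χ' β = χ β := by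
    intro β hβ hb1 hb2
    -- list from χ
    obtain ⟨l, hlne, hlmem, _, hlsum⟩ := hcan.2.2.2.2 β hβ hb1 hb2
    obtain ⟨m, hmne, hmmem, _, hmsum⟩ := hχ'.2.2.2.2 β hβ hb1 hb2
    have hl : (l.length : ℤ) ≤ χ' β := by
      rw [← hlsum, hsum χ' hχ' l (fun x hx => (hlmem x hx).1)]
      have : (l.map χ').length = l.length := List.length_map _
      rw [← this]
      apply lsum_int_ge
      intro x hx
      obtain ⟨y, hy, rfl⟩ := List.mem_map.1 hx
      obtain ⟨hyR, hy1⟩ := hlmem y hy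
      have hyQn : y ∈ Q ∧ -y ∉ Q := (hclause3 y hyR).2 (by omega)
      have := (hχ'.2.2.1 y hyR).1 hyQn
      omega
    have hlχ : χ β = (l.length : ℤ) := by
      rw [← hlsum, hsum χ hcan l (fun x hx => (hlmem x hx).1)]
      have hlen : (l.map χ).length = l.length := List.length_map _
      rw [← hlen]
      apply lsum_int_eq
      intro x hx
      obtain ⟨y, hy, rfl⟩ := List.mem_map.1 hx
      exact (hlmem y hy).2
    have hm : (m.length : ℤ) ≤ χ β := by
      rw [← hmsum, hsum χ hcan m (fun x hx => (hmmem x hx).1)]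
      have : (m.map χ).length = m.length := List.length_map _
      rw [← this]
      apply lsum_int_ge
      intro x hx
      obtain ⟨y, hy, rfl⟩ := List.mem_map.1 hx
      obtain ⟨hyR, hy1⟩ := hmmem y hy
      have hyQn : y ∈ Q ∧ -y ∉ Q := (hχ'.2.2.1 y hyR).2 (by omega)
      have := (hclause3 y hyR).1 hyQn
      omega
    have hmχ : χ' β = (m.length : ℤ) := by
      rw [← hmsum, hsum χ' hχ' m (fun x hx => (hmmem x hx).1)]
      have hlen : (m.map χ').length = m.length := List.length_map _
      rw [← hlen]
      apply lsum_int_eq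
      intro x hx
      obtain ⟨y, hy, rfl⟩ := List.mem_map.1 hx
      exact (hmmem y hy).2
    omega
  -- finish by cases
  by_cases h1 : α ∈ Q
  · by_cases h2 : -α ∈ Q
    · rw [(hχ'.2.1 α hα).1 ⟨h1, h2⟩, (hclause2 α hα).1 ⟨h1, h2⟩]
    · exact hcore α hα h1 h2
  · have h2 : -α ∈ Q := by
      rcases hQ.2.2 α hα with h | h
      · exact absurd h h1
      · exact h
    have h3 : - -α ∉ Q := by simpa using h1
    have hres := hcore (-α) (RSys.neg_mem hR hα) h2 h3
    have hclmem : α ∈ AddSubgroup.closure R := AddSubgroup.subset_closure hα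
    have e1 := hneg χ' hχ' α hclmem
    have e2 := hneg χ hcan α hclmem
    omega
end

section
/- Let R be a root system, Q ⊆ R a parabolic subset, and C₁, C₂ two Weyl chambers admissible for Q (R⁺(C_i) ⊆ Q for i = 1,2). Then there exist roots β₁,…,β_p ∈ Q^r = Q ∩ (−Q) such that the composition of reflections r_{β₁}∘⋯∘r_{β_p} maps R⁺(C₁) onto R⁺(C₂). -/
open scoped RealInnerProductSpace

variable {V : Type*} [NormedAddCommGroup V] [InnerProductSpace ℝ V]

/-- The reflection in the hyperplane orthogonal to `β`. -/
noncomputable def rootReflection (β x : V) : V := x - (2 * ⟪x, β⟫ / ⟪β, β⟫) • β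

lemma inner_self_pos' {x : V} (hx : x ≠ 0) : (0:ℝ) < ⟪x, x⟫ := by
  rw [real_inner_self_eq_norm_sq]
  have := norm_pos_iff.mpr hx
  positivity

lemma rr_inner_comm (β x y : V) : ⟪rootReflection β x, y⟫ = ⟪x, rootReflection β y⟫ := by
  simp only [rootReflection, inner_sub_left, inner_sub_right, real_inner_smul_left,
    real_inner_smul_right]
  rw [real_inner_comm β y]
  ring

lemma rr_invol (β x : V) : rootReflection β (rootReflection β x) = x := by
  by_cases hβ : β = 0
  · simp [rootReflection, hβ]
  · have h : (⟪β, β⟫ : ℝ) ≠ 0 := ne_of_gt (inner_self_pos' hβ)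
    simp only [rootReflection, inner_sub_left, real_inner_smul_left]
    have e : ⟪x, β⟫ - 2 * ⟪x, β⟫ / ⟪β, β⟫ * ⟪β, β⟫ = -⟪x, β⟫ := by
      field_simp
      ring
    rw [e]
    have e2 : 2 * -⟪x, β⟫ / ⟪β, β⟫ = -(2 * ⟪x, β⟫ / ⟪β, β⟫) := by ring
    rw [e2, neg_smul, sub_neg_eq_add, sub_add_cancel]

namespace RS
variable {R : Set V}

lemma ne_zero (hR : IsRootSys R) {α : V} (hα : α ∈ R) : α ≠ 0 :=
  fun h => hR.2.1 (h ▸ hα)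

lemma inner_self_posR (hR : IsRootSys R) {α : V} (hα : α ∈ R) : (0:ℝ) < ⟪α, α⟫ :=
  inner_self_pos' (ne_zero hR hα)

lemma rr_mem (hR : IsRootSys R) {α β : V} (hα : α ∈ R) (hβ : β ∈ R) :
    rootReflection α β ∈ R := hR.2.2.1 α hα β hβ

lemma rr_self (hR : IsRootSys R) {α : V} (hα : α ∈ R) : rootReflection α α = -α := by
  have hne : (⟪α, α⟫ : ℝ) ≠ 0 := ne_of_gt (inner_self_posR hR hα)
  simp only [rootReflection]
  rw [mul_div_assoc, div_self hne, mul_one, two_smul]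
  abel

lemma neg_mem (hR : IsRootSys R) {α : V} (hα : α ∈ R) : -α ∈ R := by
  have h := rr_mem hR hα hα
  rwa [rr_self hR hα] at h


lemma strict_cs (hR : IsRootSys R) {α β : V} (hα : α ∈ R) (hβ : β ∈ R)
    (h1 : β ≠ α) (h2 : β ≠ -α) : ⟪β, α⟫ * ⟪β, α⟫ < ⟪β, β⟫ * ⟪α, α⟫ := by
  rcases lt_or_eq_of_le (real_inner_mul_inner_self_le β α) with h | h
  · exact h
  · exfalso
    have hβ0 : β ≠ 0 := ne_zero hR hβ
    have hα0 : α ≠ 0 := ne_zero hR hα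
    have hn : ‖β‖ * ‖α‖ ≠ 0 := by
      have := norm_pos_iff.mpr hβ0
      have := norm_pos_iff.mpr hα0
      positivity
    have habs : |⟪β, α⟫ / (‖β‖ * ‖α‖)| = 1 := by
      have hsq : (⟪β, α⟫ / (‖β‖ * ‖α‖)) ^ 2 = 1 := by
        rw [div_pow, mul_pow]
        rw [real_inner_self_eq_norm_sq, real_inner_self_eq_norm_sq] at h
        rw [sq (⟪β, α⟫), h]
        exact div_self (by simpa [mul_pow] using pow_ne_zero 2 hn)
      have h0 : (|⟪β, α⟫ / (‖β‖ * ‖α‖)| - 1) * (|⟪β, α⟫ / (‖β‖ * ‖α‖)| + 1) = 0 := by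
        have := sq_abs (⟪β, α⟫ / (‖β‖ * ‖α‖))
        nlinarith [sq_abs (⟪β, α⟫ / (‖β‖ * ‖α‖))]
      rcases mul_eq_zero.1 h0 with h' | h'
      · linarith
      · nlinarith [abs_nonneg (⟪β, α⟫ / (‖β‖ * ‖α‖))]
    obtain ⟨-, r, hr0, hαr⟩ := (abs_real_inner_div_norm_mul_norm_eq_one_iff β α).1 habs
    rcases hR.2.2.2.2 β hβ r (hαr ▸ hα) with h' | h'
    · exact h1 (by rw [hαr, h', one_smul])
    · exact h2 (by rw [hαr, h', neg_one_smul, neg_neg])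

lemma sub_mem (hR : IsRootSys R) {α β : V} (hα : α ∈ R) (hβ : β ∈ R)
    (h1 : β ≠ α) (h2 : β ≠ -α) (hpos : 0 < ⟪β, α⟫) : β - α ∈ R := by
  obtain ⟨N, hN⟩ := hR.2.2.2.1 α hα β hβ
  obtain ⟨M, hM⟩ := hR.2.2.2.1 β hβ α hα
  have hαα := inner_self_posR hR hα
  have hββ := inner_self_posR hR hβ
  have e1 : 2 * ⟪β, α⟫ = N * ⟪α, α⟫ := by
    field_simp at hN; linarith
  have e2 : 2 * ⟪α, β⟫ = M * ⟪β, β⟫ := by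
    field_simp at hM; linarith
  have hba : ⟪α, β⟫ = ⟪β, α⟫ := real_inner_comm β α
  have hNpos : 0 < (N : ℝ) := by
    rw [← hN]; positivity
  have hMpos : 0 < (M : ℝ) := by
    rw [← hM]; rw [hba]; positivity
  have hcs := strict_cs hR hα hβ h1 h2
  have hNM : (N : ℝ) * M < 4 := by nlinarith [mul_pos hαα hββ]
  have hN1 : 1 ≤ N := by exact_mod_cast hNpos
  have hM1 : 1 ≤ M := by exact_mod_cast hMpos
  have hNM' : N * M < 4 := by exact_mod_cast hNM
  have : N = 1 ∨ M = 1 := by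
    by_contra hc
    push_neg at hc
    have : 2 ≤ N := by omega
    have : 2 ≤ M := by omega
    nlinarith
  rcases this with h' | h'
  · have := rr_mem hR hα hβ
    rw [rootReflection, hN, h'] at this
    simpa using this
  · have h'' := rr_mem hR hβ hα
    rw [rootReflection, hM, h'] at h''
    simp only [Int.cast_one, one_smul] at h''
    have := neg_mem hR h''
    simpa using this

lemma cross_aux (P' : ℕ → Prop) : ∀ n : ℕ, P' 0 → ¬ P' n → ∃ k, k < n ∧ P' k ∧ ¬ P' (k+1) := by
  intro n
  induction n with
  | zero => intro h0 hn; exact absurd h0 hn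
  | succ m ih =>
    intro h0 hn
    by_cases hm : P' m
    · exact ⟨m, Nat.lt_succ_self m, hm, hn⟩
    · obtain ⟨k, hk, h1, h2⟩ := ih h0 hm
      exact ⟨k, hk.trans (Nat.lt_succ_self m), h1, h2⟩

lemma simple_reflect (hR : IsRootSys R) {v : V} (hreg : ∀ γ ∈ R, ⟪γ, v⟫ ≠ 0)
    {α : V} (hαR : α ∈ R) (hαv : 0 < ⟪α, v⟫)
    (hsimple : ∀ x ∈ R, ∀ y ∈ R, 0 < ⟪x, v⟫ → 0 < ⟪y, v⟫ → x + y ≠ α)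
    {β : V} (hβR : β ∈ R) (hβv : 0 < ⟪β, v⟫) (hne : β ≠ α) :
    0 < ⟪rootReflection α β, v⟫ := by
  by_contra hneg
  have hrR := rr_mem hR hαR hβR
  have hrneg : ⟪rootReflection α β, v⟫ < 0 :=
    lt_of_le_of_ne (not_lt.1 hneg) (hreg _ hrR)
  have hβnegα : β ≠ -α := by
    intro h
    rw [h, inner_neg_left] at hβv
    linarith
  obtain ⟨N, hN⟩ := hR.2.2.2.1 α hαR β hβR
  have hαα := inner_self_posR hR hαR
  have hββ := inner_self_posR hR hβR
  have e1 : 2 * ⟪β, α⟫ = N * ⟪α, α⟫ := by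
    field_simp at hN; linarith
  have hrform : rootReflection α β = β - (N : ℝ) • α := by rw [rootReflection, hN]
  have hinner : ⟪β, v⟫ - (N : ℝ) * ⟪α, v⟫ < 0 := by
    rw [hrform, inner_sub_left, real_inner_smul_left] at hrneg
    exact hrneg
  have hNr : 0 < (N : ℝ) := by nlinarith
  have hN1 : 1 ≤ N := by exact_mod_cast hNr
  have hβα : 0 < ⟪β, α⟫ := by nlinarith
  -- N ≤ 3
  obtain ⟨M, hM⟩ := hR.2.2.2.1 β hβR α hαR
  have e2 : 2 * ⟪α, β⟫ = M * ⟪β, β⟫ := by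
    field_simp at hM; linarith
  have hba : ⟪α, β⟫ = ⟪β, α⟫ := real_inner_comm β α
  have hM1 : 1 ≤ M := by
    have : 0 < (M : ℝ) := by nlinarith
    exact_mod_cast this
  have hcs := strict_cs hR hαR hβR hne hβnegα
  have hNM : (N : ℝ) * M < 4 := by nlinarith [mul_pos hαα hββ]
  have hNM' : N * M < 4 := by exact_mod_cast hNM
  have hN3 : N ≤ 3 := by nlinarith
  -- the chain β - k • α ∈ R for k ≤ N
  set Nt := N.toNat with hNtdef
  have hNt : ((Nt : ℕ) : ℝ) = (N : ℝ) := by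
    rw [hNtdef]; exact_mod_cast congrArg (Int.cast : ℤ → ℝ) (Int.toNat_of_nonneg (by omega))
  have hNt3 : Nt = 1 ∨ Nt = 2 ∨ Nt = 3 := by omega
  have m0 : β - ((0 : ℕ) : ℝ) • α ∈ R := by simpa using hβR
  have mN : β - ((Nt : ℕ) : ℝ) • α ∈ R := by rw [hNt, ← hrform]; exact hrR
  have m1 : β - α ∈ R := by
    rcases hNt3 with h | h | h
    · have := mN; rw [h] at this; simpa using this
    all_goals exact sub_mem hR hαR hβR hne hβnegα hβα
  have m2 : Nt = 3 → β - (2 : ℝ) • α ∈ R := by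
    intro h3
    have hN3' : (N : ℝ) = 3 := by rw [← hNt, h3]; norm_num
    have hpos : 0 < ⟪β - α, α⟫ := by
      rw [inner_sub_left]; nlinarith
    have hne1 : β - α ≠ α := by
      intro h
      have hβ2 : β = (2 : ℝ) • α := by
        have h' : β = α + α := sub_eq_iff_eq_add.1 h
        rw [h', two_smul]
      rcases hR.2.2.2.2 α hαR 2 (hβ2 ▸ hβR) with h' | h' <;> norm_num at h'
    have hne2 : β - α ≠ -α := by
      intro h
      apply ne_zero hR hβR
      have : β - α + α = -α + α := by rw [h]
      simpa using this
    have := sub_mem hR hαR m1 hne1 hne2 hpos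
    have e : β - α - α = β - (2 : ℝ) • α := by
      rw [two_smul]; abel
    rwa [e] at this
  have hchain : ∀ k : ℕ, k ≤ Nt → β - (k : ℝ) • α ∈ R := by
    intro k hk
    rcases hNt3 with h | h | h <;> rw [h] at hk <;> interval_cases k
    · exact m0
    · rw [← h] at *; exact mN
    · exact m0
    · push_cast; simpa using m1
    · rw [← h] at *; exact mN
    · exact m0
    · push_cast; simpa using m1
    · push_cast; exact m2 h
    · rw [← h] at *; exact mN
  -- find the sign crossing
  have hNtneg : ¬ (0 < ⟪β - ((Nt : ℕ) : ℝ) • α, v⟫) := by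
    rw [hNt, ← hrform]; exact hneg
  obtain ⟨k, hk, hkpos, hknneg⟩ :=
    cross_aux (fun k => 0 < ⟪β - (k : ℝ) • α, v⟫) Nt (by simpa using hβv) hNtneg
  have hxR : β - (k : ℝ) • α ∈ R := hchain k (le_of_lt hk)
  have hy'R : β - ((k + 1 : ℕ) : ℝ) • α ∈ R := hchain (k + 1) hk
  have hyR : -(β - ((k + 1 : ℕ) : ℝ) • α) ∈ R := neg_mem hR hy'R
  have hyv : 0 < ⟪-(β - ((k + 1 : ℕ) : ℝ) • α), v⟫ := by
    rw [inner_neg_left]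
    have : ⟪β - ((k + 1 : ℕ) : ℝ) • α, v⟫ < 0 :=
      lt_of_le_of_ne (not_lt.1 hknneg) (hreg _ hy'R)
    linarith
  have hsum : β - (k : ℝ) • α + -(β - ((k + 1 : ℕ) : ℝ) • α) = α := by
    push_cast
    module
  exact hsimple _ hxR _ hyR hkpos hyv hsum

end RS

lemma foldr_comp (l : List V) (g : V → V) :
    l.foldr (fun β f => rootReflection β ∘ f) g =
      (l.foldr (fun β f => rootReflection β ∘ f) id) ∘ g := by
  induction l with
  | nil => rfl
  | cons b t ih => simp [List.foldr_cons, ih, Function.comp_assoc]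

/-- if `C₁, C₂` (described by regular vectors `v₁, v₂`) are two Weyl chambers
admissible for the parabolic set `Q`, there exist roots `β₁, …, β_p ∈ Q^r` whose composed
reflections `r_{β₁} ∘ ⋯ ∘ r_{β_p}` map `R⁺(C₁)` onto `R⁺(C₂)`. -/
theorem admissible_chambers_conjugate
    (R Q : Set V) (hR : IsRootSys R) (hQ : IsParabolicSet R Q)
    (v₁ v₂ : V)
    (hreg₁ : ∀ α ∈ R, ⟪α, v₁⟫ ≠ 0) (hreg₂ : ∀ α ∈ R, ⟪α, v₂⟫ ≠ 0)
    (hadm₁ : ∀ α ∈ R, 0 < ⟪α, v₁⟫ → α ∈ Q) (hadm₂ : ∀ α ∈ R, 0 < ⟪α, v₂⟫ → α ∈ Q) :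
    ∃ l : List V, (∀ β ∈ l, β ∈ Q ∧ -β ∈ Q) ∧
      (l.foldr (fun β f => rootReflection β ∘ f) id) ''
          {x | x ∈ R ∧ 0 < ⟪x, v₁⟫} = {x | x ∈ R ∧ 0 < ⟪x, v₂⟫} := by
  classical
  have hfin := hR.1
  have empty_case : ∀ v : V, (∀ α ∈ R, ⟪α, v⟫ ≠ 0) →
      ({x | x ∈ R ∧ 0 < ⟪x, v⟫ ∧ ⟪x, v₂⟫ < 0} = (∅ : Set V)) →
      {x | x ∈ R ∧ 0 < ⟪x, v⟫} = {x | x ∈ R ∧ 0 < ⟪x, v₂⟫} := by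
    intro v hreg hemp
    ext x
    simp only [Set.mem_setOf_eq]
    constructor
    · rintro ⟨hxR, hxv⟩
      refine ⟨hxR, ?_⟩
      by_contra hx2
      have hx2' : ⟪x, v₂⟫ < 0 := lt_of_le_of_ne (not_lt.1 hx2) (hreg₂ x hxR)
      have hmem : x ∈ {x | x ∈ R ∧ 0 < ⟪x, v⟫ ∧ ⟪x, v₂⟫ < 0} := ⟨hxR, hxv, hx2'⟩
      rw [hemp] at hmem
      exact hmem
    · rintro ⟨hxR, hx2⟩
      refine ⟨hxR, ?_⟩
      by_contra hxv
      have hxv' : ⟪x, v⟫ < 0 := lt_of_le_of_ne (not_lt.1 hxv) (hreg x hxR)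
      have hnx : -x ∈ R := RS.neg_mem hR hxR
      have hmem : -x ∈ {x | x ∈ R ∧ 0 < ⟪x, v⟫ ∧ ⟪x, v₂⟫ < 0} :=
        ⟨hnx, by rw [inner_neg_left]; linarith, by rw [inner_neg_left]; linarith⟩
      rw [hemp] at hmem
      exact hmem
  suffices key : ∀ n : ℕ, ∀ v : V, (∀ α ∈ R, ⟪α, v⟫ ≠ 0) → (∀ α ∈ R, 0 < ⟪α, v⟫ → α ∈ Q) →
      {x | x ∈ R ∧ 0 < ⟪x, v⟫ ∧ ⟪x, v₂⟫ < 0}.ncard ≤ n →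
      ∃ l : List V, (∀ β ∈ l, β ∈ Q ∧ -β ∈ Q) ∧
        (l.foldr (fun β f => rootReflection β ∘ f) id) '' {x | x ∈ R ∧ 0 < ⟪x, v⟫}
          = {x | x ∈ R ∧ 0 < ⟪x, v₂⟫} by
    exact key _ v₁ hreg₁ hadm₁ le_rfl
  intro n
  induction n with
  | zero =>
    intro v hreg hadm hcard
    have hbadfin : Set.Finite {x | x ∈ R ∧ 0 < ⟪x, v⟫ ∧ ⟪x, v₂⟫ < 0} :=
      hfin.subset (fun x hx => hx.1)
    have hemp : {x | x ∈ R ∧ 0 < ⟪x, v⟫ ∧ ⟪x, v₂⟫ < 0} = ∅ :=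
      (Set.ncard_eq_zero hbadfin).1 (Nat.le_zero.1 hcard)
    exact ⟨[], by simp, by simpa using empty_case v hreg hemp⟩
  | succ n ih =>
    intro v hreg hadm hcard
    by_cases hemp : {x | x ∈ R ∧ 0 < ⟪x, v⟫ ∧ ⟪x, v₂⟫ < 0} = ∅
    · exact ⟨[], by simp, by simpa using empty_case v hreg hemp⟩
    have hbadfin : Set.Finite {x | x ∈ R ∧ 0 < ⟪x, v⟫ ∧ ⟪x, v₂⟫ < 0} :=
      hfin.subset (fun x hx => hx.1)
    obtain ⟨α, hαbad, hmin⟩ := Set.exists_min_image _ (fun x => ⟪x, v⟫) hbadfin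
      (Set.nonempty_iff_ne_empty.2 hemp)
    obtain ⟨hαR, hαv, hαv₂⟩ := hαbad
    have hsimple : ∀ x ∈ R, ∀ y ∈ R, 0 < ⟪x, v⟫ → 0 < ⟪y, v⟫ → x + y ≠ α := by
      intro x hxR y hyR hxv hyv hxy
      have hsum2 : ⟪x, v₂⟫ + ⟪y, v₂⟫ < 0 := by
        have h' : ⟪x + y, v₂⟫ = ⟪x, v₂⟫ + ⟪y, v₂⟫ := inner_add_left x y v₂
        rw [hxy] at h'
        linarith
      have hsum1 : ⟪x, v⟫ + ⟪y, v⟫ = ⟪α, v⟫ := by rw [← inner_add_left, hxy]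
      rcases lt_or_ge ⟪x, v₂⟫ 0 with hx2 | hx2
      · have := hmin x ⟨hxR, hxv, hx2⟩
        linarith
      · have hy2 : ⟪y, v₂⟫ < 0 := by linarith
        have := hmin y ⟨hyR, hyv, hy2⟩
        linarith
    set v' := rootReflection α v with hv'
    have hinner' : ∀ x : V, ⟪x, v'⟫ = ⟪rootReflection α x, v⟫ := fun x =>
      (rr_inner_comm α x v).symm
    have hreg' : ∀ γ ∈ R, ⟪γ, v'⟫ ≠ 0 := fun γ hγ => by
      rw [hinner']; exact hreg _ (RS.rr_mem hR hαR hγ)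
    have hnegα2 : 0 < ⟪-α, v₂⟫ := by rw [inner_neg_left]; linarith
    have hnegαR : -α ∈ R := RS.neg_mem hR hαR
    -- positivity transfer
    have hpos' : ∀ γ ∈ R, 0 < ⟪γ, v'⟫ → (γ = -α ∨ 0 < ⟪γ, v⟫) := by
      intro γ hγ hγv'
      rw [hinner'] at hγv'
      have hyR : rootReflection α γ ∈ R := RS.rr_mem hR hαR hγ
      by_cases hyα : rootReflection α γ = α
      · left
        have h' := congrArg (rootReflection α) hyα
        rw [rr_invol, RS.rr_self hR hαR] at h'
        exact h'
      · right
        have := RS.simple_reflect hR hreg hαR hαv hsimple hyR hγv' hyα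
        rwa [rr_invol] at this
    have hadm' : ∀ γ ∈ R, 0 < ⟪γ, v'⟫ → γ ∈ Q := by
      intro γ hγ hγv'
      rcases hpos' γ hγ hγv' with h | h
      · rw [h]; exact hadm₂ _ hnegαR hnegα2
      · exact hadm γ hγ h
    have himg : rootReflection α '' {x | x ∈ R ∧ 0 < ⟪x, v⟫} = {x | x ∈ R ∧ 0 < ⟪x, v'⟫} := by
      ext x
      constructor
      · rintro ⟨y, ⟨hyR, hyv⟩, rfl⟩
        exact ⟨RS.rr_mem hR hαR hyR, by rw [hinner', rr_invol]; exact hyv⟩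
      · rintro ⟨hxR, hxv⟩
        refine ⟨rootReflection α x, ⟨RS.rr_mem hR hαR hxR, ?_⟩, rr_invol α x⟩
        rw [← hinner']
        exact hxv
    -- measure decrease
    have hbadsub : {x | x ∈ R ∧ 0 < ⟪x, v'⟫ ∧ ⟪x, v₂⟫ < 0} ⊆
        {x | x ∈ R ∧ 0 < ⟪x, v⟫ ∧ ⟪x, v₂⟫ < 0} \ {α} := by
      rintro x ⟨hxR, hxv', hx2⟩
      have hx : 0 < ⟪x, v⟫ := by
        rcases hpos' x hxR hxv' with h | h
        · exfalso; rw [h, inner_neg_left] at hx2; linarith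
        · exact h
      refine ⟨⟨hxR, hx, hx2⟩, ?_⟩
      intro hxα
      rw [Set.mem_singleton_iff] at hxα
      subst hxα
      rw [hinner', RS.rr_self hR hαR, inner_neg_left] at hxv'
      linarith
    have hcard' : {x | x ∈ R ∧ 0 < ⟪x, v'⟫ ∧ ⟪x, v₂⟫ < 0}.ncard ≤ n := by
      have h1 : ({x | x ∈ R ∧ 0 < ⟪x, v⟫ ∧ ⟪x, v₂⟫ < 0} \ {α}).ncard =
          {x | x ∈ R ∧ 0 < ⟪x, v⟫ ∧ ⟪x, v₂⟫ < 0}.ncard - 1 :=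
        Set.ncard_diff_singleton_of_mem ⟨hαR, hαv, hαv₂⟩
      have h2 := Set.ncard_le_ncard hbadsub (hbadfin.subset Set.diff_subset)
      have h3 : 0 < {x | x ∈ R ∧ 0 < ⟪x, v⟫ ∧ ⟪x, v₂⟫ < 0}.ncard :=
        (Set.ncard_pos hbadfin).2 ⟨α, hαR, hαv, hαv₂⟩
      omega
    obtain ⟨l', hl'Q, hl'img⟩ := ih v' hreg' hadm' hcard'
    refine ⟨l' ++ [α], ?_, ?_⟩
    · intro β hβ
      rcases List.mem_append.1 hβ with h | h
      · exact hl'Q β h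
      · have hβα : β = α := by simpa using h
        subst hβα
        exact ⟨hadm β hαR hαv, hadm₂ _ hnegαR hnegα2⟩
    · rw [List.foldr_append]
      have e1 : List.foldr (fun β f => rootReflection β ∘ f) id [α] =
          rootReflection α ∘ id := rfl
      rw [e1, foldr_comp, Function.comp_id, Set.image_comp, himg, hl'img]
end

section
/- Let R be an irreducible root system, C a Weyl chamber with highest root δ. Then for every positive root α ∈ R⁺(C) with α ≠ δ, the difference δ − α is either a positive root, or a sum β₁ + β₂ of two positive roots β₁, β₂ ∈ R⁺(C) (with β₁ + β₂ ∉ R). -/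
open scoped RealInnerProductSpace

variable {V : Type*} [NormedAddCommGroup V] [InnerProductSpace ℝ V]

/-- `R` is irreducible. -/
def IsIrreducibleRS (R : Set V) : Prop :=
  R.Nonempty ∧ ∀ R₁ R₂ : Set V, R = R₁ ∪ R₂ →
    (∀ a ∈ R₁, ∀ b ∈ R₂, ⟪a, b⟫ = 0) → R₁ = ∅ ∨ R₂ = ∅

/-- `δ` is the highest root of the chamber described by the regular vector `v`. -/
def IsHighestRoot (R : Set V) (v δ : V) : Prop :=
  δ ∈ R ∧ 0 < ⟪δ, v⟫ ∧ ∀ α ∈ R, 0 < ⟪α, v⟫ → δ + α ∉ R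

namespace IsRootSys

lemma ne_zero {R : Set V} (hR : IsRootSys R) {a : V} (ha : a ∈ R) : a ≠ 0 :=
  fun h => hR.2.1 (h ▸ ha)

lemma inner_self_pos' {R : Set V} (hR : IsRootSys R) {a : V} (ha : a ∈ R) :
    0 < ⟪a, a⟫ :=
  lt_of_le_of_ne real_inner_self_nonneg
    (Ne.symm (inner_self_ne_zero.mpr (hR.ne_zero ha)))

lemma neg_mem {R : Set V} (hR : IsRootSys R) {a : V} (ha : a ∈ R) : -a ∈ R := by
  have h := hR.2.2.1 a ha a ha
  have hne0 : ⟪a, a⟫ ≠ 0 := ne_of_gt (hR.inner_self_pos' ha)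
  have h2 : (2 * ⟪a, a⟫ / ⟪a, a⟫) = 2 := by
    rw [mul_div_assoc, div_self hne0, mul_one]
  rw [h2] at h
  have : a - (2 : ℝ) • a = -a := by
    rw [two_smul]; abel
  rwa [this] at h

/-- Key lemma: if `⟪a, b⟫ > 0` and `a ≠ b` then `a - b` is a root. -/
lemma sub_mem {R : Set V} (hR : IsRootSys R) {a b : V}
    (ha : a ∈ R) (hb : b ∈ R) (hpos : 0 < ⟪a, b⟫) (hne : a ≠ b) : a - b ∈ R := by
  have haa := hR.inner_self_pos' ha
  have hbb := hR.inner_self_pos' hb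
  have hba : ⟪b, a⟫ = ⟪a, b⟫ := real_inner_comm _ _
  obtain ⟨n, hn⟩ := hR.2.2.2.1 b hb a ha   -- 2*⟪a,b⟫/⟪b,b⟫ = n
  obtain ⟨m, hm⟩ := hR.2.2.2.1 a ha b hb   -- 2*⟪b,a⟫/⟪a,a⟫ = m
  have hnpos : (0 : ℝ) < (n : ℝ) := by rw [← hn]; positivity
  have hmpos : (0 : ℝ) < (m : ℝ) := by rw [← hm, hba]; positivity
  have hn1 : 1 ≤ n := by exact_mod_cast hnpos
  have hm1 : 1 ≤ m := by exact_mod_cast hmpos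
  have hcs := real_inner_mul_inner_self_le a b
  have hprodR : (n : ℝ) * (m : ℝ) ≤ 4 := by
    rw [← hn, ← hm, hba, div_mul_div_comm, div_le_iff₀ (by positivity)]
    nlinarith
  have hprod : n * m ≤ 4 := by exact_mod_cast hprodR
  by_cases h1 : n = 1
  · have h := hR.2.2.1 b hb a ha
    rw [hn, h1] at h
    simpa using h
  · by_cases h2 : m = 1
    · have h := hR.2.2.1 a ha b hb
      rw [hm, h2] at h
      norm_num at h
      have h' := hR.neg_mem h
      rwa [neg_sub] at h'
    · exfalso
      have hn2 : 2 ≤ n := by omega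
      have hm2 : 2 ≤ m := by omega
      have hn2' : n = 2 := by nlinarith
      have hm2' : m = 2 := by nlinarith
      -- then ⟪a,b⟫ = ⟪b,b⟫ and ⟪a,b⟫ = ⟪a,a⟫
      have e1 : ⟪a, b⟫ = ⟪b, b⟫ := by
        have : 2 * ⟪a, b⟫ / ⟪b, b⟫ = 2 := by rw [hn, hn2']; norm_num
        field_simp at this; linarith
      have e2 : ⟪a, b⟫ = ⟪a, a⟫ := by
        have : 2 * ⟪b, a⟫ / ⟪a, a⟫ = 2 := by rw [hm, hm2']; norm_num
        rw [hba] at this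
        field_simp at this; linarith
      have hz : ⟪a - b, a - b⟫ = 0 := by
        rw [real_inner_sub_sub_self]; linarith
      have : a - b = 0 := inner_self_eq_zero.mp hz
      exact hne (sub_eq_zero.mp this)

/-- if `⟪a, b⟫ < 0` and `a ≠ -b` then `a + b` is a root. -/
lemma add_mem {R : Set V} (hR : IsRootSys R) {a b : V}
    (ha : a ∈ R) (hb : b ∈ R) (hneg : ⟪a, b⟫ < 0) (hne : a ≠ -b) : a + b ∈ R := by
  have h := hR.sub_mem ha (hR.neg_mem hb) (by rw [inner_neg_right]; linarith) hne
  rwa [sub_neg_eq_add] at h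

end IsRootSys

/-- in an irreducible root system, for every positive root `α ≠ δ` (with `δ`
the highest root of the chamber), the difference `δ − α` is either a positive root or a sum
`β₁ + β₂` of two positive roots with `β₁ + β₂ ∉ R`. -/
theorem highestRoot_sub_root
    (R : Set V) (hR : IsRootSys R) (hirr : IsIrreducibleRS R)
    (v : V) (hreg : ∀ α ∈ R, ⟪α, v⟫ ≠ 0)
    (δ : V) (hδ : IsHighestRoot R v δ)
    (α : V) (hα : α ∈ R) (hαpos : 0 < ⟪α, v⟫) (hne : α ≠ δ) :
    (δ - α ∈ R ∧ 0 < ⟪δ - α, v⟫) ∨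
    (∃ β₁ β₂ : V, β₁ ∈ R ∧ 0 < ⟪β₁, v⟫ ∧ β₂ ∈ R ∧ 0 < ⟪β₂, v⟫ ∧
      δ - α = β₁ + β₂ ∧ β₁ + β₂ ∉ R) := by
  obtain ⟨hδR, hδv, hhigh⟩ := hδ
  have hneδα : δ ≠ α := fun h => hne h.symm
  -- ⟪δ, α⟫ ≥ 0
  have h0 : 0 ≤ ⟪δ, α⟫ := by
    by_contra h
    push_neg at h
    have hne' : δ ≠ -α := by
      intro hc
      have : ⟪δ, v⟫ = -⟪α, v⟫ := by rw [hc, inner_neg_left]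
      linarith
    exact hhigh α hα hαpos (hR.add_mem hδR hα h hne')
  -- a root subtracted, if it points the wrong way, contradicts highestness
  have hsign : ∀ x : V, x ∈ R → δ - x ∈ R → 0 < ⟪δ - x, v⟫ := by
    intro x hx hmem
    rcases (hreg _ hmem).lt_or_gt with hlt | hlt
    · exfalso
      have hmem' : x - δ ∈ R := by
        have := hR.neg_mem hmem; rwa [neg_sub] at this
      have hpos' : 0 < ⟪x - δ, v⟫ := by
        have : ⟪x - δ, v⟫ = -⟪δ - x, v⟫ := by
          rw [inner_sub_left, inner_sub_left]; ring
        linarith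
      have := hhigh _ hmem' hpos'
      rw [add_sub_cancel] at this
      exact this hx
    · exact hlt
  rcases h0.lt_or_eq with hpos | horth
  · -- ⟪δ, α⟫ > 0 : δ - α is a root
    left
    have hmem : δ - α ∈ R := hR.sub_mem hδR hα hpos hneδα
    exact ⟨hmem, hsign α hα hmem⟩
  · -- ⟪δ, α⟫ = 0
    have horth : ⟪δ, α⟫ = 0 := horth.symm
    right
    -- δ - α is not a root
    have hnotroot : δ - α ∉ R := by
      intro hmem
      have h := hR.2.2.1 α hα (δ - α) hmem
      have hcoef : 2 * ⟪δ - α, α⟫ / ⟪α, α⟫ = -2 := by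
        rw [inner_sub_left, horth]
        have := hR.inner_self_pos' hα
        field_simp
        ring
      rw [hcoef] at h
      have heq : δ - α - (-2 : ℝ) • α = δ + α := by
        rw [neg_smul, two_smul]; abel
      rw [heq] at h
      exact hhigh α hα hαpos h
    -- connectivity: find β ∈ R with ⟪α, β⟫ ≠ 0 and ⟪δ, β⟫ ≠ 0
    have hconn : ∃ β ∈ R, ⟪α, β⟫ ≠ 0 ∧ ⟪δ, β⟫ ≠ 0 := by
      set rel : V → V → Prop := fun x y => x ∈ R ∧ y ∈ R ∧ ⟪x, y⟫ ≠ 0 with hrel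
      have hreach : Relation.ReflTransGen rel α δ := by
        set S1 : Set V := {y | y ∈ R ∧ Relation.ReflTransGen rel α y} with hS1
        set S2 : Set V := {y | y ∈ R ∧ ¬ Relation.ReflTransGen rel α y} with hS2
        have hunion : R = S1 ∪ S2 := by
          ext x; simp only [hS1, hS2, Set.mem_union, Set.mem_setOf_eq]; tauto
        have horthog : ∀ a ∈ S1, ∀ b ∈ S2, ⟪a, b⟫ = 0 := by
          intro a ha b hb
          by_contra hab
          exact hb.2 (ha.2.tail ⟨ha.1, hb.1, hab⟩)
        rcases hirr.2 S1 S2 hunion horthog with h1 | h2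
        · exact absurd (Set.eq_empty_iff_forall_notMem.mp h1 α)
            (by simp [hS1]; exact ⟨hα, Relation.ReflTransGen.refl⟩)
        · have : δ ∉ S2 := Set.eq_empty_iff_forall_notMem.mp h2 δ
          simp only [hS2, Set.mem_setOf_eq, not_and, not_not] at this
          exact this hδR
      -- induct along the chain
      have main : ∀ c : V, Relation.ReflTransGen rel α c →
          ∃ β ∈ R, ⟪α, β⟫ ≠ 0 ∧ ⟪c, β⟫ ≠ 0 := by
        intro c h
        induction h with
        | refl =>
          exact ⟨α, hα, ne_of_gt (hR.inner_self_pos' hα),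
            ne_of_gt (hR.inner_self_pos' hα)⟩
        | @tail b c hab hbc ih =>
          obtain ⟨hbR, hcR, hbc0⟩ := hbc
          obtain ⟨β, hβR, hαβ, hbβ⟩ := ih
          by_cases hcβ : ⟪c, β⟫ ≠ 0
          · exact ⟨β, hβR, hαβ, hcβ⟩
          · push_neg at hcβ
            by_cases hαb : ⟪α, b⟫ ≠ 0
            · exact ⟨b, hbR, hαb, by rwa [real_inner_comm]⟩
            · push_neg at hαb
              -- reflect b in β
              refine ⟨b - (2 * ⟪b, β⟫ / ⟪β, β⟫) • β, hR.2.2.1 β hβR b hbR, ?_, ?_⟩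
              · rw [inner_sub_right, real_inner_smul_right, hαb]
                have hm : 2 * ⟪b, β⟫ / ⟪β, β⟫ ≠ 0 := by
                  apply div_ne_zero (by simpa using hbβ)
                  exact ne_of_gt (hR.inner_self_pos' hβR)
                simpa using mul_ne_zero hm hαβ
              · rw [inner_sub_right, real_inner_smul_right, hcβ, mul_zero, sub_zero]
                rwa [real_inner_comm]
      obtain ⟨β, hβR, hαβ, hδβ⟩ := main δ hreach
      exact ⟨β, hβR, hαβ, hδβ⟩
    obtain ⟨β, hβR, hαβ, hδβ⟩ := hconn
    -- WLOG ⟪δ, β⟫ > 0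
    have hβ' : ∃ β ∈ R, ⟪α, β⟫ ≠ 0 ∧ 0 < ⟪δ, β⟫ := by
      rcases hδβ.lt_or_gt with hlt | hlt
      · refine ⟨-β, hR.neg_mem hβR, ?_, ?_⟩
        · rw [inner_neg_right]; simpa using hαβ
        · rw [inner_neg_right]; linarith
      · exact ⟨β, hβR, hαβ, hlt⟩
    obtain ⟨β, hβR, hαβ, hδβ⟩ := hβ'
    -- get γ ∈ R with ⟪δ, γ⟫ > 0 and α + γ ∈ R
    have hγ : ∃ γ ∈ R, 0 < ⟪δ, γ⟫ ∧ α + γ ∈ R := by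
      rcases hαβ.lt_or_gt with hlt | hlt
      · refine ⟨β, hβR, hδβ, ?_⟩
        apply hR.add_mem hα hβR hlt
        intro hc
        rw [hc, inner_neg_right] at horth
        have : ⟪δ, β⟫ = 0 := by linarith
        exact absurd this (ne_of_gt hδβ)
      · have hβα : 0 < ⟪β, α⟫ := by rwa [real_inner_comm]
        have hneβα : β ≠ α := by
          intro hc; rw [hc] at hδβ; rw [horth] at hδβ; exact lt_irrefl _ hδβ
        have hmem : β - α ∈ R := hR.sub_mem hβR hα hβα hneβα
        refine ⟨β - α, hmem, ?_, ?_⟩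
        · rw [inner_sub_right, horth, sub_zero]; exact hδβ
        · rw [add_sub_cancel]; exact hβR
    obtain ⟨γ, hγR, hδγ, hαγR⟩ := hγ
    -- δ - (α + γ) is a root
    have hδαγ : 0 < ⟪δ, α + γ⟫ := by
      rw [inner_add_right, horth, zero_add]; exact hδγ
    have hneδαγ : δ ≠ α + γ := by
      intro hc
      apply hnotroot
      have : δ - α = γ := by rw [hc]; abel
      rw [this]; exact hγR
    have hηR : δ - (α + γ) ∈ R := hR.sub_mem hδR hαγR hδαγ hneδαγ
    -- positivity of γ
    have hγpos : 0 < ⟪γ, v⟫ := by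
      rcases (hreg γ hγR).lt_or_gt with hlt | hlt
      · exfalso
        have hneδγ : δ ≠ γ := by
          intro hc; rw [← hc] at hlt; linarith
        have hmem : δ - γ ∈ R := hR.sub_mem hδR hγR hδγ hneδγ
        have hγneg : -γ ∈ R := hR.neg_mem hγR
        have hγnegpos : 0 < ⟪-γ, v⟫ := by rw [inner_neg_left]; linarith
        have := hhigh _ hγneg hγnegpos
        rw [← sub_eq_add_neg] at this
        exact this hmem
      · exact hlt
    -- positivity of η := δ - (α + γ)
    have hηpos : 0 < ⟪δ - (α + γ), v⟫ := hsign _ hαγR hηR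
    refine ⟨γ, δ - (α + γ), hγR, hγpos, hηR, hηpos, ?_, ?_⟩
    · abel
    · have : γ + (δ - (α + γ)) = δ - α := by abel
      rw [this]; exact hnotroot
end

section
/- Let R be a root system with an involutive automorphism θ and parabolic subset Q. Suppose α ∈ Qᶜ ∩ θ(Qᶜ) (where Qᶜ = R \ Q) admits a decomposition α = β₁ + ⋯ + β_r of minimal length r with all β_i ∈ (Q ∩ θ(Qᶜ)) ∪ (Qᶜ ∩ θ(Q)). Then there is a permutation (i₁,…,i_r) of (1,…,r) such that every partial sum β_{i₁} + ⋯ + β_{i_h} (1 ≤ h ≤ r) together with α gives a root: α + β_{i₁} + ⋯ + β_{i_h} ∈ R for all 1 ≤ h ≤ r (so (β_{i₁},…,β_{i_r}) is an H-sequence for α). -/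
open scoped RealInnerProductSpace BigOperators

variable {V : Type*} [NormedAddCommGroup V] [InnerProductSpace ℝ V]

/-- `θ` is an involutive automorphism of the root system `R`. -/
def IsRootInvolution (R : Set V) (θ : V →ₗ[ℝ] V) : Prop :=
  (∀ x : V, θ (θ x) = x) ∧ (∀ α ∈ R, θ α ∈ R) ∧ (∀ x y : V, ⟪θ x, θ y⟫ = ⟪x, y⟫)

/-- Membership of a root in `(Q ∩ θ(Qᶜ)) ∪ (Qᶜ ∩ θ(Q))`, where `Qᶜ = R \ Q`. -/
def MemMixed (R Q : Set V) (θ : V →ₗ[ℝ] V) (β : V) : Prop :=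
  (β ∈ Q ∧ θ β ∉ Q) ∨ (β ∈ R ∧ β ∉ Q ∧ θ β ∈ Q)

lemma neg_mem_aux {R : Set V} (hR : IsRootSys R) {γ : V} (hγ : γ ∈ R) : -γ ∈ R := by
  obtain ⟨-, h0, hrefl, -, -⟩ := hR
  have hne : ⟪γ, γ⟫ ≠ 0 := inner_self_ne_zero.mpr (fun h' => h0 (h' ▸ hγ))
  have h := hrefl γ hγ γ hγ
  have h2 : (2 * ⟪γ, γ⟫ / ⟪γ, γ⟫ : ℝ) = 2 := by field_simp
  rw [h2] at h
  have h3 : γ - (2 : ℝ) • γ = -γ := by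
    rw [two_smul]; abel
  rwa [h3] at h

lemma root_sub_aux {R : Set V} (hR : IsRootSys R) {γ δ : V} (hγ : γ ∈ R) (hδ : δ ∈ R)
    (hpos : 0 < ⟪γ, δ⟫) (hne : γ ≠ δ) : γ - δ ∈ R := by
  obtain ⟨-, h0, hrefl, hint, hred⟩ := id hR
  have hγ0 : γ ≠ 0 := fun h => h0 (h ▸ hγ)
  have hδ0 : δ ≠ 0 := fun h => h0 (h ▸ hδ)
  have hγγ : 0 < ⟪γ, γ⟫ := by
    rw [real_inner_self_eq_norm_sq]; exact pow_pos (norm_pos_iff.mpr hγ0) 2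
  have hδδ : 0 < ⟪δ, δ⟫ := by
    rw [real_inner_self_eq_norm_sq]; exact pow_pos (norm_pos_iff.mpr hδ0) 2
  obtain ⟨n, hn⟩ := hint δ hδ γ hγ
  obtain ⟨m, hm⟩ := hint γ hγ δ hδ
  have hcomm : ⟪δ, γ⟫ = ⟪γ, δ⟫ := real_inner_comm γ δ
  rw [hcomm] at hm
  have hn' : (n : ℝ) * ⟪δ, δ⟫ = 2 * ⟪γ, δ⟫ := by
    field_simp at hn; linarith
  have hm' : (m : ℝ) * ⟪γ, γ⟫ = 2 * ⟪γ, δ⟫ := by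
    field_simp at hm; linarith
  have hnpos : 0 < (n : ℝ) := by nlinarith [hn', hδδ, hpos]
  have hmpos : 0 < (m : ℝ) := by nlinarith [hm', hγγ, hpos]
  by_cases hpar : ⟪γ, δ⟫ * ⟪γ, δ⟫ = ⟪γ, γ⟫ * ⟪δ, δ⟫
  · -- parallel case: contradiction with hne
    exfalso
    have hn1 : ⟪γ, δ⟫ = ‖γ‖ * ‖δ‖ := by
      have h1 : ⟪γ, δ⟫ ^ 2 = (‖γ‖ * ‖δ‖) ^ 2 := by
        rw [mul_pow, ← real_inner_self_eq_norm_sq, ← real_inner_self_eq_norm_sq]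
        nlinarith [hpar]
      have h2 : 0 < ‖γ‖ * ‖δ‖ := mul_pos (norm_pos_iff.mpr hγ0) (norm_pos_iff.mpr hδ0)
      nlinarith [h1, h2, hpos]
    have hsm : ‖δ‖ • γ = ‖γ‖ • δ := inner_eq_norm_mul_iff_real.mp hn1
    have hδn : ‖δ‖ ≠ 0 := norm_ne_zero_iff.mpr hδ0
    have ht : γ = (‖γ‖ / ‖δ‖) • δ := by
      have h := congrArg (fun v => (‖δ‖)⁻¹ • v) hsm
      simp only [smul_smul, inv_mul_cancel₀ hδn, one_smul] at h
      exact h.trans (by rw [div_eq_inv_mul])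
    have hmem : (‖γ‖ / ‖δ‖) • δ ∈ R := ht ▸ hγ
    rcases hred δ hδ _ hmem with h1 | h1
    · exact hne (by rw [ht, h1, one_smul])
    · have : 0 < ‖γ‖ / ‖δ‖ := div_pos (norm_pos_iff.mpr hγ0) (norm_pos_iff.mpr hδ0)
      linarith [h1 ▸ this]
  · have hcs : ⟪γ, δ⟫ * ⟪γ, δ⟫ < ⟪γ, γ⟫ * ⟪δ, δ⟫ :=
      lt_of_le_of_ne (real_inner_mul_inner_self_le γ δ) hpar
    have hnm : (n : ℝ) * (m : ℝ) < 4 := by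
      have key : (n : ℝ) * (m : ℝ) * (⟪γ, γ⟫ * ⟪δ, δ⟫) = 4 * (⟪γ, δ⟫ * ⟪γ, δ⟫) := by
        nlinarith [hn', hm']
      nlinarith [mul_pos hγγ hδδ, hcs, key]
    have hn1 : 1 ≤ n := by exact_mod_cast hnpos
    have hm1 : 1 ≤ m := by exact_mod_cast hmpos
    have hnm' : n * m < 4 := by exact_mod_cast (by push_cast; linarith : ((n * m : ℤ) : ℝ) < 4)
    have : n = 1 ∨ m = 1 := by
      by_contra hcon
      push_neg at hcon
      have : 2 ≤ n := by omega
      have : 2 ≤ m := by omega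
      nlinarith
    rcases this with h1 | h1
    · have := hrefl δ hδ γ hγ
      rw [hn, h1] at this
      simpa using this
    · have := hrefl γ hγ δ hδ
      rw [hcomm, hm, h1] at this
      simp only [Int.cast_one, one_smul] at this
      have hneg := neg_mem_aux hR this
      simpa using hneg

lemma sum_range_getD {γ : Type*} [DecidableEq γ] (f : γ → V) (d : γ) :
    ∀ l : List γ, l.Nodup →
      ∑ j ∈ Finset.range l.length, f (l.getD j d) = ∑ x ∈ l.toFinset, f x := by
  intro l
  induction l with
  | nil => simp
  | cons a t ih =>
    intro hnd
    rw [List.nodup_cons] at hnd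
    have h1 : ∑ j ∈ Finset.range (a :: t).length, f ((a :: t).getD j d)
        = ∑ j ∈ Finset.range t.length, f (t.getD j d) + f a := by
      rw [List.length_cons, Finset.sum_range_succ']
      simp
    rw [h1, ih hnd.2, List.toFinset_cons, Finset.sum_insert (by simp [hnd.1]), add_comm]

lemma exists_good_list
    (R Q : Set V) (hR : IsRootSys R) (hQ : IsParabolicSet R Q) (θ : V →ₗ[ℝ] V)
    (α : V) (r : ℕ) (β : Fin r → V)
    (hβ : ∀ i, MemMixed R Q θ (β i))
    (hsum : ∑ i, β i = α)
    (hmin : ∀ r' : ℕ, r' < r → ¬ ∃ β' : Fin r' → V,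
      (∀ i, MemMixed R Q θ (β' i)) ∧ ∑ i, β' i = α)
    (d : Fin r) :
    ∀ n (S : Finset (Fin r)), S.card = n → S.Nonempty → (∑ i ∈ S, β i) ∈ R →
      ∃ l : List (Fin r), l.Nodup ∧ l.toFinset = S ∧
        ∀ k < l.length, (∑ j ∈ Finset.range (k + 1), β (l.getD j d)) ∈ R := by
  have hβR : ∀ i, β i ∈ R := by
    intro i
    rcases hβ i with ⟨h1, -⟩ | ⟨h1, -⟩
    · exact hQ.1 h1
    · exact h1
  intro n
  induction n using Nat.strong_induction_on with
  | _ n ih =>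
    intro S hcard hne hmem
    set σ := ∑ i ∈ S, β i with hσ
    have hσ0 : σ ≠ 0 := fun h => hR.2.1 (h ▸ hmem)
    have hσpos : 0 < ⟪σ, σ⟫ := by
      rw [real_inner_self_eq_norm_sq]; exact pow_pos (norm_pos_iff.mpr hσ0) 2
    have hex : ∃ i ∈ S, 0 < ⟪σ, β i⟫ := by
      by_contra hcon
      push_neg at hcon
      have : ⟪σ, σ⟫ ≤ 0 := by
        rw [hσ, inner_sum]
        exact Finset.sum_nonpos hcon
      linarith
    obtain ⟨i, hiS, hipos⟩ := hex
    rcases Nat.lt_or_ge n 2 with hn2 | hn2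
    · -- n = 1
      have hn1 : n = 1 := by
        have := hne.card_pos
        omega
      obtain ⟨i0, hS⟩ := Finset.card_eq_one.mp (hcard.trans hn1)
      refine ⟨[i0], by simp, by simp [hS], ?_⟩
      intro k hk
      simp only [List.length_singleton] at hk
      interval_cases k
      simpa using hβR i0
    · -- n ≥ 2
      by_cases heq : σ = β i
      · -- contradiction with minimality
        exfalso
        set T : Finset (Fin r) := insert i Sᶜ with hT
        have hic : i ∉ Sᶜ := by simp [hiS]
        have hTcard : T.card = r - n + 1 := by
          rw [hT, Finset.card_insert_of_notMem hic, Finset.card_compl, hcard]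
          simp
        have hnr : n ≤ r := hcard ▸ (Finset.card_le_univ S).trans (by simp)
        have hTlt : T.card < r := by omega
        apply hmin T.card hTlt
        refine ⟨fun j => β ((T.equivFin.symm j) : Fin r), fun j => hβ _, ?_⟩
        have h1 : ∑ j, β ((T.equivFin.symm j) : Fin r) = ∑ x ∈ T, β x := by
          rw [← Finset.sum_coe_sort T (fun x => β x)]
          exact Equiv.sum_comp T.equivFin.symm (fun x : T => β (x : Fin r))
        rw [h1, hT, Finset.sum_insert hic]
        have h2 : ∑ x ∈ Sᶜ, β x = α - σ := by
          have h3 := Finset.sum_compl_add_sum S β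
          rw [hsum] at h3
          rw [eq_sub_iff_add_eq]
          exact h3
        rw [h2, heq]
        abel
      · have hroot : σ - β i ∈ R := root_sub_aux hR hmem (hβR i) hipos heq
        have hS' : (S.erase i).card = n - 1 := by rw [Finset.card_erase_of_mem hiS, hcard]
        have hsum' : ∑ j ∈ S.erase i, β j = σ - β i := Finset.sum_erase_eq_sub hiS
        have hne' : (S.erase i).Nonempty := by
          rw [← Finset.card_pos, hS']; omega
        obtain ⟨l', hnd', htf', hpre'⟩ :=
          ih (n - 1) (by omega) (S.erase i) hS' hne' (hsum' ▸ hroot)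
        have hil' : i ∉ l' := by
          intro hmem'
          have : i ∈ S.erase i := htf' ▸ List.mem_toFinset.mpr hmem'
          simp at this
        refine ⟨l' ++ [i], ?_, ?_, ?_⟩
        · rw [List.nodup_append]
          exact ⟨hnd', List.nodup_singleton i, fun a ha b hb => by
            simp at hb; subst hb; intro hab; subst hab; exact hil' ha⟩
        · rw [List.toFinset_append, htf']
          rw [List.toFinset_cons, List.toFinset_nil, insert_empty_eq,
            Finset.union_comm, ← Finset.insert_eq, Finset.insert_erase hiS]
        · intro k hk
          rw [List.length_append, List.length_singleton] at hk
          rcases Nat.lt_or_ge k l'.length with hkl | hkl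
          · have hcongr : ∑ j ∈ Finset.range (k + 1), β ((l' ++ [i]).getD j d)
                = ∑ j ∈ Finset.range (k + 1), β (l'.getD j d) := by
              apply Finset.sum_congr rfl
              intro j hj
              rw [List.getD_append _ _ _ _ (lt_of_lt_of_le (Finset.mem_range.mp hj) hkl)]
            rw [hcongr]
            exact hpre' k hkl
          · have hkeq : k = l'.length := by omega
            have hlen : k + 1 = (l' ++ [i]).length := by
              rw [List.length_append, List.length_singleton, hkeq]
            have hnd : (l' ++ [i]).Nodup := by
              rw [List.nodup_append]
              exact ⟨hnd', List.nodup_singleton i, fun a ha b hb => by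
                simp at hb; subst hb; intro hab; subst hab; exact hil' ha⟩
            rw [hlen, sum_range_getD β d _ hnd]
            have : (l' ++ [i]).toFinset = S := by
              rw [List.toFinset_append, htf', List.toFinset_cons, List.toFinset_nil,
                insert_empty_eq, Finset.union_comm, ← Finset.insert_eq,
                Finset.insert_erase hiS]
            rw [this]
            exact hmem

/-- if `α ∈ Qᶜ ∩ θ(Qᶜ)` admits a minimal-length decomposition
`α = β₁ + ⋯ + β_r` with all `β_i ∈ (Q ∩ θ(Qᶜ)) ∪ (Qᶜ ∩ θ(Q))`, then the `β_i` can be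
permuted so that all partial sums `β_{i₁} + ⋯ + β_{i_h}` are roots, i.e. the permuted tuple
is an H-sequence for `α`. -/
theorem minimal_decomposition_reorders_to_H_sequence
    (R Q : Set V) (hR : IsRootSys R) (hQ : IsParabolicSet R Q)
    (θ : V →ₗ[ℝ] V) (hθ : IsRootInvolution R θ)
    (α : V) (hα : α ∈ R) (hαQ : α ∉ Q) (hαθ : θ α ∉ Q)
    (r : ℕ) (β : Fin r → V)
    (hβ : ∀ i, MemMixed R Q θ (β i))
    (hsum : ∑ i, β i = α)
    (hmin : ∀ r' : ℕ, r' < r → ¬ ∃ β' : Fin r' → V,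
      (∀ i, MemMixed R Q θ (β' i)) ∧ ∑ i, β' i = α) :
    ∃ π : Equiv.Perm (Fin r), ∀ h : Fin r, (∑ i ∈ Finset.Iic h, β (π i)) ∈ R := by
  rcases Nat.eq_zero_or_pos r with hr | hr
  · subst hr
    exact ⟨Equiv.refl _, fun h => h.elim0⟩
  · have d : Fin r := ⟨0, hr⟩
    have hcard : (Finset.univ : Finset (Fin r)).card = r := by simp
    have hmemα : ∑ i ∈ (Finset.univ : Finset (Fin r)), β i ∈ R := by
      rw [show ∑ i ∈ (Finset.univ : Finset (Fin r)), β i = α from hsum]; exact hα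
    obtain ⟨l, hnd, htf, hpre⟩ := exists_good_list R Q hR hQ θ α r β hβ hsum hmin d r
      Finset.univ hcard ⟨d, Finset.mem_univ d⟩ hmemα
    have hlen : l.length = r := by
      rw [← List.toFinset_card_of_nodup hnd, htf]; simp
    set f : Fin r → Fin r := fun i => l.get (Fin.cast hlen.symm i) with hfdef
    have hf : Function.Injective f := by
      intro a b hab
      have h2 : Fin.cast hlen.symm a = Fin.cast hlen.symm b :=
        (List.Nodup.get_inj_iff hnd).mp hab
      have h3 := congrArg Fin.val h2
      simp only [Fin.coe_cast] at h3
      exact Fin.ext h3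
    refine ⟨Equiv.ofBijective f (Finite.injective_iff_bijective.mp hf), fun h => ?_⟩
    have hval : ∀ a : Fin r, β (Equiv.ofBijective f (Finite.injective_iff_bijective.mp hf) a)
        = β (l.getD a.1 d) := by
      intro a
      have h1 : Equiv.ofBijective f (Finite.injective_iff_bijective.mp hf) a = f a := rfl
      rw [h1, hfdef]
      simp only [List.get_eq_getElem]
      rw [List.getD_eq_getElem l d (by rw [hlen]; exact a.2)]
      rfl
    have hb : ∑ i ∈ Finset.Iic h, β (Equiv.ofBijective f (Finite.injective_iff_bijective.mp hf) i)
        = ∑ j ∈ Finset.range (h.1 + 1), β (l.getD j d) := by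
      refine Finset.sum_bij' (fun (i : Fin r) (_ : i ∈ Finset.Iic h) => (i : ℕ))
        (fun j hj => (⟨j, lt_of_lt_of_le (Finset.mem_range.mp hj) h.2⟩ : Fin r))
        ?_ ?_ ?_ ?_ ?_
      · intro a ha
        rw [Finset.mem_range]
        exact Nat.lt_succ_of_le (Fin.le_def.mp (Finset.mem_Iic.mp ha))
      · intro b hb
        rw [Finset.mem_Iic]
        exact Fin.le_def.mpr (Nat.lt_succ_iff.mp (Finset.mem_range.mp hb))
      · intro a ha; rfl
      · intro b hb; rfl
      · intro a ha
        exact hval a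
    rw [hb]
    exact hpre h.1 (by rw [hlen]; exact h.2)
end
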